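/- arXiv:1808.06227 — 8 statements merged into one kernel-verified Lean document; each statement's English description precedes it below -/
import Mathlib

section
/- Let t₀ > 0, α > 1/2 and f ∈ L²((0,t₀)). Then for every t ∈ (0,t₀] the function x ↦ f(x)x^{α−1} is integrable on (0,t), and the function g(t) := t^{1−α}∫₀ᵗ f(x)x^{α−1}dx satisfies |g(t)| ≤ (2α−1)^{-1/2}‖f‖_{L²}·t^{1/2} for all t ∈ (0,t₀], and g is differentiable at almost every t ∈ (0,t₀) with g′(t) + (α − 1)g(t)/t = f(t) for almost every t ∈ (0,t₀). -/
open MeasureTheory Set Filter Metric Topology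

lemma aux_ftc {H : ℝ → ℝ} (hH : Integrable H) :
    ∀ᵐ t, HasDerivAt (fun u => ∫ x in (0:ℝ)..u, H x) (H t) t := by
  filter_upwards [IsUnifLocDoublingMeasure.ae_tendsto_average_norm_sub
    (μ := (volume : Measure ℝ)) hH.locallyIntegrable 1] with t ht
  rw [hasDerivAt_iff_tendsto_slope]
  set w : ℝ → ℝ := fun u => (t + u) / 2 with hw
  set δ : ℝ → ℝ := fun u => |u - t| / 2 with hδdef
  have hδ : Tendsto δ (𝓝[≠] t) (𝓝[>] 0) := by
    rw [tendsto_nhdsWithin_iff]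
    constructor
    · have : Tendsto (fun u : ℝ => |u - t| / 2) (𝓝 t) (𝓝 (|t - t| / 2)) :=
        ((continuous_abs.comp (continuous_id.sub continuous_const)).div_const 2).tendsto t
      simpa using this.mono_left nhdsWithin_le_nhds
    · filter_upwards [self_mem_nhdsWithin] with u hu
      have : u - t ≠ 0 := sub_ne_zero.2 hu
      simpa [hδdef] using by positivity
  have hmem : ∀ᶠ u in 𝓝[≠] t, t ∈ closedBall (w u) (1 * δ u) := by
    filter_upwards with u
    simp only [mem_closedBall, one_mul, hw, hδdef, Real.dist_eq]
    have h0 : t - (t + u) / 2 = (t - u) / 2 := by ring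
    rw [h0, abs_div, abs_sub_comm t u]
    norm_num
  have key := ht w δ hδ hmem
  rw [tendsto_iff_norm_sub_tendsto_zero]
  apply squeeze_zero' (Eventually.of_forall fun u => norm_nonneg _) _ key
  filter_upwards [self_mem_nhdsWithin] with u hu
  have hut : u - t ≠ 0 := sub_ne_zero.2 hu
  have hii : ∀ a b : ℝ, IntervalIntegrable H volume a b := fun a b => hH.intervalIntegrable
  have h1 : (fun v => ∫ x in (0:ℝ)..v, H x) u - (fun v => ∫ x in (0:ℝ)..v, H x) t
      = ∫ x in t..u, H x := intervalIntegral.integral_interval_sub_left (hii 0 u) (hii 0 t)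
  have h2 : slope (fun v => ∫ x in (0:ℝ)..v, H x) t u - H t
      = (u - t)⁻¹ • (∫ x in t..u, (H x - H t)) := by
    rw [slope_def_field, div_eq_inv_mul, ← smul_eq_mul]
    rw [intervalIntegral.integral_sub (hii t u) (intervalIntegrable_const)]
    rw [intervalIntegral.integral_const, h1]
    rw [smul_sub, smul_smul, inv_mul_cancel₀ hut, one_smul, smul_eq_mul]
  rw [h2]
  rw [norm_smul, norm_inv, Real.norm_eq_abs]
  have hsub : Set.uIoc t u ⊆ closedBall (w u) (δ u) := by
    rw [Real.closedBall_eq_Icc]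
    intro y hy
    rw [Set.mem_Icc]
    rw [Set.mem_uIoc] at hy
    simp only [hw, hδdef]
    rcases hy with h | h <;> rcases abs_cases (u - t) with h2 | h2 <;>
      exact ⟨by nlinarith [h.1, h.2, h2.1, h2.2], by nlinarith [h.1, h.2, h2.1, h2.2]⟩
  have hIcb : IntegrableOn (fun y => ‖H y - H t‖) (closedBall (w u) (δ u)) := by
    exact (hH.integrableOn.sub (integrableOn_const measure_closedBall_lt_top.ne)).norm
  have h3 : ‖∫ x in t..u, (H x - H t)‖ ≤ ∫ y in closedBall (w u) (δ u), ‖H y - H t‖ := by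
    refine (intervalIntegral.norm_integral_le_integral_norm_uIoc).trans ?_
    exact setIntegral_mono_set hIcb (Eventually.of_forall fun y => norm_nonneg _)
      (HasSubset.Subset.eventuallyLE hsub)
  have hvol : (volume (closedBall (w u) (δ u))).toReal = |u - t| := by
    rw [Real.volume_closedBall, ENNReal.toReal_ofReal (by positivity)]
    simp only [hδdef]; ring
  rw [setAverage_eq, measureReal_def, hvol, smul_eq_mul]
  exact mul_le_mul_of_nonneg_left h3 (by positivity)


/-- For `t₀ > 0`, `α > 1/2` and `f ∈ L²((0,t₀))`, the function
`g(t) = t^{1-α} ∫₀ᵗ f(x) x^{α-1} dx` is well defined, satisfies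
`|g(t)| ≤ (2α-1)^{-1/2} ‖f‖_{L²} t^{1/2}` and solves
`g'(t) + (α-1) g(t)/t = f(t)` almost everywhere on `(0,t₀)`. -/
theorem stmt_1 (t₀ : ℝ) (ht₀ : 0 < t₀) (α : ℝ) (hα : 1/2 < α)
    (f : ℝ → ℝ) (hf : MemLp f 2 (volume.restrict (Ioo (0:ℝ) t₀))) :
    (∀ t ∈ Ioc (0:ℝ) t₀, IntegrableOn (fun x => f x * x ^ (α - 1)) (Ioo (0:ℝ) t)) ∧
    ∀ g : ℝ → ℝ,
      (∀ t : ℝ, g t = t ^ (1 - α) * ∫ x in Ioo (0:ℝ) t, f x * x ^ (α - 1)) →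
      (∀ t ∈ Ioc (0:ℝ) t₀,
          |g t| ≤ (Real.sqrt (2*α - 1))⁻¹ *
            (eLpNorm f 2 (volume.restrict (Ioo (0:ℝ) t₀))).toReal * Real.sqrt t) ∧
      (∀ᵐ t ∂(volume.restrict (Ioo (0:ℝ) t₀)),
          ∃ d : ℝ, HasDerivAt g d t ∧ d + (α - 1) * g t / t = f t) := by
  have h2α : (0:ℝ) < 2*α - 1 := by linarith
  -- membership of the weight in L²
  have hwm : ∀ t ∈ Ioc (0:ℝ) t₀,
      MemLp (fun x => x ^ (α - 1)) 2 (volume.restrict (Ioo (0:ℝ) t)) := by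
    intro t ht
    have hmeas : AEStronglyMeasurable (fun x : ℝ => x ^ (α - 1))
        (volume.restrict (Ioo (0:ℝ) t)) := by
      exact (measurable_id.pow_const (α - 1)).aestronglyMeasurable
    rw [memLp_two_iff_integrable_sq hmeas]
    have h1 : IntegrableOn (fun x : ℝ => x ^ (2*α - 2)) (Ioo (0:ℝ) t) := by
      rw [intervalIntegral.integrableOn_Ioo_rpow_iff ht.1]; linarith
    exact h1.congr_fun (fun x hx => by
      rw [sq, ← Real.rpow_add hx.1]; ring_nf) measurableSet_Ioo
  have hfm : ∀ t ∈ Ioc (0:ℝ) t₀, MemLp f 2 (volume.restrict (Ioo (0:ℝ) t)) := by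
    intro t ht
    exact hf.mono_measure (Measure.restrict_mono (Ioo_subset_Ioo le_rfl ht.2) le_rfl)
  have hint : ∀ t ∈ Ioc (0:ℝ) t₀,
      IntegrableOn (fun x => f x * x ^ (α - 1)) (Ioo (0:ℝ) t) := by
    intro t ht
    have := ((hfm t ht).smul (hwm t ht)
      (p := 2) (q := 2) (r := 1))
    have h2 := memLp_one_iff_integrable.1 this
    exact h2.congr (Eventually.of_forall fun x => by simp [smul_eq_mul, mul_comm])
  refine ⟨hint, fun g hg => ⟨?_, ?_⟩⟩
  · -- the bound
    intro t ht
    set C := (eLpNorm f 2 (volume.restrict (Ioo (0:ℝ) t₀))).toReal with hC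
    have hC0 : 0 ≤ C := ENNReal.toReal_nonneg
    have hpq : Real.HolderConjugate 2 2 :=
      (Real.holderConjugate_iff (p := 2) (q := 2)).2 ⟨by norm_num, by norm_num⟩
    have hfm' := hfm t ht
    have hwm' := hwm t ht
    have hfme : MemLp f (ENNReal.ofReal 2) (volume.restrict (Ioo (0:ℝ) t)) := by
      simpa using hfm'
    have hwme : MemLp (fun x : ℝ => x ^ (α - 1)) (ENNReal.ofReal 2)
        (volume.restrict (Ioo (0:ℝ) t)) := by simpa using hwm'
    have holder := integral_mul_norm_le_Lp_mul_Lq hpq hfme hwme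
    set A := (∫ x in Ioo (0:ℝ) t, ‖f x‖ ^ (2:ℝ)) ^ ((1:ℝ)/2) with hAdef
    set B := (∫ x in Ioo (0:ℝ) t, ‖x ^ (α - 1)‖ ^ (2:ℝ)) ^ ((1:ℝ)/2) with hBdef
    have hB0 : 0 ≤ B := Real.rpow_nonneg (integral_nonneg fun x =>
      Real.rpow_nonneg (norm_nonneg _) _) _
    have hA : A = (eLpNorm f 2 (volume.restrict (Ioo (0:ℝ) t))).toReal := by
      rw [hfm'.eLpNorm_eq_integral_rpow_norm (by norm_num) (by norm_num)]
      rw [ENNReal.toReal_ofReal (Real.rpow_nonneg (integral_nonneg fun x =>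
        Real.rpow_nonneg (norm_nonneg _) _) _)]
      norm_num [hAdef]
    have hAle : A ≤ C := by
      rw [hA, hC]
      exact ENNReal.toReal_mono hf.eLpNorm_ne_top
        (eLpNorm_mono_measure f (Measure.restrict_mono (Ioo_subset_Ioo le_rfl ht.2) le_rfl))
    have hBint : (∫ x in Ioo (0:ℝ) t, ‖x ^ (α - 1)‖ ^ (2:ℝ))
        = t ^ (2*α - 1) / (2*α - 1) := by
      have e1 : (∫ x in Ioo (0:ℝ) t, ‖x ^ (α - 1)‖ ^ (2:ℝ))
          = ∫ x in Ioo (0:ℝ) t, x ^ (2*α - 2) := by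
        apply setIntegral_congr_fun measurableSet_Ioo
        intro x hx
        dsimp only
        rw [Real.norm_eq_abs, abs_of_nonneg (Real.rpow_nonneg hx.1.le _),
          ← Real.rpow_mul hx.1.le]
        congr 1; ring
      have e2 : (∫ x in Ioo (0:ℝ) t, x ^ (2*α - 2)) = ∫ x in (0:ℝ)..t, x ^ (2*α - 2) := by
        rw [intervalIntegral.integral_of_le ht.1.le, integral_Ioc_eq_integral_Ioo]
      rw [e1, e2, integral_rpow (Or.inl (by linarith))]
      rw [Real.zero_rpow (ne_of_gt (by linarith : (0:ℝ) < 2*α - 2 + 1))]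
      have : 2*α - 2 + 1 = 2*α - 1 := by ring
      rw [this]; ring
    have h1 : |g t| = t ^ (1 - α) * |∫ x in Ioo (0:ℝ) t, f x * x ^ (α - 1)| := by
      rw [hg t, abs_mul, abs_of_nonneg (Real.rpow_nonneg ht.1.le _)]
    have h2 : |∫ x in Ioo (0:ℝ) t, f x * x ^ (α - 1)|
        ≤ ∫ x in Ioo (0:ℝ) t, ‖f x‖ * ‖x ^ (α - 1)‖ := by
      rw [← Real.norm_eq_abs]
      refine (norm_integral_le_integral_norm _).trans_eq ?_
      simp [norm_mul]
    have hrt0 : (0:ℝ) ≤ t ^ (1 - α) := Real.rpow_nonneg ht.1.le _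
    calc |g t| ≤ t ^ (1 - α) * (A * B) := by
          rw [h1]
          exact mul_le_mul_of_nonneg_left (h2.trans holder) hrt0
      _ ≤ t ^ (1 - α) * (C * B) := by
          apply mul_le_mul_of_nonneg_left _ hrt0
          exact mul_le_mul_of_nonneg_right hAle hB0
      _ = (Real.sqrt (2*α - 1))⁻¹ * C * Real.sqrt t := by
          rw [hBdef, hBint, Real.div_rpow (Real.rpow_nonneg ht.1.le _) h2α.le,
            ← Real.rpow_mul ht.1.le, ← Real.sqrt_eq_rpow, Real.sqrt_eq_rpow t]
          have hpow : t ^ (1 - α) * t ^ ((2*α - 1) * ((1:ℝ)/2)) = t ^ ((1:ℝ)/2) := by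
            rw [← Real.rpow_add ht.1]
            congr 1; ring
          have hrw : t ^ (1 - α) * (C * (t ^ ((2*α - 1) * ((1:ℝ)/2))
              / Real.sqrt (2*α - 1)))
              = (t ^ (1 - α) * t ^ ((2*α - 1) * ((1:ℝ)/2))) * C
                / Real.sqrt (2*α - 1) := by ring
          rw [hrw, hpow]; ring
  · -- the derivative
    have hi : IntegrableOn (fun x => f x * x ^ (α - 1)) (Ioo (0:ℝ) t₀) :=
      hint t₀ ⟨ht₀, le_rfl⟩
    set H : ℝ → ℝ := (Ioo (0:ℝ) t₀).indicator (fun x => f x * x ^ (α - 1)) with hHdef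
    have hHi : Integrable H := (integrable_indicator_iff measurableSet_Ioo).2 hi
    have hae := aux_ftc hHi
    rw [ae_restrict_iff' measurableSet_Ioo]
    filter_upwards [hae] with t hderiv ht
    have hFeq : ∀ u ∈ Ioo (0:ℝ) t₀,
        (∫ x in Ioo (0:ℝ) u, f x * x ^ (α - 1)) = ∫ x in (0:ℝ)..u, H x := by
      intro u hu
      rw [intervalIntegral.integral_of_le hu.1.le, integral_Ioc_eq_integral_Ioo, hHdef,
        setIntegral_indicator measurableSet_Ioo,
        inter_eq_left.2 (Ioo_subset_Ioo le_rfl hu.2.le)]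
    have hF : HasDerivAt (fun u => ∫ x in Ioo (0:ℝ) u, f x * x ^ (α - 1))
        (f t * t ^ (α - 1)) t := by
      have h0 := hderiv.congr_of_eventuallyEq
        (Filter.eventuallyEq_of_mem (isOpen_Ioo.mem_nhds ht) hFeq)
      rwa [hHdef, indicator_of_mem ht] at h0
    have hrp : HasDerivAt (fun u : ℝ => u ^ (1 - α)) ((1 - α) * t ^ (1 - α - 1)) t :=
      Real.hasDerivAt_rpow_const (Or.inl (ne_of_gt ht.1))
    have hgfun : g = fun u => u ^ (1 - α) * ∫ x in Ioo (0:ℝ) u, f x * x ^ (α - 1) :=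
      funext hg
    have hg' : HasDerivAt g
        ((1 - α) * t ^ (1 - α - 1) * (∫ x in Ioo (0:ℝ) t, f x * x ^ (α - 1))
          + t ^ (1 - α) * (f t * t ^ (α - 1))) t := by
      rw [hgfun]; exact hrp.mul hF
    refine ⟨_, hg', ?_⟩
    have e2 : t ^ (1 - α) * t ^ (α - 1) = 1 := by
      rw [← Real.rpow_add ht.1]; norm_num
    have e1 : t ^ (1 - α - 1) = t ^ (1 - α) / t := by
      rw [Real.rpow_sub ht.1, Real.rpow_one]
    rw [hg t, e1]
    have htne : t ≠ 0 := ne_of_gt ht.1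
    field_simp
    linear_combination (t * f t) * e2
end

section
/- Let t₀ > 0, α < 1/2 and f ∈ L²((0,t₀)). Then for every t ∈ (0,t₀] the function x ↦ f(x)x^{α−1} is integrable on (t,t₀), and the function g(t) := −t^{1−α}∫ₜ^{t₀} f(x)x^{α−1}dx satisfies |g(t)| ≤ (1−2α)^{-1/2}‖f‖_{L²}·t^{1/2} for all t ∈ (0,t₀], and g is differentiable at almost every t ∈ (0,t₀) with g′(t) + (α − 1)g(t)/t = f(t) for almost every t ∈ (0,t₀). -/
open MeasureTheory Set Filter Metric

lemma ae_hasDerivAt_integral (φ : ℝ → ℝ) (hφ : Integrable φ) :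
    ∀ᵐ t : ℝ, HasDerivAt (fun u => ∫ x in (0:ℝ)..u, φ x) (φ t) t := by
  filter_upwards [IsUnifLocDoublingMeasure.ae_tendsto_average_norm_sub (volume : Measure ℝ)
    hφ.locallyIntegrable 1] with t ht
  have hδ : Tendsto (fun y : ℝ => |y - t| / 2) (nhdsWithin t {t}ᶜ) (nhdsWithin 0 (Ioi 0)) := by
    rw [tendsto_nhdsWithin_iff]
    constructor
    · have h1 : ContinuousAt (fun y : ℝ => |y - t| / 2) t :=
        ((continuous_abs.comp (continuous_id.sub continuous_const)).div_const 2).continuousAt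
      have := h1.tendsto.mono_left (nhdsWithin_le_nhds (s := {t}ᶜ))
      simpa using this
    · filter_upwards [self_mem_nhdsWithin] with y hy
      have : y - t ≠ 0 := sub_ne_zero.2 hy
      have : |y - t| > 0 := abs_pos.2 this
      exact mem_Ioi.2 (by linarith)
  have hmem : ∀ᶠ y in nhdsWithin t {t}ᶜ,
      t ∈ closedBall ((t + y)/2) (1 * (|y - t| / 2)) := by
    filter_upwards with y
    simp only [mem_closedBall, Real.dist_eq, one_mul]
    rw [abs_sub_comm y t]
    cases abs_cases (t - y) with
    | inl h => rw [abs_le]; exact ⟨by nlinarith [h.1], by nlinarith [h.1]⟩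
    | inr h => rw [abs_le]; exact ⟨by nlinarith [h.1], by nlinarith [h.1]⟩
  have key := ht (fun y => (t + y)/2) (fun y => |y - t| / 2) hδ hmem
  rw [hasDerivAt_iff_tendsto_slope, tendsto_iff_norm_sub_tendsto_zero]
  refine squeeze_zero' (Eventually.of_forall fun y => norm_nonneg _) ?_ key
  filter_upwards [self_mem_nhdsWithin] with y hy
  have hy' : y ≠ t := hy
  have hyt : y - t ≠ 0 := sub_ne_zero.2 hy'
  have hball : Set.uIoc t y ⊆ closedBall ((t + y)/2) (|y - t| / 2) := by
    rw [Real.closedBall_eq_Icc]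
    intro z hz
    rcases le_total t y with h | h
    · rw [Set.uIoc_of_le h] at hz
      rw [abs_of_nonneg (by linarith : (0:ℝ) ≤ y - t)]
      simp only [mem_Icc]
      exact ⟨by linarith [hz.1], by linarith [hz.2]⟩
    · rw [Set.uIoc_of_ge h] at hz
      rw [abs_of_nonpos (by linarith : y - t ≤ 0)]
      simp only [mem_Icc]
      exact ⟨by linarith [hz.1], by linarith [hz.2]⟩
  have hii : ∀ a b : ℝ, IntervalIntegrable φ volume a b := fun a b => hφ.intervalIntegrable
  have hslope : slope (fun u => ∫ x in (0:ℝ)..u, φ x) t y - φ t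
      = (y - t)⁻¹ * (∫ x in t..y, (φ x - φ t)) := by
    rw [slope_def_field, intervalIntegral.integral_sub (hii t y) (intervalIntegrable_const),
      intervalIntegral.integral_const, ← intervalIntegral.integral_interval_sub_left (hii 0 y) (hii 0 t)]
    simp only [smul_eq_mul]
    field_simp
  rw [hslope]
  have hnorm : ‖(y - t)⁻¹ * (∫ x in t..y, (φ x - φ t))‖
      = |y - t|⁻¹ * ‖∫ x in t..y, (φ x - φ t)‖ := by
    rw [norm_mul, norm_inv, Real.norm_eq_abs, Real.norm_eq_abs]
  rw [hnorm]
  have h1 : ‖∫ x in t..y, (φ x - φ t)‖ ≤ ∫ x in Set.uIoc t y, ‖φ x - φ t‖ :=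
    intervalIntegral.norm_integral_le_integral_norm_uIoc
  have h2 : ∫ x in Set.uIoc t y, ‖φ x - φ t‖
      ≤ ∫ x in closedBall ((t + y)/2) (|y - t| / 2), ‖φ x - φ t‖ := by
    apply setIntegral_mono_set
    · exact ((hφ.integrableOn.sub (integrableOn_const measure_closedBall_lt_top.ne)).norm)
    · exact Eventually.of_forall fun x => norm_nonneg _
    · exact HasSubset.Subset.eventuallyLE hball
  have hvol : (volume (closedBall ((t + y)/2) (|y - t| / 2))).toReal = |y - t| := by
    rw [Real.volume_closedBall, ENNReal.toReal_ofReal (by positivity)]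
    ring
  have havg : (⨍ x in closedBall ((t + y)/2) (|y - t| / 2), ‖φ x - φ t‖)
      = |y - t|⁻¹ * ∫ x in closedBall ((t + y)/2) (|y - t| / 2), ‖φ x - φ t‖ := by
    rw [setAverage_eq, measureReal_def, hvol, smul_eq_mul]
  rw [havg]
  have hpos : (0:ℝ) ≤ |y - t|⁻¹ := by positivity
  exact mul_le_mul_of_nonneg_left (h1.trans h2) hpos

lemma integ_aux (t₀ : ℝ) (α : ℝ) (hα : α < 1/2)
    (f : ℝ → ℝ) (hf : MemLp f 2 (volume.restrict (Ioo (0:ℝ) t₀)))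
    (t : ℝ) (ht : 0 < t) :
    IntegrableOn (fun x => f x * x ^ (α - 1)) (Ioo t t₀) := by
  rcases le_or_gt t₀ t with h | h
  · rw [Ioo_eq_empty (not_lt.2 h)]; exact integrableOn_empty
  · haveI : IsFiniteMeasure (volume.restrict (Ioo t t₀)) :=
      ⟨by rw [Measure.restrict_apply_univ]; exact measure_Ioo_lt_top⟩
    have hsub : Ioo t t₀ ⊆ Ioo 0 t₀ := Ioo_subset_Ioo ht.le le_rfl
    have hle : volume.restrict (Ioo t t₀) ≤ volume.restrict (Ioo (0:ℝ) t₀) :=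
      Measure.restrict_mono hsub le_rfl
    have hf' : Integrable f (volume.restrict (Ioo t t₀)) :=
      (hf.mono_measure hle).integrable one_le_two
    have hw : AEStronglyMeasurable (fun x : ℝ => x ^ (α - 1))
        (volume.restrict (Ioo t t₀)) :=
      (measurable_id.pow_const _).aestronglyMeasurable
    have hbound : ∀ᵐ x ∂(volume.restrict (Ioo t t₀)), ‖x ^ (α - 1)‖ ≤ t ^ (α - 1) := by
      rw [ae_restrict_iff' measurableSet_Ioo]
      filter_upwards with x hx
      rw [Real.norm_eq_abs, abs_of_nonneg (Real.rpow_nonneg (by linarith [hx.1]) _)]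
      exact Real.rpow_le_rpow_of_nonpos ht hx.1.le (by linarith)
    have := hf'.bdd_mul hw hbound
    exact (this.congr (Eventually.of_forall fun x => mul_comm _ _))

lemma cauchy_schwarz_int {X : Type*} [MeasurableSpace X] {μ : Measure X} {f g : X → ℝ}
    (hf : MemLp f 2 μ) (hg : MemLp g 2 μ) :
    |∫ x, f x * g x ∂μ| ≤ (eLpNorm f 2 μ).toReal * (eLpNorm g 2 μ).toReal := by
  have h1 : (inner ℝ (hf.toLp f) (hg.toLp g) : ℝ) = ∫ x, f x * g x ∂μ := by
    rw [L2.inner_def]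
    apply integral_congr_ae
    filter_upwards [hf.coeFn_toLp, hg.coeFn_toLp] with x h1 h2
    rw [h1, h2]
    simp [RCLike.inner_apply, mul_comm]
  rw [← h1, ← Lp.norm_toLp f hf, ← Lp.norm_toLp g hg]
  exact abs_real_inner_le_norm _ _

lemma bound_aux (t₀ : ℝ) (ht₀ : 0 < t₀) (α : ℝ) (hα : α < 1/2)
    (f : ℝ → ℝ) (hf : MemLp f 2 (volume.restrict (Ioo (0:ℝ) t₀)))
    (t : ℝ) (ht : 0 < t) (ht' : t ≤ t₀) :
    |∫ x in Ioo t t₀, f x * x ^ (α - 1)| ≤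
      (eLpNorm f 2 (volume.restrict (Ioo (0:ℝ) t₀))).toReal *
        Real.sqrt (t ^ (2*α - 1) / (1 - 2*α)) := by
  haveI : IsFiniteMeasure (volume.restrict (Ioo t t₀)) :=
    ⟨by rw [Measure.restrict_apply_univ]; exact measure_Ioo_lt_top⟩
  have hsub : Ioo t t₀ ⊆ Ioo 0 t₀ := Ioo_subset_Ioo ht.le le_rfl
  have hle : volume.restrict (Ioo t t₀) ≤ volume.restrict (Ioo (0:ℝ) t₀) :=
    Measure.restrict_mono hsub le_rfl
  have hf2 : MemLp f 2 (volume.restrict (Ioo t t₀)) := hf.mono_measure hle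
  have hwmeas : AEStronglyMeasurable (fun x : ℝ => x ^ (α - 1))
      (volume.restrict (Ioo t t₀)) :=
    (measurable_id.pow_const _).aestronglyMeasurable
  have hw2 : MemLp (fun x : ℝ => x ^ (α - 1)) 2 (volume.restrict (Ioo t t₀)) := by
    apply MemLp.of_bound hwmeas (t ^ (α - 1))
    rw [ae_restrict_iff' measurableSet_Ioo]
    filter_upwards with x hx
    rw [Real.norm_eq_abs, abs_of_nonneg (Real.rpow_nonneg (by linarith [hx.1]) _)]
    exact Real.rpow_le_rpow_of_nonpos ht hx.1.le (by linarith)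
  have hCS := cauchy_schwarz_int hf2 hw2
  -- control the f-norm
  have hN : (eLpNorm f 2 (volume.restrict (Ioo t t₀))).toReal ≤
      (eLpNorm f 2 (volume.restrict (Ioo (0:ℝ) t₀))).toReal :=
    ENNReal.toReal_mono hf.2.ne (eLpNorm_mono_measure f hle)
  -- compute the w-norm

  have hint : (∫ x in Ioo t t₀, ‖x ^ (α - 1)‖ ^ (2:ℝ)) = ∫ x in Ioo t t₀, x ^ (2*α - 2) := by
    apply setIntegral_congr_fun measurableSet_Ioo
    intro x hx
    have hx0 : (0:ℝ) ≤ x := by linarith [hx.1]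
    show ‖x ^ (α - 1)‖ ^ (2:ℝ) = x ^ (2*α - 2)
    rw [Real.norm_eq_abs, abs_of_nonneg (Real.rpow_nonneg hx0 _), ← Real.rpow_mul hx0]
    congr 1
    ring
  have hval : (∫ x in Ioo t t₀, x ^ (2*α - 2)) = (t₀^(2*α-1) - t^(2*α-1))/(2*α-1) := by
    rw [← integral_Ioc_eq_integral_Ioo, ← intervalIntegral.integral_of_le ht']
    rw [integral_rpow (Or.inr ⟨ne_of_lt (by linarith), by
      rw [Set.uIcc_of_le ht']; rintro ⟨h0, -⟩; linarith⟩)]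
    have h2 : 2*α - 2 + 1 = 2*α - 1 := by ring
    rw [h2]
  have hpos2 : (0:ℝ) < 1 - 2*α := by linarith
  have hval2 : (∫ x in Ioo t t₀, x ^ (2*α - 2)) ≤ t^(2*α-1)/(1-2*α) := by
    rw [hval]
    have h1 : (0:ℝ) < t₀ ^ (2*α-1) := Real.rpow_pos_of_pos (lt_of_lt_of_le ht ht') _
    have heq : (t₀^(2*α-1) - t^(2*α-1))/(2*α-1) = (t^(2*α-1) - t₀^(2*α-1))/(1-2*α) := by
      rw [div_eq_div_iff (by linarith) (by linarith)]
      ring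
    rw [heq]
    gcongr
    linarith
  have hnonneg : 0 ≤ ∫ x in Ioo t t₀, x ^ (2*α - 2) :=
    setIntegral_nonneg measurableSet_Ioo fun x hx => Real.rpow_nonneg (by linarith [hx.1]) _
  have hwnorm : (eLpNorm (fun x : ℝ => x ^ (α - 1)) 2 (volume.restrict (Ioo t t₀))).toReal
      = (∫ x in Ioo t t₀, x ^ (2*α - 2)) ^ ((2:ℝ)⁻¹) := by
    rw [MemLp.eLpNorm_eq_integral_rpow_norm (by norm_num) (by norm_num) hw2]
    have hb : 0 ≤ ∫ x in Ioo t t₀, ‖x ^ (α - 1)‖ ^ ((2:ENNReal)).toReal :=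
      integral_nonneg fun x => Real.rpow_nonneg (norm_nonneg _) _
    rw [ENNReal.toReal_ofReal (Real.rpow_nonneg hb _)]
    simp only [ENNReal.toReal_ofNat]
    rw [hint]
  have hw_le : (eLpNorm (fun x : ℝ => x ^ (α - 1)) 2 (volume.restrict (Ioo t t₀))).toReal
      ≤ Real.sqrt (t ^ (2*α - 1) / (1 - 2*α)) := by
    rw [hwnorm, show ((2:ℝ)⁻¹ = 1/2) from by norm_num, ← Real.sqrt_eq_rpow]
    exact Real.sqrt_le_sqrt hval2
  calc |∫ x in Ioo t t₀, f x * x ^ (α - 1)|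
      ≤ (eLpNorm f 2 (volume.restrict (Ioo t t₀))).toReal *
        (eLpNorm (fun x : ℝ => x ^ (α - 1)) 2 (volume.restrict (Ioo t t₀))).toReal := hCS
    _ ≤ (eLpNorm f 2 (volume.restrict (Ioo (0:ℝ) t₀))).toReal *
        Real.sqrt (t ^ (2*α - 1) / (1 - 2*α)) :=
      mul_le_mul hN hw_le ENNReal.toReal_nonneg ENNReal.toReal_nonneg

/-- For `t₀ > 0`, `α < 1/2` and `f ∈ L²((0,t₀))`, the function
`g(t) = -t^{1-α} ∫ₜ^{t₀} f(x) x^{α-1} dx` is well defined, satisfies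
`|g(t)| ≤ (1-2α)^{-1/2} ‖f‖_{L²} t^{1/2}` and solves
`g'(t) + (α-1) g(t)/t = f(t)` almost everywhere on `(0,t₀)`. -/
theorem stmt_2 (t₀ : ℝ) (ht₀ : 0 < t₀) (α : ℝ) (hα : α < 1/2)
    (f : ℝ → ℝ) (hf : MemLp f 2 (volume.restrict (Ioo (0:ℝ) t₀))) :
    (∀ t ∈ Ioc (0:ℝ) t₀, IntegrableOn (fun x => f x * x ^ (α - 1)) (Ioo t t₀)) ∧
    ∀ g : ℝ → ℝ,
      (∀ t : ℝ, g t = -(t ^ (1 - α)) * ∫ x in Ioo t t₀, f x * x ^ (α - 1)) →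
      (∀ t ∈ Ioc (0:ℝ) t₀,
          |g t| ≤ (Real.sqrt (1 - 2*α))⁻¹ *
            (eLpNorm f 2 (volume.restrict (Ioo (0:ℝ) t₀))).toReal * Real.sqrt t) ∧
      (∀ᵐ t ∂(volume.restrict (Ioo (0:ℝ) t₀)),
          ∃ d : ℝ, HasDerivAt g d t ∧ d + (α - 1) * g t / t = f t) := by
  refine ⟨fun t ht => integ_aux t₀ α hα f hf t ht.1, fun g hg => ⟨?_, ?_⟩⟩
  · -- the bound
    intro t ht
    obtain ⟨ht1, ht2⟩ := ht
    have hb := bound_aux t₀ ht₀ α hα f hf t ht1 ht2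
    set N := (eLpNorm f 2 (volume.restrict (Ioo (0:ℝ) t₀))).toReal with hN
    have hN0 : 0 ≤ N := ENNReal.toReal_nonneg
    have habs : |g t| = t ^ (1 - α) * |∫ x in Ioo t t₀, f x * x ^ (α - 1)| := by
      rw [hg t, abs_mul, abs_neg, abs_of_nonneg (Real.rpow_nonneg ht1.le _)]
    have hpow : 0 ≤ t ^ (1 - α) := Real.rpow_nonneg ht1.le _
    have hkey : t ^ (1 - α) * Real.sqrt (t ^ (2*α - 1) / (1 - 2*α))
        = (Real.sqrt (1 - 2*α))⁻¹ * Real.sqrt t := by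
      have h2a : (0:ℝ) < 1 - 2*α := by linarith
      have htpos := ht1
      have e1 : Real.sqrt (t ^ (2*α - 1) / (1 - 2*α))
          = Real.sqrt (t ^ (2*α - 1)) / Real.sqrt (1 - 2*α) :=
        Real.sqrt_div (Real.rpow_nonneg ht1.le _) _
      have e2 : t ^ (1 - α) = Real.sqrt (t ^ (2 - 2*α)) := by
        rw [show (2 - 2*α) = (1 - α) * 2 by ring, Real.rpow_mul ht1.le,
          show ((2:ℝ) = ((2:ℕ):ℝ)) from by norm_num, Real.rpow_natCast]
        exact (Real.sqrt_sq (Real.rpow_nonneg ht1.le _)).symm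
      rw [e1, e2, mul_div_assoc', ← Real.sqrt_mul (Real.rpow_nonneg ht1.le _), ← Real.rpow_add ht1]
      rw [show (2 - 2*α + (2*α - 1)) = (1:ℝ) by ring, Real.rpow_one]
      rw [div_eq_mul_inv, mul_comm]
    calc |g t| = t ^ (1 - α) * |∫ x in Ioo t t₀, f x * x ^ (α - 1)| := habs
      _ ≤ t ^ (1 - α) * (N * Real.sqrt (t ^ (2*α - 1) / (1 - 2*α))) :=
          mul_le_mul_of_nonneg_left hb hpow
      _ = N * (t ^ (1 - α) * Real.sqrt (t ^ (2*α - 1) / (1 - 2*α))) := by ring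
      _ = N * ((Real.sqrt (1 - 2*α))⁻¹ * Real.sqrt t) := by rw [hkey]
      _ = (Real.sqrt (1 - 2*α))⁻¹ * N * Real.sqrt t := by ring
  · -- the a.e. differential equation
    have hunion : Ioo (0:ℝ) t₀ = ⋃ n : ℕ, Ioo (t₀ / (n + 2)) t₀ := by
      ext x
      simp only [mem_Ioo, mem_iUnion]
      constructor
      · rintro ⟨hx0, hxt⟩
        obtain ⟨n, hn⟩ := exists_nat_gt (t₀ / x)
        refine ⟨n, ?_, hxt⟩
        rw [div_lt_iff₀ (by positivity : (0:ℝ) < (n:ℝ) + 2)]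
        have := (div_lt_iff₀ hx0).1 hn
        nlinarith
      · rintro ⟨n, hn1, hn2⟩
        exact ⟨lt_trans (by positivity) hn1, hn2⟩
    rw [hunion, ae_restrict_iUnion_iff]
    intro n
    set ε : ℝ := t₀ / (n + 2) with hεdef
    have hεpos : 0 < ε := by positivity
    set φ : ℝ → ℝ := (Ioo ε t₀).indicator (fun x => f x * x ^ (α - 1)) with hφdef
    have hφ : Integrable φ :=
      (integrable_indicator_iff measurableSet_Ioo).2 (integ_aux t₀ α hα f hf ε hεpos)
    have hae := ae_hasDerivAt_integral φ hφ
    filter_upwards [ae_restrict_of_ae hae, ae_restrict_mem measurableSet_Ioo]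
      with t hder htmem
    have htpos : 0 < t := lt_trans hεpos htmem.1
    have htne : t ≠ 0 := ne_of_gt htpos
    set G : ℝ → ℝ := fun u => ∫ x in (0:ℝ)..u, φ x with hGdef
    set C : ℝ := ∫ x in (0:ℝ)..t₀, φ x with hCdef
    have hFG : ∀ u ∈ Ioo ε t₀, (∫ x in Ioo u t₀, f x * x ^ (α - 1)) = C - G u := by
      intro u hu
      have h1 : (∫ x in Ioo u t₀, f x * x ^ (α - 1)) = ∫ x in Ioo u t₀, φ x := by
        apply setIntegral_congr_fun measurableSet_Ioo
        intro x hx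
        have hxmem : x ∈ Ioo ε t₀ := mem_Ioo.2 ⟨lt_trans hu.1 hx.1, hx.2⟩
        show f x * x ^ (α - 1) = φ x
        rw [hφdef, indicator_of_mem hxmem]
      have h2 : (∫ x in Ioo u t₀, φ x) = ∫ x in u..t₀, φ x := by
        rw [intervalIntegral.integral_of_le hu.2.le, integral_Ioc_eq_integral_Ioo]
      rw [h1, h2]
      exact (intervalIntegral.integral_interval_sub_left hφ.intervalIntegrable
        hφ.intervalIntegrable).symm
    have hgh : g =ᶠ[nhds t] (fun u => -(u ^ (1 - α)) * (C - G u)) := by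
      filter_upwards [isOpen_Ioo.mem_nhds htmem] with u hu
      rw [hg u, hFG u hu]
    have h1 : HasDerivAt (fun u : ℝ => u ^ (1 - α)) ((1 - α) * t ^ (1 - α - 1)) t :=
      Real.hasDerivAt_rpow_const (Or.inl htne)
    have h2 : HasDerivAt (fun u => C - G u) (-(φ t)) t := hder.const_sub C
    have h3 := (h1.mul h2).neg
    rw [show (-((fun u : ℝ => u ^ (1 - α)) * fun u => C - G u))
        = (fun u : ℝ => -(u ^ (1 - α)) * (C - G u)) from funext fun u => by
          simp only [Pi.neg_apply, Pi.mul_apply]; ring] at h3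
    have hasg : HasDerivAt g
        (-((1 - α) * t ^ (1 - α - 1) * (C - G t) + t ^ (1 - α) * (-(φ t)))) t :=
      h3.congr_of_eventuallyEq hgh
    refine ⟨_, hasg, ?_⟩
    have hφt : φ t = f t * t ^ (α - 1) := by
      simp only [hφdef]
      exact indicator_of_mem htmem _
    have h01 : t ^ (1 - α - 1) = t ^ (1 - α) / t := by
      rw [Real.rpow_sub htpos, Real.rpow_one]
    have hmul : t ^ (1 - α) * t ^ (α - 1) = 1 := by
      rw [← Real.rpow_add htpos, show (1 - α + (α - 1)) = (0:ℝ) by ring, Real.rpow_zero]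
    rw [hg t, hFG t htmem, hφt, h01]
    field_simp
    linear_combination (f t * t) * hmul
end

section
/- Let t₀ > 0 and α > 1/2. The map K defined by (Kf)(t) = t^{1−α}∫₀ᵗ f(x)x^{α−1}dx for t ∈ (0,t₀] and (Kf)(0) = 0 is a well-defined bounded linear operator from L²((0,t₀)) to C⁰([0,t₀]) (in particular Kf extends continuously to t = 0 with value 0), and K is a compact operator. -/
open MeasureTheory Set

namespace Stmt5Aux

open Real Filter

lemma wsq_eq {α x : ℝ} (hx : 0 ≤ x) : (x ^ (α-1))^2 = x ^ (2*α - 2) := by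
  rw [← Real.rpow_natCast (x ^ (α-1)) 2, ← Real.rpow_mul hx]
  congr 1
  push_cast; ring

lemma integrableOn_wsq {α : ℝ} (hα : 1/2 < α) {a b : ℝ} (ha : 0 ≤ a) :
    IntegrableOn (fun x => (x ^ (α-1))^2) (Ioo a b) := by
  rcases le_or_gt b a with h | h
  · simp [Set.Ioo_eq_empty (not_lt.2 h)]
  · have h2 : IntegrableOn (fun x : ℝ => x ^ (2*α-2)) (Ioc a b) :=
      (_root_.intervalIntegral.intervalIntegrable_rpow' (by linarith)).1
    exact (h2.mono_set Ioo_subset_Ioc_self).congr_fun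
      (fun x hx => (wsq_eq (ha.trans hx.1.le)).symm) measurableSet_Ioo

open intervalIntegral in
lemma integral_wsq {α : ℝ} (hα : 1/2 < α) {a b : ℝ} (ha : 0 ≤ a) (hab : a ≤ b) :
    ∫ x in Ioo a b, (x ^ (α-1))^2 = (b ^ (2*α-1) - a ^ (2*α-1)) / (2*α-1) := by
  have h1 : ∫ x in Ioo a b, (x ^ (α-1))^2 = ∫ x in Ioo a b, x ^ (2*α-2) :=
    setIntegral_congr_fun measurableSet_Ioo fun x hx => wsq_eq (ha.trans hx.1.le)
  have h2 : (2*α-2) + 1 = 2*α-1 := by ring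
  rw [h1, ← integral_Ioc_eq_integral_Ioo, ← intervalIntegral.integral_of_le hab]
  rw [show (fun x : ℝ => x ^ (2*α-2)) = fun x : ℝ => x ^ (2*α-2) from rfl]
  rw [integral_rpow (Or.inl (by linarith)), h2]

lemma memℒp_w {α : ℝ} (hα : 1/2 < α) {a b : ℝ} (ha : 0 ≤ a) :
    MemLp (fun x : ℝ => x ^ (α-1)) 2 (volume.restrict (Ioo a b)) := by
  refine (memLp_two_iff_integrable_sq ?_).2 (integrableOn_wsq hα ha)
  exact (continuousOn_id.rpow_const fun x hx =>
    Or.inl (ne_of_gt (ha.trans_lt hx.1))).aestronglyMeasurable measurableSet_Ioo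


lemma meas_restrict_eq (t₀ : ℝ) {s : Set ℝ} (hs : MeasurableSet s) (hsub : s ⊆ Ioo 0 t₀) :
    volume.restrict s = (volume.restrict (Ioo (0:ℝ) t₀)).restrict s := by
  rw [Measure.restrict_restrict hs, inter_eq_self_of_subset_left hsub]

lemma cs {t₀ α : ℝ} (hα : 1/2 < α) (f : Lp ℝ 2 (volume.restrict (Ioo (0:ℝ) t₀)))
    {s : Set ℝ} (hs : MeasurableSet s) (hsub : s ⊆ Ioo 0 t₀)
    (hw : MemLp (fun x : ℝ => x ^ (α-1)) 2 (volume.restrict s)) :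
    IntegrableOn (fun x => f x * x ^ (α-1)) s ∧
    |∫ x in s, f x * x ^ (α-1)| ≤ ‖f‖ * Real.sqrt (∫ x in s, (x ^ (α-1))^2) := by
  have hres : volume.restrict s = (volume.restrict (Ioo (0:ℝ) t₀)).restrict s :=
    meas_restrict_eq t₀ hs hsub
  have hle : (volume.restrict (Ioo (0:ℝ) t₀)).restrict s ≤ volume.restrict (Ioo (0:ℝ) t₀) :=
    Measure.restrict_le_self
  have hf : MemLp (⇑f) 2 (volume.restrict s) := by
    rw [hres]; exact (Lp.memLp f).mono_measure hle
  set W := hw.toLp _ with hW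
  set F := hf.toLp _ with hF
  have hFW : Integrable (fun x => F x * W x) (volume.restrict s) := by
    have := L2.integrable_inner (𝕜 := ℝ) W F
    simpa [RCLike.inner_apply, conj_trivial] using this
  have haeF : F =ᵐ[volume.restrict s] ⇑f := hf.coeFn_toLp
  have haeW : W =ᵐ[volume.restrict s] fun x : ℝ => x ^ (α-1) := hw.coeFn_toLp
  have haeFW : (fun x => F x * W x) =ᵐ[volume.restrict s] fun x => f x * x ^ (α-1) := by
    filter_upwards [haeF, haeW] with x h1 h2
    rw [h1, h2]
  have hint : IntegrableOn (fun x => f x * x ^ (α-1)) s := hFW.congr haeFW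
  refine ⟨hint, ?_⟩
  have hinner : (inner ℝ F W : ℝ) = ∫ x in s, f x * x ^ (α-1) := by
    rw [L2.inner_def]
    rw [integral_congr_ae haeFW.symm] -- careful direction
    refine integral_congr_ae ?_
    filter_upwards with x
    simp [RCLike.inner_apply, conj_trivial, mul_comm]
  have hWnorm : ‖W‖ = Real.sqrt (∫ x in s, (x ^ (α-1))^2) := by
    have h1 : (inner ℝ W W : ℝ) = ‖W‖ ^ 2 := real_inner_self_eq_norm_sq W
    have h2 : (inner ℝ W W : ℝ) = ∫ x in s, (x ^ (α-1))^2 := by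
      rw [L2.inner_def]
      refine integral_congr_ae ?_
      filter_upwards [haeW] with x hx
      rw [RCLike.inner_apply]
      simp [hx, sq]
    rw [h2.symm.trans h1, Real.sqrt_sq (norm_nonneg W)]
  have hFnorm : ‖F‖ ≤ ‖f‖ := by
    rw [hF, Lp.norm_toLp, Lp.norm_def]
    refine ENNReal.toReal_mono (Lp.eLpNorm_ne_top f) ?_
    rw [hres]
    exact eLpNorm_mono_measure _ hle
  calc |∫ x in s, f x * x ^ (α-1)| = |(inner ℝ F W : ℝ)| := by rw [hinner]
    _ ≤ ‖F‖ * ‖W‖ := abs_real_inner_le_norm F W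
    _ ≤ ‖f‖ * Real.sqrt (∫ x in s, (x ^ (α-1))^2) := by
        rw [hWnorm] at *
        exact mul_le_mul_of_nonneg_right hFnorm (Real.sqrt_nonneg _)


noncomputable def gdef (t₀ α : ℝ) (f : Lp ℝ 2 (volume.restrict (Ioo (0:ℝ) t₀))) (t : ℝ) : ℝ :=
  t ^ (1-α) * ∫ x in Ioo (0:ℝ) t, f x * x ^ (α-1)

lemma gdef_zero {t₀ α : ℝ} (f : Lp ℝ 2 (volume.restrict (Ioo (0:ℝ) t₀))) : gdef t₀ α f 0 = 0 := by
  simp [gdef, Set.Ioo_self]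

lemma cs' {t₀ α : ℝ} (hα : 1/2 < α) (f : Lp ℝ 2 (volume.restrict (Ioo (0:ℝ) t₀)))
    {a b : ℝ} (ha : 0 ≤ a) (hb : b ≤ t₀) :
    IntegrableOn (fun x => f x * x ^ (α-1)) (Ioo a b) ∧
    |∫ x in Ioo a b, f x * x ^ (α-1)| ≤ ‖f‖ * Real.sqrt (∫ x in Ioo a b, (x ^ (α-1))^2) := by
  refine cs hα f measurableSet_Ioo (fun x hx => ⟨ha.trans_lt hx.1, hx.2.trans_le hb⟩)
    (memℒp_w hα ha)

lemma habs {t₀ α : ℝ} (hα : 1/2 < α) (f : Lp ℝ 2 (volume.restrict (Ioo (0:ℝ) t₀)))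
    {t : ℝ} (ht : t ∈ Ioc (0:ℝ) t₀) :
    |∫ x in Ioo (0:ℝ) t, f x * x ^ (α-1)| ≤ ‖f‖ * Real.sqrt (t ^ (2*α-1) / (2*α-1)) := by
  have h := (cs' hα f le_rfl ht.2).2
  rwa [integral_wsq hα le_rfl ht.1.le, Real.zero_rpow (by linarith : (0:ℝ) < 2*α-1).ne', sub_zero] at h

lemma hdiff {t₀ α : ℝ} (hα : 1/2 < α) (f : Lp ℝ 2 (volume.restrict (Ioo (0:ℝ) t₀)))
    {a t : ℝ} (ha : 0 < a) (hat : a ≤ t) (ht : t ≤ t₀) :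
    |(∫ x in Ioo (0:ℝ) t, f x * x ^ (α-1)) - ∫ x in Ioo (0:ℝ) a, f x * x ^ (α-1)| ≤
      ‖f‖ * Real.sqrt ((t ^ (2*α-1) - a ^ (2*α-1)) / (2*α-1)) := by
  have hIt : IntegrableOn (fun x => f x * x ^ (α-1)) (Ioc 0 t) :=
    (integrableOn_Ioc_iff_integrableOn_Ioo).2 (cs' hα f le_rfl ht).1
  have hIa : IntegrableOn (fun x => f x * x ^ (α-1)) (Ioc 0 a) :=
    hIt.mono_set (Ioc_subset_Ioc_right hat)
  have hIat : IntegrableOn (fun x => f x * x ^ (α-1)) (Ioc a t) :=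
    hIt.mono_set (Ioc_subset_Ioc_left ha.le)
  have hsplit : ∫ x in Ioo (0:ℝ) t, f x * x ^ (α-1) =
      (∫ x in Ioo (0:ℝ) a, f x * x ^ (α-1)) + ∫ x in Ioc a t, f x * x ^ (α-1) := by
    rw [← integral_Ioc_eq_integral_Ioo, ← integral_Ioc_eq_integral_Ioo,
      ← Ioc_union_Ioc_eq_Ioc ha.le hat,
      setIntegral_union (Ioc_disjoint_Ioc_of_le le_rfl) measurableSet_Ioc hIa hIat]
  rw [hsplit, add_sub_cancel_left, integral_Ioc_eq_integral_Ioo]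
  have h := (cs' hα f ha.le ht).2
  rwa [integral_wsq hα ha.le hat] at h

lemma key_rpow {t α : ℝ} (hα : 1/2 < α) (ht : 0 < t) :
    t ^ (1-α) * Real.sqrt (t ^ (2*α-1) / (2*α-1)) = Real.sqrt t / Real.sqrt (2*α-1) := by
  rw [Real.sqrt_div (Real.rpow_nonneg ht.le _), Real.sqrt_eq_rpow (t ^ (2*α-1)),
    ← Real.rpow_mul ht.le, ← mul_div_assoc, ← Real.rpow_add ht]
  congr 1
  rw [Real.sqrt_eq_rpow t]
  congr 1
  ring

lemma gbound {t₀ α : ℝ} (hα : 1/2 < α) (f : Lp ℝ 2 (volume.restrict (Ioo (0:ℝ) t₀)))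
    {t : ℝ} (ht : t ∈ Ioc (0:ℝ) t₀) :
    |gdef t₀ α f t| ≤ ‖f‖ * (Real.sqrt t / Real.sqrt (2*α-1)) := by
  have h1 := habs hα f ht
  have hβ : (0:ℝ) ≤ t ^ (1-α) := Real.rpow_nonneg ht.1.le _
  calc |gdef t₀ α f t| = t ^ (1-α) * |∫ x in Ioo (0:ℝ) t, f x * x ^ (α-1)| := by
        rw [gdef, abs_mul, abs_of_nonneg hβ]
    _ ≤ t ^ (1-α) * (‖f‖ * Real.sqrt (t ^ (2*α-1) / (2*α-1))) :=
        mul_le_mul_of_nonneg_left h1 hβ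
    _ = ‖f‖ * (t ^ (1-α) * Real.sqrt (t ^ (2*α-1) / (2*α-1))) := by ring
    _ = ‖f‖ * (Real.sqrt t / Real.sqrt (2*α-1)) := by rw [key_rpow hα ht.1]


lemma cont_g {t₀ α : ℝ} (ht₀ : 0 < t₀) (hα : 1/2 < α)
    (f : Lp ℝ 2 (volume.restrict (Ioo (0:ℝ) t₀))) :
    ContinuousOn (gdef t₀ α f) (Icc 0 t₀) := by
  have hF : IntegrableOn (fun x => f x * x ^ (α-1)) (Icc 0 t₀) :=
    (integrableOn_Icc_iff_integrableOn_Ioo).2 (cs' hα f le_rfl le_rfl).1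
  have hprim : ContinuousOn (fun t => ∫ x in Ioc (0:ℝ) t, f x * x ^ (α-1)) (Icc 0 t₀) :=
    intervalIntegral.continuousOn_primitive hF
  have hh : ContinuousOn (fun t => ∫ x in Ioo (0:ℝ) t, f x * x ^ (α-1)) (Icc 0 t₀) :=
    hprim.congr fun t _ => (integral_Ioc_eq_integral_Ioo).symm
  intro t ht
  rcases eq_or_lt_of_le ht.1 with h0 | h0
  · rw [ContinuousWithinAt, ← h0, gdef_zero]
    refine tendsto_zero_iff_norm_tendsto_zero.2
      (squeeze_zero' (.of_forall fun x => norm_nonneg _)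
        (g := fun x => ‖f‖ * (Real.sqrt x / Real.sqrt (2*α-1))) ?_ ?_)
    · filter_upwards [self_mem_nhdsWithin] with x hx
      rw [Real.norm_eq_abs]
      rcases eq_or_lt_of_le hx.1 with h1 | h1
      · rw [← h1, gdef_zero]
        simp
      · exact gbound hα f ⟨h1, hx.2⟩
    · have hcont : Continuous fun x : ℝ => ‖f‖ * (Real.sqrt x / Real.sqrt (2*α-1)) :=
        continuous_const.mul (Real.continuous_sqrt.div_const _)
      have := (hcont.tendsto 0).mono_left (nhdsWithin_le_nhds (s := Icc 0 t₀))
      simpa using this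
  · exact ((Real.continuousAt_rpow_const t _ (Or.inl h0.ne')).continuousWithinAt).mul (hh t ht)

lemma g_add {t₀ α : ℝ} (hα : 1/2 < α)
    (f f' : Lp ℝ 2 (volume.restrict (Ioo (0:ℝ) t₀))) {t : ℝ} (ht : t ∈ Icc (0:ℝ) t₀) :
    gdef t₀ α (f + f') t = gdef t₀ α f t + gdef t₀ α f' t := by
  rcases eq_or_lt_of_le ht.1 with h0 | h0
  · rw [← h0, gdef_zero, gdef_zero, gdef_zero, add_zero]
  · have hsub : Ioo (0:ℝ) t ⊆ Ioo (0:ℝ) t₀ := Ioo_subset_Ioo_right ht.2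
    have hae : (⇑(f + f') : ℝ → ℝ) =ᵐ[volume.restrict (Ioo (0:ℝ) t)] ⇑f + ⇑f' := by
      rw [meas_restrict_eq t₀ measurableSet_Ioo hsub]
      exact ae_restrict_of_ae (Lp.coeFn_add f f')
    have h1 : ∫ x in Ioo (0:ℝ) t, (f + f') x * x ^ (α-1) =
        ∫ x in Ioo (0:ℝ) t, (f x * x ^ (α-1) + f' x * x ^ (α-1)) := by
      refine integral_congr_ae ?_
      filter_upwards [hae] with x hx
      rw [hx]
      simp [add_mul]
    rw [gdef, gdef, gdef, h1,
      integral_add (cs' hα f le_rfl ht.2).1 (cs' hα f' le_rfl ht.2).1, mul_add]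

lemma g_smul {t₀ α : ℝ} (hα : 1/2 < α) (c : ℝ)
    (f : Lp ℝ 2 (volume.restrict (Ioo (0:ℝ) t₀))) {t : ℝ} (ht : t ∈ Icc (0:ℝ) t₀) :
    gdef t₀ α (c • f) t = c * gdef t₀ α f t := by
  rcases eq_or_lt_of_le ht.1 with h0 | h0
  · rw [← h0, gdef_zero, gdef_zero, mul_zero]
  · have hsub : Ioo (0:ℝ) t ⊆ Ioo (0:ℝ) t₀ := Ioo_subset_Ioo_right ht.2
    have hae : (⇑(c • f) : ℝ → ℝ) =ᵐ[volume.restrict (Ioo (0:ℝ) t)] c • ⇑f := by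
      rw [meas_restrict_eq t₀ measurableSet_Ioo hsub]
      exact ae_restrict_of_ae (Lp.coeFn_smul c f)
    have h1 : ∫ x in Ioo (0:ℝ) t, (c • f) x * x ^ (α-1) =
        ∫ x in Ioo (0:ℝ) t, c * (f x * x ^ (α-1)) := by
      refine integral_congr_ae ?_
      filter_upwards [hae] with x hx
      rw [hx]
      simp [smul_eq_mul]
      ring
    rw [gdef, gdef, h1, integral_const_mul]
    ring


lemma equi_core {t₀ α : ℝ} (ht₀ : 0 < t₀) (hα : 1/2 < α) (p : Icc (0:ℝ) t₀) {ε : ℝ}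
    (hε : 0 < ε) :
    ∀ᶠ (x : Icc (0:ℝ) t₀) in nhds p,
      ∀ f : Lp ℝ 2 (volume.restrict (Ioo (0:ℝ) t₀)), ‖f‖ ≤ 1 →
        dist (gdef t₀ α f p.1) (gdef t₀ α f x.1) < ε := by
  have hval : Tendsto (fun x : Icc (0:ℝ) t₀ => (x : ℝ)) (nhds p) (nhds p.1) :=
    continuous_subtype_val.continuousAt
  rcases eq_or_lt_of_le p.2.1 with h0 | h0
  · -- p.1 = 0
    have h1 : Tendsto (fun t : ℝ => Real.sqrt t / Real.sqrt (2*α-1)) (nhds p.1)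
        (nhds (Real.sqrt p.1 / Real.sqrt (2*α-1))) :=
      (Real.continuous_sqrt.div_const _).continuousAt
    have h2 : Real.sqrt p.1 / Real.sqrt (2*α-1) < ε := by
      rw [← h0, Real.sqrt_zero, zero_div]; exact hε
    filter_upwards [hval.eventually (h1.eventually_lt_const h2)] with x hx f hf
    rw [← h0, gdef_zero, dist_comm, Real.dist_eq, sub_zero]
    rcases eq_or_lt_of_le x.2.1 with h1' | h1'
    · rw [← h1', gdef_zero, abs_zero]; exact hε
    · refine lt_of_le_of_lt ((gbound hα f ⟨h1', x.2.2⟩).trans ?_) hx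
      exact mul_le_of_le_one_left (by positivity) hf
  · -- 0 < p.1
    set a := p.1 with haa
    have ha : 0 < a := h0
    have hat₀ : a ≤ t₀ := p.2.2
    set Ψ : ℝ → ℝ := fun t =>
      |t ^ (1-α) - a ^ (1-α)| * Real.sqrt (a ^ (2*α-1) / (2*α-1)) +
        t ^ (1-α) * Real.sqrt (|t ^ (2*α-1) - a ^ (2*α-1)| / (2*α-1)) with hΨ
    have hc1 : ContinuousAt (fun t : ℝ => t ^ (1-α)) a :=
      Real.continuousAt_rpow_const a _ (Or.inl ha.ne')
    have hc2 : ContinuousAt (fun t : ℝ => t ^ (2*α-1)) a :=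
      Real.continuousAt_rpow_const a _ (Or.inl ha.ne')
    have hcΨ : ContinuousAt Ψ a := by
      refine ContinuousAt.add (ContinuousAt.mul ?_ continuousAt_const)
        (ContinuousAt.mul hc1 ?_)
      · exact (hc1.sub continuousAt_const).abs
      · exact (Real.continuous_sqrt.continuousAt).comp
          (((hc2.sub continuousAt_const).abs).div_const _)
    have hΨa : Ψ a = 0 := by
      simp [hΨ]
    have hev1 : ∀ᶠ t : ℝ in nhds a, Ψ t < ε := by
      have := hcΨ
      rw [ContinuousAt, hΨa] at this
      exact this.eventually_lt_const hε
    have hev2 : ∀ᶠ t : ℝ in nhds a, 0 < t := eventually_gt_nhds ha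
    filter_upwards [hval.eventually (hev1.and hev2)] with x hx f hf
    obtain ⟨hΨx, hx0⟩ := hx
    set t : ℝ := x.1 with htt
    have hxt₀ : t ≤ t₀ := x.2.2
    set I : ℝ → ℝ := fun s => ∫ y in Ioo (0:ℝ) s, f y * y ^ (α-1) with hI
    have hIa : |I a| ≤ Real.sqrt (a ^ (2*α-1) / (2*α-1)) :=
      (habs hα f ⟨ha, hat₀⟩).trans (mul_le_of_le_one_left (Real.sqrt_nonneg _) hf)
    have hIta : |I t - I a| ≤ Real.sqrt (|t ^ (2*α-1) - a ^ (2*α-1)| / (2*α-1)) := by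
      rcases le_total a t with h | h
      · have hd := (hdiff hα f ha h hxt₀).trans
          (mul_le_of_le_one_left (Real.sqrt_nonneg _) hf)
        rwa [← abs_of_nonneg (sub_nonneg.2 (Real.rpow_le_rpow ha.le h (by linarith)))] at hd
      · have hd := (hdiff hα f hx0 h hat₀).trans
          (mul_le_of_le_one_left (Real.sqrt_nonneg _) hf)
        rw [abs_sub_comm (I t) (I a), abs_sub_comm (t ^ (2*α-1)),
          abs_of_nonneg (sub_nonneg.2 (Real.rpow_le_rpow hx0.le h (by linarith)))]
        exact hd
    have hid : gdef t₀ α f t - gdef t₀ α f a =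
        (t ^ (1-α) - a ^ (1-α)) * I a + t ^ (1-α) * (I t - I a) := by
      rw [gdef, gdef]
      ring
    have hest : dist (gdef t₀ α f a) (gdef t₀ α f t) ≤ Ψ t := by
      rw [Real.dist_eq, abs_sub_comm, hid, hΨ]
      refine (abs_add_le _ _).trans (add_le_add ?_ ?_)
      · rw [abs_mul]
        exact mul_le_mul_of_nonneg_left hIa (abs_nonneg _)
      · rw [abs_mul, abs_of_nonneg (Real.rpow_nonneg hx0.le _)]
        exact mul_le_mul_of_nonneg_left hIta (Real.rpow_nonneg hx0.le _)
    exact hest.trans_lt hΨx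

end Stmt5Aux



open Stmt5Aux in
/-- For `t₀ > 0` and `α > 1/2`, the map `(Kf)(t) = t^{1-α} ∫₀ᵗ f(x) x^{α-1} dx`
(`(Kf)(0) = 0`) is a well-defined bounded linear operator `L²((0,t₀)) → C⁰([0,t₀])`,
and `K` is a compact operator. -/
theorem stmt_5 (t₀ : ℝ) (ht₀ : 0 < t₀) (α : ℝ) (hα : 1/2 < α) :
    ∃ K : Lp ℝ 2 (volume.restrict (Ioo (0:ℝ) t₀)) →L[ℝ] C(Icc (0:ℝ) t₀, ℝ),
      IsCompactOperator K ∧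
      ∀ f : Lp ℝ 2 (volume.restrict (Ioo (0:ℝ) t₀)),
        (∀ t ∈ Ioc (0:ℝ) t₀, IntegrableOn (fun x => f x * x ^ (α - 1)) (Ioo (0:ℝ) t)) ∧
        K f ⟨0, left_mem_Icc.mpr ht₀.le⟩ = 0 ∧
        ∀ t (ht : t ∈ Ioc (0:ℝ) t₀),
          K f ⟨t, Ioc_subset_Icc_self ht⟩ =
            t ^ (1 - α) * ∫ x in Ioo (0:ℝ) t, f x * x ^ (α - 1) := by
  have hc : (0:ℝ) < 2*α-1 := by linarith
  haveI : CompactSpace (Icc (0:ℝ) t₀) := isCompact_iff_compactSpace.1 isCompact_Icc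
  have hcont : ∀ f : Lp ℝ 2 (volume.restrict (Ioo (0:ℝ) t₀)),
      Continuous ((Icc (0:ℝ) t₀).restrict (gdef t₀ α f)) :=
    fun f => (cont_g ht₀ hα f).restrict
  let gC : Lp ℝ 2 (volume.restrict (Ioo (0:ℝ) t₀)) → C(Icc (0:ℝ) t₀, ℝ) :=
    fun f => ⟨_, hcont f⟩
  have hbd : ∀ (f : Lp ℝ 2 (volume.restrict (Ioo (0:ℝ) t₀))) (p : Icc (0:ℝ) t₀),
      |gdef t₀ α f p.1| ≤ ‖f‖ * (Real.sqrt t₀ / Real.sqrt (2*α-1)) := by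
    intro f p
    rcases eq_or_lt_of_le p.2.1 with h1 | h1
    · rw [← h1, gdef_zero, abs_zero]; positivity
    · refine (gbound hα f ⟨h1, p.2.2⟩).trans (mul_le_mul_of_nonneg_left ?_ (norm_nonneg f))
      exact (div_le_div_iff_of_pos_right (Real.sqrt_pos.2 hc)).2 (Real.sqrt_le_sqrt p.2.2)
  let L : Lp ℝ 2 (volume.restrict (Ioo (0:ℝ) t₀)) →ₗ[ℝ] C(Icc (0:ℝ) t₀, ℝ) :=
    { toFun := gC
      map_add' := fun f f' => by
        ext p
        show gdef t₀ α (f + f') p.1 = gdef t₀ α f p.1 + gdef t₀ α f' p.1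
        exact g_add hα f f' p.2
      map_smul' := fun c f => by
        ext p
        show gdef t₀ α (c • f) p.1 = c * gdef t₀ α f p.1
        exact g_smul hα c f p.2 }
  let K : Lp ℝ 2 (volume.restrict (Ioo (0:ℝ) t₀)) →L[ℝ] C(Icc (0:ℝ) t₀, ℝ) :=
    L.mkContinuous (Real.sqrt t₀ / Real.sqrt (2*α-1)) (fun f => by
      refine (ContinuousMap.norm_le _ (by positivity)).2 fun p => ?_
      rw [Real.norm_eq_abs]
      rw [mul_comm (Real.sqrt t₀ / Real.sqrt (2*α-1))]
      exact hbd f p)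
  refine ⟨K, ?_, ?_⟩
  · -- compactness
    set A : Set C(Icc (0:ℝ) t₀, ℝ) := ⇑K '' Metric.closedBall 0 1 with hA
    let e := ContinuousMap.linearIsometryBoundedOfCompact (Icc (0:ℝ) t₀) ℝ ℝ
    have hBcomp : IsCompact (closure (⇑e '' A)) := by
      refine BoundedContinuousFunction.arzela_ascoli
        (Icc (-(Real.sqrt t₀ / Real.sqrt (2*α-1))) (Real.sqrt t₀ / Real.sqrt (2*α-1)))
        isCompact_Icc _ ?_ ?_
      · rintro u x ⟨v, ⟨f, hf, rfl⟩, rfl⟩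
        have hf1 : ‖f‖ ≤ 1 := mem_closedBall_zero_iff.1 hf
        have h2 : |gdef t₀ α f x.1| ≤ Real.sqrt t₀ / Real.sqrt (2*α-1) :=
          (hbd f x).trans (mul_le_of_le_one_left (by positivity) hf1)
        exact mem_Icc.2 (abs_le.1 h2)
      · intro p
        rw [Metric.equicontinuousAt_iff_right]
        intro ε hε
        filter_upwards [equi_core ht₀ hα p hε]
        rintro x hx ⟨u, v, ⟨f, hf, rfl⟩, rfl⟩
        exact hx f (mem_closedBall_zero_iff.1 hf)
    have himg : ⇑e '' closure A = closure (⇑e '' A) :=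
      e.toIsometryEquiv.toHomeomorph.image_closure A
    have hAcomp : IsCompact (closure A) := by
      have h2 : IsCompact (⇑e.symm '' closure (⇑e '' A)) :=
        hBcomp.image e.symm.continuous
      have hcomp : (⇑e.symm ∘ ⇑e) = id := funext fun v => e.symm_apply_apply v
      rwa [← himg, ← Set.image_comp, hcomp, Set.image_id] at h2
    exact ⟨closure A, hAcomp,
      Filter.mem_of_superset (Metric.closedBall_mem_nhds 0 one_pos)
        (fun f hf => subset_closure (Set.mem_image_of_mem _ hf))⟩
  · intro f
    refine ⟨fun t ht => (cs' hα f le_rfl ht.2).1, ?_, fun t ht => rfl⟩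
    exact gdef_zero f
end

section
/- Let t₀ > 0 and α ≤ 1/2. The map K defined by (Kf)(t) = −t^{1−α}∫ₜ^{t₀} f(x)x^{α−1}dx for t ∈ (0,t₀] and (Kf)(0) = 0 is a well-defined bounded linear operator from L²((0,t₀)) to C⁰([0,t₀]) (in particular Kf extends continuously to t = 0 with value 0), and K is a compact operator. -/
open MeasureTheory Set

namespace Stmt6Aux

noncomputable def Kfun (α t₀ : ℝ) (f : ℝ → ℝ) (t : ℝ) : ℝ :=
  -(t ^ (1 - α)) * ∫ x in Ioo t t₀, f x * x ^ (α - 1)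

variable {t₀ α : ℝ}

lemma norm_rpow_two (y : ℝ) : ‖y‖ ^ (2:ℝ) = y ^ 2 := by
  rw [show (2:ℝ) = ((2:ℕ):ℝ) by norm_num, Real.rpow_natCast]
  simpa [Real.norm_eq_abs] using sq_abs y

lemma finmeas {a b : ℝ} : IsFiniteMeasure (volume.restrict (Ioo a b)) :=
  ⟨by rw [Measure.restrict_apply_univ]; exact measure_Ioo_lt_top⟩

lemma wmeas {r : ℝ} {ν : Measure ℝ} : AEStronglyMeasurable (fun x : ℝ => x ^ r) ν :=
  (measurable_id.pow_const r).aestronglyMeasurable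

lemma intRpow {a b r : ℝ} (ha : 0 < a) :
    IntegrableOn (fun x : ℝ => x ^ r) (Ioo a b) volume := by
  refine IntegrableOn.mono_set ?_ Ioo_subset_Icc_self
  refine ContinuousOn.integrableOn_Icc ?_
  intro x hx
  exact (Real.continuousAt_rpow_const x r
    (Or.inl (ne_of_gt (lt_of_lt_of_le ha hx.1)))).continuousWithinAt

lemma restr (ht₀ : 0 < t₀) {a b : ℝ} (ha : 0 ≤ a) (hb : b ≤ t₀) :
    (volume.restrict (Ioo (0:ℝ) t₀)).restrict (Ioo a b) = volume.restrict (Ioo a b) := by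
  rw [Measure.restrict_restrict measurableSet_Ioo,
    inter_eq_self_of_subset_left
      (fun x hx => mem_Ioo.mpr ⟨lt_of_le_of_lt ha hx.1, lt_of_lt_of_le hx.2 hb⟩)]

lemma f_mem (ht₀ : 0 < t₀) (f : Lp ℝ 2 (volume.restrict (Ioo (0:ℝ) t₀)))
    {a b : ℝ} (ha : 0 ≤ a) (hb : b ≤ t₀) :
    MemLp (f : ℝ → ℝ) 2 (volume.restrict (Ioo a b)) := by
  rw [← restr ht₀ ha hb]; exact (Lp.memLp f).restrict _

lemma lem_E1 (hα : α ≤ 1/2) {s t : ℝ} (hs : 0 < s) (hst : s ≤ t) :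
    ∫ x in Ioo s t, x ^ (2*α - 2) ≤ s ^ (2*α - 2) * (t - s) := by
  have h1 : ∫ x in Ioo s t, x ^ (2*α - 2) ≤ ∫ x in Ioo s t, s ^ (2*α - 2) := by
    refine setIntegral_mono_on (intRpow hs) (integrableOn_const ?_) measurableSet_Ioo ?_
    · rw [Real.volume_Ioo]; exact ENNReal.ofReal_ne_top
    · intro x hx
      exact Real.rpow_le_rpow_of_nonpos hs hx.1.le (by linarith)
  calc ∫ x in Ioo s t, x ^ (2*α - 2) ≤ ∫ x in Ioo s t, s ^ (2*α - 2) := h1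
    _ = s ^ (2*α - 2) * (t - s) := by
        rw [setIntegral_const, measureReal_def, Real.volume_Ioo, smul_eq_mul,
          ENNReal.toReal_ofReal (by linarith)]
        ring

lemma lem_E2 (ht₀ : 0 < t₀) (hα : α ≤ 1/2) {t : ℝ} (ht : 0 < t) (htt : t ≤ t₀) :
    ∫ x in Ioo t t₀, x ^ (2*α - 2) ≤ t₀ ^ ((1:ℝ)/2) * (2 * t ^ (2*α - 3/2)) := by
  have key : ∫ x in Ioo t t₀, x ^ (2*α - 2) ≤
      ∫ x in Ioo t t₀, t₀ ^ ((1:ℝ)/2) * x ^ (2*α - 5/2) := by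
    refine setIntegral_mono_on (intRpow ht) ((intRpow ht).const_mul _) measurableSet_Ioo ?_
    intro x hx
    have hx0 : 0 < x := lt_trans ht hx.1
    have : x ^ (2*α - 2) = x ^ ((1:ℝ)/2) * x ^ (2*α - 5/2) := by
      rw [← Real.rpow_add hx0]; ring_nf
    rw [this]
    exact mul_le_mul_of_nonneg_right (Real.rpow_le_rpow hx0.le hx.2.le (by norm_num))
      (Real.rpow_nonneg hx0.le _)
  have calc2 : ∫ x in Ioo t t₀, x ^ (2*α - 5/2) ≤ 2 * t ^ (2*α - 3/2) := by
    have heq : ∫ x in Ioo t t₀, x ^ (2*α - 5/2)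
        = (t₀ ^ (2*α - 3/2) - t ^ (2*α - 3/2)) / (2*α - 3/2) := by
      open intervalIntegral in
      rw [← integral_Ioc_eq_integral_Ioo, ← integral_of_le htt,
        integral_rpow]
      · rw [show 2*α - 5/2 + 1 = 2*α - 3/2 by ring]
      · right
        constructor
        · intro h; rw [show 2*α - 5/2 = -1 ↔ α = 3/4 by constructor <;> (intro; linarith)] at h
          linarith
        · rw [Set.uIcc_of_le htt]
          rintro ⟨h0, -⟩; linarith
    rw [heq]
    have hden : (1:ℝ)/2 ≤ 3/2 - 2*α := by linarith
    have hnum : t₀ ^ (2*α - 3/2) - t ^ (2*α - 3/2) ≤ 0 := by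
      have := Real.rpow_le_rpow_of_nonpos ht htt (show 2*α - 3/2 ≤ 0 by linarith)
      linarith
    have : (t₀ ^ (2*α - 3/2) - t ^ (2*α - 3/2)) / (2*α - 3/2)
        = (t ^ (2*α - 3/2) - t₀ ^ (2*α - 3/2)) / (3/2 - 2*α) := by
      rw [div_eq_div_iff (by linarith) (by linarith)]; ring
    rw [this]
    have h1 : (t ^ (2*α - 3/2) - t₀ ^ (2*α - 3/2)) / (3/2 - 2*α) ≤ t ^ (2*α - 3/2) / (1/2) := by
      apply div_le_div₀ (Real.rpow_nonneg ht.le _) _ (by norm_num) hden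
      have : 0 ≤ t₀ ^ (2*α - 3/2) := Real.rpow_nonneg (by linarith) _
      linarith
    calc _ ≤ t ^ (2*α - 3/2) / (1/2) := h1
      _ = 2 * t ^ (2*α - 3/2) := by ring
  calc ∫ x in Ioo t t₀, x ^ (2*α - 2)
      ≤ ∫ x in Ioo t t₀, t₀ ^ ((1:ℝ)/2) * x ^ (2*α - 5/2) := key
    _ = t₀ ^ ((1:ℝ)/2) * ∫ x in Ioo t t₀, x ^ (2*α - 5/2) := by
        rw [integral_const_mul]
    _ ≤ t₀ ^ ((1:ℝ)/2) * (2 * t ^ (2*α - 3/2)) :=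
        mul_le_mul_of_nonneg_left calc2 (Real.rpow_nonneg ht₀.le _)

lemma lem_intOn (ht₀ : 0 < t₀) (hα : α ≤ 1/2) (f : Lp ℝ 2 (volume.restrict (Ioo (0:ℝ) t₀)))
    {s : ℝ} (hs : 0 < s) :
    IntegrableOn (fun x => f x * x ^ (α - 1)) (Ioc s t₀) volume := by
  have : IntegrableOn (fun x => f x * x ^ (α - 1)) (Ioo s t₀) volume := by
    haveI : IsFiniteMeasure (volume.restrict (Ioo s t₀)) := finmeas
    have hfi : Integrable (f : ℝ → ℝ) (volume.restrict (Ioo s t₀)) :=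
      (f_mem ht₀ f hs.le le_rfl).integrable one_le_two
    have hbd : ∀ᵐ x ∂(volume.restrict (Ioo s t₀)), ‖(x:ℝ) ^ (α - 1)‖ ≤ s ^ (α - 1) := by
      refine (ae_restrict_iff' measurableSet_Ioo).2 (Filter.Eventually.of_forall ?_)
      intro x hx
      rw [Real.norm_eq_abs, abs_of_nonneg (Real.rpow_nonneg (le_of_lt (hs.trans hx.1)) _)]
      exact Real.rpow_le_rpow_of_nonpos hs hx.1.le (by linarith)
    have := Integrable.bdd_mul hfi wmeas hbd
    exact this.congr (Filter.Eventually.of_forall fun x => mul_comm _ _)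
  exact this.congr_set_ae Ioo_ae_eq_Ioc.symm

lemma lem_CS (ht₀ : 0 < t₀) (hα : α ≤ 1/2) (f : Lp ℝ 2 (volume.restrict (Ioo (0:ℝ) t₀)))
    {a b : ℝ} (ha : 0 < a) (hb : b ≤ t₀) :
    |∫ x in Ioo a b, f x * x ^ (α - 1)| ≤
      ‖f‖ * Real.sqrt (∫ x in Ioo a b, x ^ (2*α - 2)) := by
  rcases le_or_gt b a with hba | hab
  · rw [Ioo_eq_empty (by exact fun h => absurd hba (not_le.2 h)), Measure.restrict_empty]
    simp [integral_zero_measure]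
  haveI : IsFiniteMeasure (volume.restrict (Ioo a b)) := finmeas
  set ν := volume.restrict (Ioo a b) with hν
  have hf2 : MemLp (f : ℝ → ℝ) 2 ν := f_mem ht₀ f ha.le hb
  have hw2 : MemLp (fun x : ℝ => x ^ (α - 1)) 2 ν := by
    refine MemLp.of_bound wmeas (a ^ (α - 1)) ?_
    refine (ae_restrict_iff' measurableSet_Ioo).2 (Filter.Eventually.of_forall ?_)
    intro x hx
    rw [Real.norm_eq_abs, abs_of_nonneg (Real.rpow_nonneg (le_of_lt (ha.trans hx.1)) _)]
    exact Real.rpow_le_rpow_of_nonpos ha hx.1.le (by linarith)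
  have step1 : |∫ x in Ioo a b, f x * x ^ (α - 1)|
      ≤ ∫ x, ‖(f x : ℝ)‖ * ‖(x:ℝ) ^ (α - 1)‖ ∂ν := by
    calc |∫ x in Ioo a b, f x * x ^ (α - 1)| ≤ ∫ x, ‖f x * x ^ (α - 1)‖ ∂ν := by
          rw [← Real.norm_eq_abs]; exact norm_integral_le_integral_norm _
      _ = ∫ x, ‖(f x : ℝ)‖ * ‖(x:ℝ) ^ (α - 1)‖ ∂ν := by
          congr 1; ext x; rw [norm_mul]
  have step2 : ∫ x, ‖(f x : ℝ)‖ * ‖(x:ℝ) ^ (α - 1)‖ ∂ν ≤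
      (∫ x, ‖(f x : ℝ)‖ ^ (2:ℝ) ∂ν) ^ ((1:ℝ)/2) *
      (∫ x, ‖(x:ℝ) ^ (α - 1)‖ ^ (2:ℝ) ∂ν) ^ ((1:ℝ)/2) := by
    have h2 : (ENNReal.ofReal (2:ℝ)) = 2 := by norm_num
    refine integral_mul_norm_le_Lp_mul_Lq ⟨by norm_num, by norm_num, by norm_num⟩ ?_ ?_
    · rw [h2]; exact hf2
    · rw [h2]; exact hw2
  have hfsq : Integrable (fun x => (f x : ℝ)^2) (volume.restrict (Ioo (0:ℝ) t₀)) :=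
    (Lp.memLp f).integrable_sq
  have ff1 : (∫ x, ‖(f x : ℝ)‖ ^ (2:ℝ) ∂ν) ^ ((1:ℝ)/2) ≤ ‖f‖ := by
    have h1 : ∫ x, ‖(f x : ℝ)‖ ^ (2:ℝ) ∂ν = ∫ x, (f x : ℝ)^2 ∂ν := by
      congr 1; ext x; exact norm_rpow_two _
    have h2 : ∫ x, (f x : ℝ)^2 ∂ν ≤ ∫ x, (f x : ℝ)^2 ∂(volume.restrict (Ioo (0:ℝ) t₀)) := by
      rw [hν, ← restr ht₀ ha.le hb]
      exact setIntegral_le_integral hfsq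
        (Filter.Eventually.of_forall fun x => sq_nonneg _)
    have h3 : ∫ x, (f x : ℝ)^2 ∂(volume.restrict (Ioo (0:ℝ) t₀)) = ‖f‖^2 := by
      rw [← real_inner_self_eq_norm_sq, MeasureTheory.L2.inner_def]
      congr 1; ext x; rw [RCLike.inner_apply, conj_trivial, sq]
    rw [← Real.sqrt_eq_rpow, h1]
    calc Real.sqrt (∫ x, (f x : ℝ)^2 ∂ν) ≤ Real.sqrt (‖f‖^2) := by
          apply Real.sqrt_le_sqrt; rw [← h3]; exact h2
      _ = ‖f‖ := Real.sqrt_sq (norm_nonneg f)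
  have ff2 : (∫ x, ‖(x:ℝ) ^ (α - 1)‖ ^ (2:ℝ) ∂ν) ^ ((1:ℝ)/2)
      = Real.sqrt (∫ x in Ioo a b, x ^ (2*α - 2)) := by
    rw [← Real.sqrt_eq_rpow]
    congr 1
    refine setIntegral_congr_fun measurableSet_Ioo ?_
    intro x hx
    have hx0 : 0 < x := ha.trans hx.1
    show ‖x ^ (α - 1)‖ ^ (2:ℝ) = x ^ (2*α - 2)
    rw [Real.norm_eq_abs, abs_of_nonneg (Real.rpow_nonneg hx0.le _),
      ← Real.rpow_mul hx0.le]
    congr 1; ring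
  have hnn : (0:ℝ) ≤ (∫ x, ‖(x:ℝ) ^ (α - 1)‖ ^ (2:ℝ) ∂ν) ^ ((1:ℝ)/2) := by
    rw [ff2]; exact Real.sqrt_nonneg _
  calc |∫ x in Ioo a b, f x * x ^ (α - 1)| ≤ _ := step1
    _ ≤ _ := step2
    _ ≤ ‖f‖ * (∫ x, ‖(x:ℝ) ^ (α - 1)‖ ^ (2:ℝ) ∂ν) ^ ((1:ℝ)/2) :=
        mul_le_mul_of_nonneg_right ff1 hnn
    _ = ‖f‖ * Real.sqrt (∫ x in Ioo a b, x ^ (2*α - 2)) := by rw [ff2]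

lemma sqrt_rpow_half {t e : ℝ} (ht : 0 ≤ t) : Real.sqrt (t ^ (2*e)) = t ^ e := by
  rw [show 2*e = e*2 by ring, Real.rpow_mul ht,
    show ((2:ℝ)) = ((2:ℕ):ℝ) by norm_num, Real.rpow_natCast]
  exact Real.sqrt_sq (Real.rpow_nonneg ht _)

lemma lem_boundJ (ht₀ : 0 < t₀) (hα : α ≤ 1/2) (f : Lp ℝ 2 (volume.restrict (Ioo (0:ℝ) t₀)))
    {s t : ℝ} (hs : 0 < s) (hst : s ≤ t) (ht : t ≤ t₀) :
    |∫ x in Ioo s t, f x * x ^ (α - 1)| ≤ ‖f‖ * (s ^ (α - 1) * Real.sqrt (t - s)) := by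
  calc |∫ x in Ioo s t, f x * x ^ (α - 1)|
      ≤ ‖f‖ * Real.sqrt (∫ x in Ioo s t, x ^ (2*α - 2)) := lem_CS ht₀ hα f hs ht
    _ ≤ ‖f‖ * (s ^ (α - 1) * Real.sqrt (t - s)) := by
        refine mul_le_mul_of_nonneg_left ?_ (norm_nonneg f)
        calc Real.sqrt (∫ x in Ioo s t, x ^ (2*α - 2))
            ≤ Real.sqrt (s ^ (2*α - 2) * (t - s)) :=
              Real.sqrt_le_sqrt (lem_E1 hα hs hst)
          _ = s ^ (α - 1) * Real.sqrt (t - s) := by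
              rw [Real.sqrt_mul (Real.rpow_nonneg hs.le _),
                show 2*α - 2 = 2*(α-1) by ring, sqrt_rpow_half hs.le]

lemma lem_boundI (ht₀ : 0 < t₀) (hα : α ≤ 1/2) (f : Lp ℝ 2 (volume.restrict (Ioo (0:ℝ) t₀)))
    {t : ℝ} (ht : 0 < t) (htt : t ≤ t₀) :
    |∫ x in Ioo t t₀, f x * x ^ (α - 1)| ≤
      ‖f‖ * (Real.sqrt (2 * t₀ ^ ((1:ℝ)/2)) * t ^ (α - 3/4)) := by
  calc |∫ x in Ioo t t₀, f x * x ^ (α - 1)|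
      ≤ ‖f‖ * Real.sqrt (∫ x in Ioo t t₀, x ^ (2*α - 2)) := lem_CS ht₀ hα f ht le_rfl
    _ ≤ ‖f‖ * (Real.sqrt (2 * t₀ ^ ((1:ℝ)/2)) * t ^ (α - 3/4)) := by
        refine mul_le_mul_of_nonneg_left ?_ (norm_nonneg f)
        calc Real.sqrt (∫ x in Ioo t t₀, x ^ (2*α - 2))
            ≤ Real.sqrt (t₀ ^ ((1:ℝ)/2) * (2 * t ^ (2*α - 3/2))) :=
              Real.sqrt_le_sqrt (lem_E2 ht₀ hα ht htt)
          _ = Real.sqrt (2 * t₀ ^ ((1:ℝ)/2)) * t ^ (α - 3/4) := by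
              rw [show t₀ ^ ((1:ℝ)/2) * (2 * t ^ (2*α - 3/2))
                  = (2 * t₀ ^ ((1:ℝ)/2)) * t ^ (2*α - 3/2) by ring,
                Real.sqrt_mul (by positivity),
                show 2*α - 3/2 = 2*(α - 3/4) by ring, sqrt_rpow_half ht.le]

lemma lem_split (ht₀ : 0 < t₀) (hα : α ≤ 1/2) (f : Lp ℝ 2 (volume.restrict (Ioo (0:ℝ) t₀)))
    {s t : ℝ} (hs : 0 < s) (hst : s ≤ t) (htt : t ≤ t₀) :
    ∫ x in Ioo s t₀, f x * x ^ (α - 1)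
      = (∫ x in Ioo s t, f x * x ^ (α - 1)) + ∫ x in Ioo t t₀, f x * x ^ (α - 1) := by
  have hint := lem_intOn ht₀ hα f hs
  rw [← integral_Ioc_eq_integral_Ioo, ← integral_Ioc_eq_integral_Ioo,
    ← integral_Ioc_eq_integral_Ioo, ← Ioc_union_Ioc_eq_Ioc hst htt,
    setIntegral_union (Ioc_disjoint_Ioc_of_le le_rfl) measurableSet_Ioc
      (hint.mono_set (Ioc_subset_Ioc le_rfl htt))
      (hint.mono_set (Ioc_subset_Ioc hst le_rfl))]


lemma Kfun_zero (hα : α ≤ 1/2) (f : ℝ → ℝ) : Kfun α t₀ f 0 = 0 := by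
  rw [Kfun, Real.zero_rpow (by norm_num; linarith), neg_zero, zero_mul]

lemma lem_P (ht₀ : 0 < t₀) (hα : α ≤ 1/2) (f : Lp ℝ 2 (volume.restrict (Ioo (0:ℝ) t₀)))
    {t : ℝ} (ht : 0 ≤ t) (htt : t ≤ t₀) :
    |Kfun α t₀ (f : ℝ → ℝ) t| ≤ ‖f‖ * (Real.sqrt (2 * t₀ ^ ((1:ℝ)/2)) * t ^ ((1:ℝ)/4)) := by
  rcases eq_or_lt_of_le ht with h0 | h0
  · rw [← h0, Kfun_zero hα, Real.zero_rpow (by norm_num)]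
    simp
  · have h1 : |Kfun α t₀ (f : ℝ → ℝ) t|
        = t ^ (1-α) * |∫ x in Ioo t t₀, (f : ℝ → ℝ) x * x ^ (α - 1)| := by
      rw [Kfun, abs_mul, abs_neg, abs_of_nonneg (Real.rpow_nonneg h0.le _)]
    rw [h1]
    calc t ^ (1-α) * |∫ x in Ioo t t₀, (f : ℝ → ℝ) x * x ^ (α - 1)|
        ≤ t ^ (1-α) * (‖f‖ * (Real.sqrt (2 * t₀ ^ ((1:ℝ)/2)) * t ^ (α - 3/4))) :=
          mul_le_mul_of_nonneg_left (lem_boundI ht₀ hα f h0 htt) (Real.rpow_nonneg h0.le _)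
      _ = ‖f‖ * (Real.sqrt (2 * t₀ ^ ((1:ℝ)/2)) * (t ^ (1-α) * t ^ (α - 3/4))) := by ring
      _ = ‖f‖ * (Real.sqrt (2 * t₀ ^ ((1:ℝ)/2)) * t ^ ((1:ℝ)/4)) := by
          rw [← Real.rpow_add h0]; norm_num

lemma lem_D (ht₀ : 0 < t₀) (hα : α ≤ 1/2) (f : Lp ℝ 2 (volume.restrict (Ioo (0:ℝ) t₀)))
    {s t : ℝ} (hs : 0 < s) (hst : s ≤ t) (htt : t ≤ t₀) :
    |Kfun α t₀ (f : ℝ → ℝ) t - Kfun α t₀ (f : ℝ → ℝ) s| ≤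
      ‖f‖ * (|t ^ (1-α) - s ^ (1-α)| * (Real.sqrt (2 * t₀ ^ ((1:ℝ)/2)) * t ^ (α - 3/4))
        + Real.sqrt (t - s)) := by
  set I := ∫ x in Ioo t t₀, (f : ℝ → ℝ) x * x ^ (α - 1) with hI
  set J := ∫ x in Ioo s t, (f : ℝ → ℝ) x * x ^ (α - 1) with hJ
  have hdiff : Kfun α t₀ (f : ℝ → ℝ) t - Kfun α t₀ (f : ℝ → ℝ) s
      = -((t ^ (1-α) - s ^ (1-α)) * I) + s ^ (1-α) * J := by
    rw [Kfun, Kfun, ← hI, lem_split ht₀ hα f hs hst htt, ← hI, ← hJ]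
    ring
  rw [hdiff]
  calc |-((t ^ (1-α) - s ^ (1-α)) * I) + s ^ (1-α) * J|
      ≤ |(t ^ (1-α) - s ^ (1-α)) * I| + |s ^ (1-α) * J| := by
        calc _ ≤ |(-((t ^ (1-α) - s ^ (1-α)) * I))| + |s ^ (1-α) * J| := abs_add_le _ _
          _ = _ := by rw [abs_neg]
      _ ≤ |t ^ (1-α) - s ^ (1-α)| * |I| + s ^ (1-α) * |J| := by
        rw [abs_mul, abs_mul, abs_of_nonneg (Real.rpow_nonneg hs.le _)]
      _ ≤ |t ^ (1-α) - s ^ (1-α)| * (‖f‖ * (Real.sqrt (2 * t₀ ^ ((1:ℝ)/2)) * t ^ (α - 3/4)))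
          + s ^ (1-α) * (‖f‖ * (s ^ (α - 1) * Real.sqrt (t - s))) := by
        refine add_le_add (mul_le_mul_of_nonneg_left ?_ (abs_nonneg _))
          (mul_le_mul_of_nonneg_left ?_ (Real.rpow_nonneg hs.le _))
        · exact lem_boundI ht₀ hα f (lt_of_lt_of_le hs hst) htt
        · exact lem_boundJ ht₀ hα f hs hst htt
      _ = ‖f‖ * (|t ^ (1-α) - s ^ (1-α)| * (Real.sqrt (2 * t₀ ^ ((1:ℝ)/2)) * t ^ (α - 3/4)))
          + (s ^ (1-α) * s ^ (α-1)) * (‖f‖ * Real.sqrt (t - s)) := by ring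
      _ = ‖f‖ * (|t ^ (1-α) - s ^ (1-α)| * (Real.sqrt (2 * t₀ ^ ((1:ℝ)/2)) * t ^ (α - 3/4))
          + Real.sqrt (t - s)) := by
        rw [← Real.rpow_add hs, show 1 - α + (α - 1) = 0 by ring, Real.rpow_zero]
        ring


lemma lem_UC (ht₀ : 0 < t₀) (hα : α ≤ 1/2) {ε : ℝ} (hε : 0 < ε) : ∃ δ > 0,
    ∀ (f : Lp ℝ 2 (volume.restrict (Ioo (0:ℝ) t₀))) (s t : ℝ),
      s ∈ Icc (0:ℝ) t₀ → t ∈ Icc (0:ℝ) t₀ → |t - s| ≤ δ →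
      |Kfun α t₀ (f : ℝ → ℝ) t - Kfun α t₀ (f : ℝ → ℝ) s| ≤ ε * ‖f‖ := by
  set c := Real.sqrt (2 * t₀ ^ ((1:ℝ)/2)) with hc
  have hc0 : 0 < c := Real.sqrt_pos.2 (by positivity)
  set η := min t₀ ((ε/(2*c))^(4:ℕ)) with hη
  have hη0 : 0 < η := lt_min ht₀ (by positivity)
  have key1 : 2 * c * η ^ ((1:ℝ)/4) ≤ ε := by
    have h1 : η ^ ((1:ℝ)/4) ≤ (((ε/(2*c))^(4:ℕ) : ℝ)) ^ ((1:ℝ)/4) :=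
      Real.rpow_le_rpow hη0.le (min_le_right _ _) (by norm_num)
    have h2 : (((ε/(2*c))^(4:ℕ) : ℝ)) ^ ((1:ℝ)/4) = ε/(2*c) := by
      rw [← Real.rpow_natCast (ε/(2*c)) 4, ← Real.rpow_mul (by positivity)]
      norm_num
    calc 2 * c * η ^ ((1:ℝ)/4) ≤ 2 * c * (ε/(2*c)) := by
          rw [← h2]; exact mul_le_mul_of_nonneg_left h1 (by positivity)
      _ = ε := by field_simp
  set M := c * (η/2) ^ (α - 3/4) with hM
  have hM0 : 0 < M := mul_pos hc0 (Real.rpow_pos_of_pos (by positivity) _)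
  -- uniform continuity of x ↦ x ^ (1-α) on Icc 0 t₀
  have hcont : ContinuousOn (fun x : ℝ => x ^ (1-α)) (Icc (0:ℝ) t₀) := fun x _ =>
    (Real.continuousAt_rpow_const x (1-α) (Or.inr (by linarith))).continuousWithinAt
  have huc : UniformContinuousOn (fun x : ℝ => x ^ (1-α)) (Icc (0:ℝ) t₀) :=
    isCompact_Icc.uniformContinuousOn_of_continuous hcont
  obtain ⟨δ₂, hδ₂0, hδ₂⟩ := Metric.uniformContinuousOn_iff.1 huc (ε/(2*M)) (by positivity)
  set δ := min (min (η/2) (δ₂/2)) ((ε/2)^(2:ℕ)) with hδ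
  have hδ0 : 0 < δ := lt_min (lt_min (by positivity) (by positivity)) (by positivity)
  refine ⟨δ, hδ0, ?_⟩
  have core : ∀ (f : Lp ℝ 2 (volume.restrict (Ioo (0:ℝ) t₀))) (s t : ℝ),
      s ∈ Icc (0:ℝ) t₀ → t ∈ Icc (0:ℝ) t₀ → s ≤ t → t - s ≤ δ →
      |Kfun α t₀ (f : ℝ → ℝ) t - Kfun α t₀ (f : ℝ → ℝ) s| ≤ ε * ‖f‖ := by
    intro f s t hsI htI hst hts
    rcases le_or_gt t η with hcase | hcase
    · -- both small
      have b1 := lem_P ht₀ hα f htI.1 htI.2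
      have b2 := lem_P ht₀ hα f hsI.1 hsI.2
      have h14 : t ^ ((1:ℝ)/4) ≤ η ^ ((1:ℝ)/4) :=
        Real.rpow_le_rpow htI.1 hcase (by norm_num)
      have h24 : s ^ ((1:ℝ)/4) ≤ η ^ ((1:ℝ)/4) :=
        Real.rpow_le_rpow hsI.1 (le_trans hst hcase) (by norm_num)
      calc |Kfun α t₀ (f : ℝ → ℝ) t - Kfun α t₀ (f : ℝ → ℝ) s|
          ≤ |Kfun α t₀ (f : ℝ → ℝ) t| + |Kfun α t₀ (f : ℝ → ℝ) s| := abs_sub _ _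
        _ ≤ ‖f‖ * (c * t ^ ((1:ℝ)/4)) + ‖f‖ * (c * s ^ ((1:ℝ)/4)) := add_le_add b1 b2
        _ ≤ ‖f‖ * (c * η ^ ((1:ℝ)/4)) + ‖f‖ * (c * η ^ ((1:ℝ)/4)) := by
            refine add_le_add ?_ ?_ <;>
              exact mul_le_mul_of_nonneg_left
                (mul_le_mul_of_nonneg_left (by assumption) hc0.le) (norm_nonneg f)
        _ = (2 * c * η ^ ((1:ℝ)/4)) * ‖f‖ := by ring
        _ ≤ ε * ‖f‖ := mul_le_mul_of_nonneg_right key1 (norm_nonneg f)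
    · -- t > η, so s ≥ η/2 > 0
      have hδη : δ ≤ η/2 := le_trans (min_le_left _ _) (min_le_left _ _)
      have hs2 : η/2 ≤ s := by
        have : t - s ≤ η/2 := le_trans hts hδη
        linarith
      have hs0 : 0 < s := lt_of_lt_of_le (by positivity) hs2
      have hD := lem_D ht₀ hα f hs0 hst htI.2
      have hΔ : |t ^ (1-α) - s ^ (1-α)| ≤ ε/(2*M) := by
        have hd : dist s t < δ₂ := by
          rw [Real.dist_eq]
          have h1 : |s - t| = t - s := by rw [abs_sub_comm, abs_of_nonneg (by linarith)]
          rw [h1]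
          calc t - s ≤ δ := hts
            _ ≤ δ₂/2 := le_trans (min_le_left _ _) (min_le_right _ _)
            _ < δ₂ := by linarith
        have := hδ₂ s hsI t htI hd
        rw [Real.dist_eq] at this
        rw [abs_sub_comm]
        exact this.le
      have ht34 : t ^ (α - 3/4) ≤ (η/2) ^ (α - 3/4) :=
        Real.rpow_le_rpow_of_nonpos (by positivity) (le_trans hs2 hst) (by linarith)
      have term1 : |t ^ (1-α) - s ^ (1-α)| * (c * t ^ (α - 3/4)) ≤ ε/2 := by
        calc |t ^ (1-α) - s ^ (1-α)| * (c * t ^ (α - 3/4))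
            ≤ (ε/(2*M)) * (c * (η/2) ^ (α - 3/4)) := by
              exact mul_le_mul hΔ (mul_le_mul_of_nonneg_left ht34 hc0.le)
                (mul_nonneg hc0.le (Real.rpow_nonneg htI.1 _)) (by positivity)
          _ = (ε/(2*M)) * M := by rw [hM]
          _ = ε/2 := by field_simp
      have term2 : Real.sqrt (t - s) ≤ ε/2 := by
        calc Real.sqrt (t - s) ≤ Real.sqrt ((ε/2)^(2:ℕ)) :=
              Real.sqrt_le_sqrt (le_trans hts (min_le_right _ _))
          _ = ε/2 := Real.sqrt_sq (by positivity)
      calc |Kfun α t₀ (f : ℝ → ℝ) t - Kfun α t₀ (f : ℝ → ℝ) s|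
          ≤ ‖f‖ * (|t ^ (1-α) - s ^ (1-α)| * (c * t ^ (α - 3/4)) + Real.sqrt (t - s)) := hD
        _ ≤ ‖f‖ * (ε/2 + ε/2) :=
            mul_le_mul_of_nonneg_left (add_le_add term1 term2) (norm_nonneg f)
        _ = ε * ‖f‖ := by ring
  intro f s t hsI htI hst
  rcases le_total s t with h | h
  · exact core f s t hsI htI h (le_trans (le_abs_self _) hst)
  · rw [abs_sub_comm]
    rw [abs_sub_comm] at hst
    exact core f t s htI hsI h (le_trans (le_abs_self _) hst)


lemma Kfun_cont (ht₀ : 0 < t₀) (hα : α ≤ 1/2) (f : Lp ℝ 2 (volume.restrict (Ioo (0:ℝ) t₀))) :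
    Continuous (fun t : Icc (0:ℝ) t₀ => Kfun α t₀ (f : ℝ → ℝ) t) := by
  rw [Metric.continuous_iff]
  intro b ε hε
  obtain ⟨δ, hδ0, hδ⟩ := lem_UC ht₀ hα (show (0:ℝ) < ε/(‖f‖+1) by positivity)
  refine ⟨δ, hδ0, fun a hab => ?_⟩
  have h1 : |(a:ℝ) - (b:ℝ)| ≤ δ := by
    rw [← Real.dist_eq, ← Subtype.dist_eq]; exact hab.le
  have h2 := hδ f (b:ℝ) (a:ℝ) b.2 a.2 h1
  rw [Real.dist_eq]
  calc |Kfun α t₀ (f : ℝ → ℝ) a - Kfun α t₀ (f : ℝ → ℝ) b| ≤ ε/(‖f‖+1) * ‖f‖ := h2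
    _ < ε := by
      rw [div_mul_eq_mul_div, div_lt_iff₀ (by positivity)]
      nlinarith [norm_nonneg f]

noncomputable def Kcm (ht₀ : 0 < t₀) (hα : α ≤ 1/2)
    (f : Lp ℝ 2 (volume.restrict (Ioo (0:ℝ) t₀))) : C(Icc (0:ℝ) t₀, ℝ) :=
  ⟨fun t => Kfun α t₀ (f : ℝ → ℝ) t, Kfun_cont ht₀ hα f⟩

lemma Kfun_add (ht₀ : 0 < t₀) (hα : α ≤ 1/2)
    (f g : Lp ℝ 2 (volume.restrict (Ioo (0:ℝ) t₀))) {t : ℝ} (ht : 0 ≤ t) (htt : t ≤ t₀) :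
    Kfun α t₀ ((f + g : Lp ℝ 2 (volume.restrict (Ioo (0:ℝ) t₀))) : ℝ → ℝ) t
      = Kfun α t₀ (f : ℝ → ℝ) t + Kfun α t₀ (g : ℝ → ℝ) t := by
  rcases eq_or_lt_of_le ht with h0 | h0
  · rw [← h0, Kfun_zero hα, Kfun_zero hα, Kfun_zero hα]; ring
  have hae : ∀ᵐ x ∂(volume.restrict (Ioo t t₀)),
      ((f + g : Lp ℝ 2 (volume.restrict (Ioo (0:ℝ) t₀))) : ℝ → ℝ) x = f x + g x := by
    refine (Lp.coeFn_add f g).filter_mono (ae_mono (Measure.restrict_mono ?_ le_rfl))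
    exact fun x hx => mem_Ioo.mpr ⟨lt_of_lt_of_le h0 hx.1.le, hx.2⟩
  have hIf : IntegrableOn (fun x => (f : ℝ → ℝ) x * x ^ (α - 1)) (Ioo t t₀) volume :=
    (lem_intOn ht₀ hα f h0).mono_set Ioo_subset_Ioc_self
  have hIg : IntegrableOn (fun x => (g : ℝ → ℝ) x * x ^ (α - 1)) (Ioo t t₀) volume :=
    (lem_intOn ht₀ hα g h0).mono_set Ioo_subset_Ioc_self
  have key : ∫ x in Ioo t t₀, ((f + g : Lp ℝ 2 (volume.restrict (Ioo (0:ℝ) t₀))) : ℝ → ℝ) x * x ^ (α - 1)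
      = (∫ x in Ioo t t₀, (f : ℝ → ℝ) x * x ^ (α - 1))
        + ∫ x in Ioo t t₀, (g : ℝ → ℝ) x * x ^ (α - 1) := by
    rw [← integral_add hIf hIg]
    refine integral_congr_ae (hae.mono fun x hx => ?_)
    show _ * _ = _
    rw [hx]; ring
  rw [Kfun, Kfun, Kfun, key]; ring

lemma Kfun_smul (ht₀ : 0 < t₀) (hα : α ≤ 1/2) (c : ℝ)
    (f : Lp ℝ 2 (volume.restrict (Ioo (0:ℝ) t₀))) {t : ℝ} (ht : 0 ≤ t) (htt : t ≤ t₀) :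
    Kfun α t₀ ((c • f : Lp ℝ 2 (volume.restrict (Ioo (0:ℝ) t₀))) : ℝ → ℝ) t
      = c * Kfun α t₀ (f : ℝ → ℝ) t := by
  rcases eq_or_lt_of_le ht with h0 | h0
  · rw [← h0, Kfun_zero hα, Kfun_zero hα]; ring
  have hae : ∀ᵐ x ∂(volume.restrict (Ioo t t₀)),
      ((c • f : Lp ℝ 2 (volume.restrict (Ioo (0:ℝ) t₀))) : ℝ → ℝ) x = c * f x := by
    refine (Lp.coeFn_smul c f).filter_mono (ae_mono (Measure.restrict_mono ?_ le_rfl))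
    exact fun x hx => mem_Ioo.mpr ⟨lt_of_lt_of_le h0 hx.1.le, hx.2⟩
  have key : ∫ x in Ioo t t₀, ((c • f : Lp ℝ 2 (volume.restrict (Ioo (0:ℝ) t₀))) : ℝ → ℝ) x * x ^ (α - 1)
      = c * ∫ x in Ioo t t₀, (f : ℝ → ℝ) x * x ^ (α - 1) := by
    rw [← integral_const_mul]
    refine integral_congr_ae (hae.mono fun x hx => ?_)
    show _ * _ = _
    rw [hx]; ring
  rw [Kfun, Kfun, key]; ring

noncomputable def Klin (ht₀ : 0 < t₀) (hα : α ≤ 1/2) :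
    Lp ℝ 2 (volume.restrict (Ioo (0:ℝ) t₀)) →ₗ[ℝ] C(Icc (0:ℝ) t₀, ℝ) where
  toFun := Kcm ht₀ hα
  map_add' f g := ContinuousMap.ext fun t => Kfun_add ht₀ hα f g t.2.1 t.2.2
  map_smul' c f := ContinuousMap.ext fun t => Kfun_smul ht₀ hα c f t.2.1 t.2.2


lemma Klin_apply (ht₀ : 0 < t₀) (hα : α ≤ 1/2) (f : Lp ℝ 2 (volume.restrict (Ioo (0:ℝ) t₀)))
    (t : Icc (0:ℝ) t₀) : Klin ht₀ hα f t = Kfun α t₀ (f : ℝ → ℝ) t := rfl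

lemma Klin_bound (ht₀ : 0 < t₀) (hα : α ≤ 1/2) (f : Lp ℝ 2 (volume.restrict (Ioo (0:ℝ) t₀))) :
    ‖Klin ht₀ hα f‖ ≤ (Real.sqrt (2 * t₀ ^ ((1:ℝ)/2)) * t₀ ^ ((1:ℝ)/4)) * ‖f‖ := by
  rw [ContinuousMap.norm_le _ (by positivity)]
  intro x
  rw [Klin_apply, Real.norm_eq_abs]
  calc |Kfun α t₀ (f : ℝ → ℝ) x|
      ≤ ‖f‖ * (Real.sqrt (2 * t₀ ^ ((1:ℝ)/2)) * (x:ℝ) ^ ((1:ℝ)/4)) := lem_P ht₀ hα f x.2.1 x.2.2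
    _ ≤ ‖f‖ * (Real.sqrt (2 * t₀ ^ ((1:ℝ)/2)) * t₀ ^ ((1:ℝ)/4)) := by
        refine mul_le_mul_of_nonneg_left (mul_le_mul_of_nonneg_left ?_ (Real.sqrt_nonneg _))
          (norm_nonneg f)
        exact Real.rpow_le_rpow x.2.1 x.2.2 (by norm_num)
    _ = (Real.sqrt (2 * t₀ ^ ((1:ℝ)/2)) * t₀ ^ ((1:ℝ)/4)) * ‖f‖ := by ring

noncomputable def Kop (ht₀ : 0 < t₀) (hα : α ≤ 1/2) :
    Lp ℝ 2 (volume.restrict (Ioo (0:ℝ) t₀)) →L[ℝ] C(Icc (0:ℝ) t₀, ℝ) :=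
  LinearMap.mkContinuous (Klin ht₀ hα) (Real.sqrt (2 * t₀ ^ ((1:ℝ)/2)) * t₀ ^ ((1:ℝ)/4))
    (Klin_bound ht₀ hα)

lemma Kop_compact (ht₀ : 0 < t₀) (hα : α ≤ 1/2) : IsCompactOperator (Kop ht₀ hα) := by
  set C := Real.sqrt (2 * t₀ ^ ((1:ℝ)/2)) * t₀ ^ ((1:ℝ)/4) with hC
  have hC0 : 0 ≤ C := by positivity
  set e := ContinuousMap.isometryEquivBoundedOfCompact (Icc (0:ℝ) t₀) ℝ with he
  set A := (fun f => e ((Kop ht₀ hα) f)) '' Metric.closedBall 0 1 with hA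
  -- bound on members of A
  have hmem : ∀ (g : BoundedContinuousFunction (Icc (0:ℝ) t₀) ℝ) (x : Icc (0:ℝ) t₀),
      g ∈ A → g x ∈ Icc (-C) C := by
    rintro g x ⟨f, hf, rfl⟩
    have hf1 : ‖f‖ ≤ 1 := by
      simpa [Metric.mem_closedBall, dist_zero_right] using hf
    have h1 : |Kfun α t₀ (f : ℝ → ℝ) x| ≤ C := by
      calc |Kfun α t₀ (f : ℝ → ℝ) x|
          ≤ ‖f‖ * (Real.sqrt (2 * t₀ ^ ((1:ℝ)/2)) * (x:ℝ) ^ ((1:ℝ)/4)) :=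
            lem_P ht₀ hα f x.2.1 x.2.2
        _ ≤ 1 * (Real.sqrt (2 * t₀ ^ ((1:ℝ)/2)) * t₀ ^ ((1:ℝ)/4)) := by
            refine mul_le_mul hf1 (mul_le_mul_of_nonneg_left ?_ (Real.sqrt_nonneg _))
              (mul_nonneg (Real.sqrt_nonneg _) (Real.rpow_nonneg x.2.1 _)) one_pos.le
            exact Real.rpow_le_rpow x.2.1 x.2.2 (by norm_num)
        _ = C := by rw [hC]; ring
    have hgx : e ((Kop ht₀ hα) f) x = Kfun α t₀ (f : ℝ → ℝ) x := by
      simp only [he, Kop, LinearMap.mkContinuous_apply,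
        ContinuousMap.isometryEquivBoundedOfCompact]
      exact Klin_apply ht₀ hα f x
    rw [hgx]
    exact abs_le.1 h1
  have hequi : Equicontinuous ((↑) : A → Icc (0:ℝ) t₀ → ℝ) := by
    refine UniformEquicontinuous.equicontinuous ?_
    rw [Metric.uniformEquicontinuous_iff]
    intro ε hε
    obtain ⟨δ, hδ0, hδ⟩ := lem_UC ht₀ hα (show (0:ℝ) < ε/2 by positivity)
    refine ⟨δ, hδ0, fun x y hxy i => ?_⟩
    obtain ⟨g, hgA⟩ := i
    obtain ⟨f, hf, rfl⟩ := hgA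
    have hf1 : ‖f‖ ≤ 1 := by
      simpa [Metric.mem_closedBall, dist_zero_right] using hf
    have hgx : ∀ z : Icc (0:ℝ) t₀, e ((Kop ht₀ hα) f) z = Kfun α t₀ (f : ℝ → ℝ) z := by
      intro z
      simp only [he, Kop, LinearMap.mkContinuous_apply,
        ContinuousMap.isometryEquivBoundedOfCompact]
      exact Klin_apply ht₀ hα f z
    show dist (e ((Kop ht₀ hα) f) x) (e ((Kop ht₀ hα) f) y) < ε
    rw [hgx, hgx, Real.dist_eq]
    have hd : |(y:ℝ) - (x:ℝ)| ≤ δ := by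
      rw [← Real.dist_eq, ← Subtype.dist_eq, dist_comm]
      exact hxy.le
    calc |Kfun α t₀ (f : ℝ → ℝ) x - Kfun α t₀ (f : ℝ → ℝ) y|
        ≤ ε/2 * ‖f‖ := by
          rw [abs_sub_comm]
          exact hδ f (x:ℝ) (y:ℝ) x.2 y.2 hd
      _ ≤ ε/2 * 1 := mul_le_mul_of_nonneg_left hf1 (by positivity)
      _ < ε := by linarith
  have hAcomp : IsCompact (closure A) :=
    BoundedContinuousFunction.arzela_ascoli (Icc (-C) C) isCompact_Icc A hmem hequi
  rw [isCompactOperator_iff_exists_mem_nhds_isCompact_closure_image]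
  refine ⟨Metric.closedBall 0 1, Metric.closedBall_mem_nhds 0 one_pos, ?_⟩
  have himg : (Kop ht₀ hα) '' Metric.closedBall 0 1 = e.symm '' A := by
    rw [hA, ← Set.image_comp]
    refine (Set.image_congr fun f _ => ?_).symm
    simp
  rw [himg]
  have h3 := hAcomp.image e.toHomeomorph.symm.continuous
  rw [Homeomorph.image_closure] at h3
  exact h3


end Stmt6Aux

open Stmt6Aux in
/-- For `t₀ > 0` and `α ≤ 1/2`, the map `(Kf)(t) = -t^{1-α} ∫ₜ^{t₀} f(x) x^{α-1} dx`
(`(Kf)(0) = 0`) is a well-defined bounded linear operator `L²((0,t₀)) → C⁰([0,t₀])`,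
and `K` is a compact operator. -/
theorem stmt_6 (t₀ : ℝ) (ht₀ : 0 < t₀) (α : ℝ) (hα : α ≤ 1/2) :
    ∃ K : Lp ℝ 2 (volume.restrict (Ioo (0:ℝ) t₀)) →L[ℝ] C(Icc (0:ℝ) t₀, ℝ),
      IsCompactOperator K ∧
      ∀ f : Lp ℝ 2 (volume.restrict (Ioo (0:ℝ) t₀)),
        (∀ t ∈ Ioc (0:ℝ) t₀, IntegrableOn (fun x => f x * x ^ (α - 1)) (Ioo t t₀)) ∧
        K f ⟨0, left_mem_Icc.mpr ht₀.le⟩ = 0 ∧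
        ∀ t (ht : t ∈ Ioc (0:ℝ) t₀),
          K f ⟨t, Ioc_subset_Icc_self ht⟩ =
            -(t ^ (1 - α)) * ∫ x in Ioo t t₀, f x * x ^ (α - 1) := by
  refine ⟨Kop ht₀ hα, Kop_compact ht₀ hα, fun f => ⟨?_, ?_, ?_⟩⟩
  · intro t ht
    exact (lem_intOn ht₀ hα f ht.1).mono_set Ioo_subset_Ioc_self
  · show Kfun α t₀ (f : ℝ → ℝ) 0 = 0
    exact Kfun_zero hα _
  · intro t ht
    rfl
end

section
/- Suppose k ≥ 1, n ≠ 0 and a > 0. Let v : (0,∞) → ℂ² be continuous, differentiable on (0,1) and on (1,∞), and satisfy the linear ODE v′(r) = (1/r)·A·v(r) for all r ∈ (0,1) and v′(r) = B·v(r) for all r ∈ (1,∞). If ∫₀^∞ r²‖v(r)‖² dr < ∞, then v is identically zero. -/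
open MeasureTheory Set Topology Filter

lemma const_of_deriv_Ico {q : ℝ → ℂ} {x y : ℝ} (hxy : x ≤ y)
    (hc : ContinuousOn q (Icc x y))
    (hd : ∀ t ∈ Ico x y, HasDerivAt q 0 t) : q y = q x :=
  constant_of_has_deriv_right_zero hc (fun t ht => (hd t ht).hasDerivWithinAt) y
    (right_mem_Icc.2 hxy)

lemma const_of_deriv_Ioc {q : ℝ → ℂ} {x y : ℝ} (hxy : x ≤ y)
    (hc : ContinuousOn q (Icc x y))
    (hd : ∀ t ∈ Ioc x y, HasDerivAt q 0 t) : q y = q x := by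
  rcases eq_or_lt_of_le hxy with h | h
  · rw [h]
  have hconst : ∀ t ∈ Ioc x y, q t = q y := by
    intro t ht
    exact (const_of_deriv_Ico ht.2 (hc.mono (Icc_subset_Icc (le_of_lt ht.1) le_rfl))
      (fun s hs => hd s ⟨lt_of_lt_of_le ht.1 hs.1, hs.2.le⟩)).symm
  have hcw : ContinuousWithinAt q (Ioc x y) x :=
    ((hc x (left_mem_Icc.2 hxy)).mono Ioc_subset_Icc_self)
  have hne : (𝓝[Ioc x y] x).NeBot := by
    rw [nhdsWithin_Ioc_eq_nhdsGT h]
    exact nhdsGT_neBot x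
  have : Filter.Tendsto q (𝓝[Ioc x y] x) (𝓝 (q y)) := by
    refine Filter.Tendsto.congr' ?_ tendsto_const_nhds
    filter_upwards [self_mem_nhdsWithin] with t ht using (hconst t ht).symm
  exact (tendsto_nhds_unique (ContinuousWithinAt.tendsto hcw) this).symm

lemma aux_pow (lam : ℝ) (p : ℝ → ℂ) (hc : ContinuousOn p (Ioi 0))
    (hd : ∀ r ∈ Ioo (0:ℝ) 1, HasDerivAt p ((lam : ℂ) * p r / (r : ℂ)) r) :
    ∀ r ∈ Ioc (0:ℝ) 1, p r = ((r ^ lam : ℝ) : ℂ) * p 1 := by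
  intro r hr
  obtain ⟨hr0, hr1⟩ := hr
  set q : ℝ → ℂ := fun t => ((t ^ (-lam) : ℝ) : ℂ) * p t with hq
  have hkey : q 1 = q r := by
    apply const_of_deriv_Ico hr1
    · apply ContinuousOn.mul
      · exact Complex.continuous_ofReal.comp_continuousOn
          (ContinuousOn.rpow_const continuousOn_id
            (fun t ht => Or.inl (ne_of_gt (lt_of_lt_of_le hr0 ht.1))))
      · exact hc.mono (fun t ht => lt_of_lt_of_le hr0 ht.1)
    · intro t ht
      have ht0 : (0:ℝ) < t := lt_of_lt_of_le hr0 ht.1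
      have ht0' : (t:ℝ) ≠ 0 := ne_of_gt ht0
      have h1 : HasDerivAt (fun t : ℝ => (t ^ (-lam) : ℝ)) (-lam * t ^ (-lam - 1)) t :=
        Real.hasDerivAt_rpow_const (Or.inl ht0')
      have h1' : HasDerivAt (fun t : ℝ => ((t ^ (-lam) : ℝ) : ℂ))
          ((-lam * t ^ (-lam - 1) : ℝ) : ℂ) t := h1.ofReal_comp
      have h2 := hd t ⟨ht0, ht.2⟩
      have := h1'.mul h2
      refine HasDerivAt.congr_deriv this ?_
      have hsub : (t:ℝ) ^ (-lam - 1) = t ^ (-lam) / t := by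
        rw [← Real.rpow_sub_one ht0']
      rw [hsub]
      push_cast
      field_simp
      ring
  have h1q : q 1 = p 1 := by simp [hq]
  have hpr : p 1 = ((r ^ (-lam) : ℝ) : ℂ) * p r := by rw [← h1q, hkey]
  rw [hpr, ← mul_assoc, ← Complex.ofReal_mul,
    show (r:ℝ) ^ lam * r ^ (-lam) = 1 from by rw [← Real.rpow_add hr0]; simp]
  simp

lemma aux_exp (b : ℝ) (p : ℝ → ℂ) (hc : ContinuousOn p (Ici 1))
    (hd : ∀ r ∈ Ioi (1:ℝ), HasDerivAt p ((b : ℂ) * p r) r) :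
    ∀ r ∈ Ici (1:ℝ), Complex.exp (-(b:ℂ) * r) * p r = Complex.exp (-(b:ℂ)) * p 1 := by
  intro r hr
  set q : ℝ → ℂ := fun t => Complex.exp (-(b:ℂ) * t) * p t with hq
  have hkey : q r = q 1 := by
    apply const_of_deriv_Ioc hr
    · apply ContinuousOn.mul
      · exact (Complex.continuous_exp.comp
          ((continuous_const.mul Complex.continuous_ofReal))).continuousOn
      · exact hc.mono (fun t ht => ht.1)
    · intro t ht
      have hexp : HasDerivAt (fun t : ℝ => Complex.exp (-(b:ℂ) * t))
          (Complex.exp (-(b:ℂ) * t) * (-(b:ℂ))) t := by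
        have h0 : HasDerivAt (fun z : ℂ => Complex.exp (-(b:ℂ) * z))
            (Complex.exp (-(b:ℂ) * t) * (-(b:ℂ))) (t : ℂ) := by
          simpa using ((hasDerivAt_id (t:ℂ)).const_mul (-(b:ℂ))).cexp
        exact h0.comp_ofReal
      have h2 := hd t ht.1
      have := hexp.mul h2
      refine HasDerivAt.congr_deriv this ?_
      ring
  have : Complex.exp (-(b:ℂ) * r) * p r = Complex.exp (-(b:ℂ) * (1:ℝ)) * p 1 := hkey
  simpa using this

lemma eigen_comb (k n lam : ℝ) (hlam : (lam + (2+k)/2) * (lam + (2-k)/2) = n^2)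
    (x y r : ℂ) (hr : r ≠ 0) :
    (-(Complex.I * (n:ℂ))) * ((-(2 + (k:ℂ))/2 * x + Complex.I * (n:ℂ) * y) / r)
      + ((lam:ℂ) + (2+(k:ℂ))/2) * ((-(Complex.I * (n:ℂ)) * x - (2 - (k:ℂ))/2 * y) / r)
    = (lam:ℂ) * ((-(Complex.I * (n:ℂ))) * x + ((lam:ℂ) + (2+(k:ℂ))/2) * y) / r := by
  have hc : ((lam:ℂ) + (2+(k:ℂ))/2) * ((lam:ℂ) + (2-(k:ℂ))/2) = (n:ℂ)^2 := by
    exact_mod_cast congrArg (Complex.ofReal) hlam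
  have hI2 : (Complex.I)^2 = -1 := Complex.I_sq
  linear_combination (-(y/r)) * hc + (-(n:ℂ)^2*y/r) * hI2

set_option maxHeartbeats 1000000 in
/-- Radial model of the Dirac operator of a flat Dirac monopole of weight `k ≥ 1`
with constant imaginary mass `a > 0`: a continuous `v : (0,∞) → ℂ²` solving
`v' = (1/r) A v` on `(0,1)` and `v' = B v` on `(1,∞)` (where `A` has rows
`(-(2+k)/2, i n)`, `(-i n, -(2-k)/2)` and `B = diag(a, -a)`) which is `L²` for the
measure `r² dr` vanishes identically. -/
theorem stmt_7 (k n a : ℝ) (hk : 1 ≤ k) (hn : n ≠ 0) (ha : 0 < a)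
    (v : ℝ → ℂ × ℂ) (hcont : ContinuousOn v (Ioi 0))
    (hode1 : ∀ r ∈ Ioo (0:ℝ) 1,
      HasDerivAt v
        (((-(2 + (k:ℂ))/2 * (v r).1 + Complex.I * (n:ℂ) * (v r).2) / (r:ℂ),
          (-(Complex.I * (n:ℂ)) * (v r).1 - (2 - (k:ℂ))/2 * (v r).2) / (r:ℂ))) r)
    (hode2 : ∀ r ∈ Ioi (1:ℝ),
      HasDerivAt v (((a:ℂ) * (v r).1, -(a:ℂ) * (v r).2)) r)
    (hL2 : ∫⁻ r in Ioi (0:ℝ),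
        ENNReal.ofReal (r^2 * (‖(v r).1‖^2 + ‖(v r).2‖^2)) < ⊤) :
    ∀ r ∈ Ioi (0:ℝ), v r = 0 := by
  set v1 : ℝ → ℂ := fun r => (v r).1 with hv1def
  set v2 : ℝ → ℂ := fun r => (v r).2 with hv2def
  have hc1 : ContinuousOn v1 (Ioi 0) := continuous_fst.comp_continuousOn hcont
  have hc2 : ContinuousOn v2 (Ioi 0) := continuous_snd.comp_continuousOn hcont
  have hIci : (Ici (1:ℝ)) ⊆ Ioi 0 := fun t ht => show (0:ℝ) < t from lt_of_lt_of_le one_pos ht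
  -- derivative of the components on (1, ∞)
  have hd1 : ∀ r ∈ Ioi (1:ℝ), HasDerivAt v1 ((a:ℂ) * v1 r) r := by
    intro r hr
    have := HasFDerivAt.comp_hasDerivAt (𝕜 := ℝ) r
      ((ContinuousLinearMap.fst ℝ ℂ ℂ).hasFDerivAt (x := v r)) (hode2 r hr)
    simp at this; exact this
  have hd2 : ∀ r ∈ Ioi (1:ℝ), HasDerivAt v2 (((-a : ℝ):ℂ) * v2 r) r := by
    intro r hr
    have := HasFDerivAt.comp_hasDerivAt (𝕜 := ℝ) r
      ((ContinuousLinearMap.snd ℝ ℂ ℂ).hasFDerivAt (x := v r)) (hode2 r hr)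
    push_cast
    simp at this
    refine HasDerivAt.congr_deriv this ?_
    simp only [hv2def]; ring
  have hA := aux_exp a v1 (hc1.mono hIci) hd1
  have hB := aux_exp (-a) v2 (hc2.mono hIci) hd2
  -- the constant for v1 on (1,∞) must vanish
  have hczero : Complex.exp (-(a:ℂ)) * v1 1 = 0 := by
    by_contra hc0
    set c : ℂ := Complex.exp (-(a:ℂ)) * v1 1 with hcdef
    have hnorm : ∀ r ∈ Ioi (1:ℝ),
        ENNReal.ofReal (‖c‖^2) ≤ ENNReal.ofReal (r^2 * (‖v1 r‖^2 + ‖v2 r‖^2)) := by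
      intro r hr
      have hr1 : (1:ℝ) ≤ r := le_of_lt hr
      have h1 : c = Complex.exp (-(a:ℂ) * r) * v1 r := (hA r hr1).symm
      have h2 : ‖c‖ = Real.exp (-(a*r)) * ‖v1 r‖ := by
        rw [h1, norm_mul, Complex.norm_exp]
        norm_num
      have hexple : Real.exp (-(a*r)) ≤ 1 := by
        apply Real.exp_le_one_iff.2
        nlinarith
      have hexpnn : (0:ℝ) ≤ Real.exp (-(a*r)) := (Real.exp_pos _).le
      apply ENNReal.ofReal_le_ofReal
      have hvnn : (0:ℝ) ≤ ‖v1 r‖ := norm_nonneg _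
      have hE2 : (Real.exp (-(a*r)))^2 ≤ 1 := by nlinarith
      have e1 : ‖c‖^2 ≤ ‖v1 r‖^2 := by
        rw [h2, mul_pow]
        exact mul_le_of_le_one_left (sq_nonneg _) hE2
      have hr2 : (1:ℝ) ≤ r^2 := by nlinarith
      have e3 : ‖v1 r‖^2 ≤ r^2 * ‖v1 r‖^2 := le_mul_of_one_le_left (sq_nonneg _) hr2
      nlinarith [sq_nonneg (‖v2 r‖), sq_nonneg r]
    have hfin : ∫⁻ r in Ioi (1:ℝ), ENNReal.ofReal (‖c‖^2) < ⊤ := by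
      calc ∫⁻ r in Ioi (1:ℝ), ENNReal.ofReal (‖c‖^2)
          ≤ ∫⁻ r in Ioi (1:ℝ), ENNReal.ofReal (r^2 * (‖v1 r‖^2 + ‖v2 r‖^2)) := by
            apply lintegral_mono_ae
            rw [ae_restrict_iff' measurableSet_Ioi]
            exact Filter.Eventually.of_forall hnorm
        _ ≤ ∫⁻ r in Ioi (0:ℝ), ENNReal.ofReal (r^2 * (‖v1 r‖^2 + ‖v2 r‖^2)) :=
            lintegral_mono_set (Ioi_subset_Ioi zero_le_one)
        _ < ⊤ := hL2
    rw [setLIntegral_const, Real.volume_Ioi, ENNReal.mul_top] at hfin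
    · exact (lt_irrefl _ hfin).elim
    · exact (ENNReal.ofReal_pos.2 (pow_pos (norm_pos_iff.2 hc0) 2)).ne'
  have hv11 : v1 1 = 0 :=
    (mul_eq_zero.1 hczero).resolve_left (Complex.exp_ne_zero _)
  have hv1z : ∀ r ∈ Ici (1:ℝ), v1 r = 0 := by
    intro r hr
    have := hA r hr
    rw [hv11, mul_zero] at this
    exact (mul_eq_zero.1 this).resolve_left (Complex.exp_ne_zero _)
  -- interior part
  set μ : ℝ := Real.sqrt (k^2/4 + n^2) with hμdef
  have hμ2 : μ^2 = k^2/4 + n^2 := Real.sq_sqrt (by positivity)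
  have hμnn : 0 ≤ μ := Real.sqrt_nonneg _
  have hμk : k/2 < μ := by nlinarith [sq_abs n, abs_pos.2 hn]
  have hk0 : (0:ℝ) < k := lt_of_lt_of_le one_pos hk
  set P : ℝ → ℝ → ℂ := fun lam r =>
    (-(Complex.I * (n:ℂ))) * v1 r + ((lam:ℂ) + (2+(k:ℂ))/2) * v2 r with hPdef
  have key : ∀ lam : ℝ, (lam + (2+k)/2) * (lam + (2-k)/2) = n^2 →
      ∀ r ∈ Ioc (0:ℝ) 1, P lam r = ((r ^ lam : ℝ) : ℂ) * P lam 1 := by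
    intro lam hlam
    apply aux_pow lam (P lam)
    · exact ((continuousOn_const).mul hc1).add ((continuousOn_const).mul hc2)
    · intro r hr
      have hrne : (r:ℂ) ≠ 0 := by
        exact_mod_cast ne_of_gt hr.1
      have h1 : HasDerivAt v1
          ((-(2 + (k:ℂ))/2 * v1 r + Complex.I * (n:ℂ) * v2 r) / (r:ℂ)) r := by
        have := HasFDerivAt.comp_hasDerivAt (𝕜 := ℝ) r
          ((ContinuousLinearMap.fst ℝ ℂ ℂ).hasFDerivAt (x := v r)) (hode1 r hr)
        simp at this
        refine HasDerivAt.congr_deriv this ?_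
        simp only [hv1def, hv2def]; ring
      have h2 : HasDerivAt v2
          ((-(Complex.I * (n:ℂ)) * v1 r - (2 - (k:ℂ))/2 * v2 r) / (r:ℂ)) r := by
        have := HasFDerivAt.comp_hasDerivAt (𝕜 := ℝ) r
          ((ContinuousLinearMap.snd ℝ ℂ ℂ).hasFDerivAt (x := v r)) (hode1 r hr)
        simp at this
        refine HasDerivAt.congr_deriv this ?_
        simp only [hv1def, hv2def]; ring
      have hcomb := (h1.const_mul (-(Complex.I * (n:ℂ)))).add
        (h2.const_mul ((lam:ℂ) + (2+(k:ℂ))/2))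
      have heq := eigen_comb k n lam hlam (v1 r) (v2 r) (r:ℂ) hrne
      rw [← heq]
      exact hcomb
  have hlamm : ((-1 - μ) + (2+k)/2) * ((-1 - μ) + (2-k)/2) = n^2 := by nlinarith
  have hlamp : ((-1 + μ) + (2+k)/2) * ((-1 + μ) + (2-k)/2) = n^2 := by nlinarith
  have keym := key (-1 - μ) hlamm
  have keyp := key (-1 + μ) hlamp
  -- the coefficient of the decaying lambda must vanish
  have hCm : P (-1 - μ) 1 = 0 := by
    by_contra hC0
    set C : ℂ := P (-1 - μ) 1 with hCdef
    set M : ℝ := n^2 + ((-1 - μ) + (2+k)/2)^2 with hMdef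
    have hCpos : 0 < ‖C‖^2 := pow_pos (norm_pos_iff.2 hC0) 2
    have hMnn : (0:ℝ) ≤ M := by positivity
    -- pointwise bound
    have hbound : ∀ r ∈ Ioo (0:ℝ) 1,
        r ^ (2 + 2*(-1 - μ)) * ‖C‖^2 ≤ M * (r^2 * (‖v1 r‖^2 + ‖v2 r‖^2)) := by
      intro r hr
      have hr0 : (0:ℝ) < r := hr.1
      have hP := keym r ⟨hr.1, hr.2.le⟩
      have hPn : ‖P (-1 - μ) r‖^2 = (r ^ (-1 - μ))^2 * ‖C‖^2 := by
        rw [hP, norm_mul, mul_pow, Complex.norm_real, Real.norm_eq_abs,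
          abs_of_pos (Real.rpow_pos_of_pos hr0 _)]
      have hrpow : r ^ (2 + 2*(-1 - μ)) = r^2 * (r ^ (-1 - μ))^2 := by
        rw [show (2 + 2*(-1 - μ)) = 2 + ((-1-μ) + (-1-μ)) by ring,
          Real.rpow_add hr0, Real.rpow_add hr0, Real.rpow_two]
        norm_num [sq]
      have hPb : ‖P (-1 - μ) r‖^2 ≤ M * (‖v1 r‖^2 + ‖v2 r‖^2) := by
        have htri : ‖P (-1 - μ) r‖ ≤ |n| * ‖v1 r‖ + |(-1 - μ) + (2+k)/2| * ‖v2 r‖ := by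
          refine (norm_add_le _ _).trans ?_
          apply add_le_add
          · rw [norm_mul, norm_neg, norm_mul, Complex.norm_I, one_mul, Complex.norm_real,
              Real.norm_eq_abs]
          · rw [norm_mul]
            apply mul_le_mul_of_nonneg_right _ (norm_nonneg _)
            have : ((-1 - μ : ℝ) + (2+k)/2 : ℂ) = (((-1 - μ) + (2+k)/2 : ℝ) : ℂ) := by
              push_cast; ring
            rw [this, Complex.norm_real, Real.norm_eq_abs]
        rw [hMdef]
        nlinarith [norm_nonneg (P (-1-μ) r), norm_nonneg (v1 r), norm_nonneg (v2 r),
          abs_nonneg n, abs_nonneg ((-1 - μ) + (2+k)/2), sq_abs n,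
          sq_abs ((-1 - μ) + (2+k)/2),
          sq_nonneg (|n| * ‖v2 r‖ - |(-1 - μ) + (2+k)/2| * ‖v1 r‖)]
      calc r ^ (2 + 2*(-1 - μ)) * ‖C‖^2 = r^2 * ‖P (-1 - μ) r‖^2 := by
            rw [hrpow, hPn]; ring
        _ ≤ M * (r^2 * (‖v1 r‖^2 + ‖v2 r‖^2)) := by nlinarith [sq_nonneg r]
    -- integrability of the rpow
    have hint : IntegrableOn (fun r : ℝ => r ^ (2 + 2*(-1 - μ))) (Ioo (0:ℝ) 1) := by
      constructor
      · exact ((ContinuousOn.rpow_const continuousOn_id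
          (fun t ht => Or.inl (ne_of_gt ht.1))).aestronglyMeasurable measurableSet_Ioo)
      · rw [hasFiniteIntegral_iff_ofReal]
        · calc ∫⁻ r in Ioo (0:ℝ) 1, ENNReal.ofReal (r ^ (2 + 2*(-1 - μ)))
              ≤ ∫⁻ r in Ioo (0:ℝ) 1,
                  ENNReal.ofReal (M / ‖C‖^2 * (r^2 * (‖v1 r‖^2 + ‖v2 r‖^2))) := by
                apply lintegral_mono_ae
                rw [ae_restrict_iff' measurableSet_Ioo]
                apply Filter.Eventually.of_forall
                intro r hr
                apply ENNReal.ofReal_le_ofReal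
                rw [div_mul_eq_mul_div, le_div_iff₀ hCpos]
                exact hbound r hr
            _ = ENNReal.ofReal (M / ‖C‖^2) *
                  ∫⁻ r in Ioo (0:ℝ) 1, ENNReal.ofReal (r^2 * (‖v1 r‖^2 + ‖v2 r‖^2)) := by
                rw [← lintegral_const_mul' _ _ ENNReal.ofReal_ne_top]
                congr 1 with r
                rw [← ENNReal.ofReal_mul (by positivity)]
            _ ≤ ENNReal.ofReal (M / ‖C‖^2) *
                  ∫⁻ r in Ioi (0:ℝ), ENNReal.ofReal (r^2 * (‖v1 r‖^2 + ‖v2 r‖^2)) := by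
                apply mul_le_mul_right
                exact lintegral_mono_set Ioo_subset_Ioi_self
            _ < ⊤ := ENNReal.mul_lt_top ENNReal.ofReal_lt_top hL2
        · filter_upwards [ae_restrict_mem measurableSet_Ioo] with r hr
          exact Real.rpow_nonneg hr.1.le _
    rw [intervalIntegral.integrableOn_Ioo_rpow_iff zero_lt_one] at hint
    have : (1:ℝ)/2 ≤ k/2 := by linarith
    linarith
  -- deduce v2 1 = 0
  have hv21 : v2 1 = 0 := by
    have e := hCm
    simp only [hPdef] at e
    rw [hv1z 1 self_mem_Ici, mul_zero, zero_add] at e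
    have hcoef : (((-1 - μ : ℝ)) : ℂ) + (2 + (k:ℂ))/2 ≠ 0 := by
      have : (((-1 - μ : ℝ)) : ℂ) + (2 + (k:ℂ))/2 = (((-1 - μ) + (2+k)/2 : ℝ) : ℂ) := by
        push_cast; ring
      rw [this, Complex.ofReal_ne_zero]
      intro h
      have : μ = k/2 := by linarith
      linarith
    exact (mul_eq_zero.1 e).resolve_left hcoef
  have hPp1 : P (-1 + μ) 1 = 0 := by
    simp only [hPdef]
    rw [hv1z 1 self_mem_Ici, hv21, mul_zero, mul_zero, add_zero]
  -- conclude v = 0 on (0,1]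
  have hIoc : ∀ r ∈ Ioc (0:ℝ) 1, v1 r = 0 ∧ v2 r = 0 := by
    intro r hr
    have h1 := keym r hr
    have h2 := keyp r hr
    rw [hCm, mul_zero] at h1
    rw [hPp1, mul_zero] at h2
    have hsub : ((2*μ : ℝ) : ℂ) * v2 r = 0 := by
      have := sub_eq_zero.2 (h2.trans h1.symm)
      simp only [hPdef] at this ⊢
      push_cast at this ⊢
      linear_combination this
    have hμne : ((2*μ : ℝ) : ℂ) ≠ 0 := by
      rw [Complex.ofReal_ne_zero]
      nlinarith
    have hv2r : v2 r = 0 := (mul_eq_zero.1 hsub).resolve_left hμne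
    have hv1r : v1 r = 0 := by
      have h3 : (-(Complex.I * (n:ℂ))) * v1 r = 0 := by
        simpa [hPdef, hv2r] using h2
      have hne : (-(Complex.I * (n:ℂ))) ≠ 0 := by
        simp [Complex.I_ne_zero, Complex.ofReal_ne_zero, hn]
      exact (mul_eq_zero.1 h3).resolve_left hne
    exact ⟨hv1r, hv2r⟩
  -- v2 on [1, ∞)
  have hv2z : ∀ r ∈ Ici (1:ℝ), v2 r = 0 := by
    intro r hr
    have := hB r hr
    rw [hv21, mul_zero] at this
    have hne : Complex.exp (-((-a : ℝ):ℂ) * r) ≠ 0 := Complex.exp_ne_zero _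
    exact (mul_eq_zero.1 this).resolve_left hne
  -- final
  intro r hr
  have h12 : v1 r = 0 ∧ v2 r = 0 := by
    rcases le_or_gt r 1 with h | h
    · exact hIoc r ⟨hr, h⟩
    · exact ⟨hv1z r h.le, hv2z r h.le⟩
  have : v r = (v1 r, v2 r) := rfl
  rw [this, h12.1, h12.2]
  rfl
end

section
/- Suppose k ≥ 1, n ≠ 0 and a > 0. Let w : (0,∞) → ℂ² be continuous, differentiable on (0,1) and on (1,∞), and satisfy the adjoint ODE w′(r) = −(2/r)·w(r) − (1/r)·A·w(r) for all r ∈ (0,1) and w′(r) = −(2/r)·w(r) − B·w(r) for all r ∈ (1,∞). If ∫₀^∞ r²‖w(r)‖² dr < ∞, then w is identically zero. -/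
open MeasureTheory Set

lemma myConstOn {S : Set ℝ} (hS : S.OrdConnected) {φ : ℝ → ℂ}
    (hc : ContinuousOn φ S) (hd : ∀ r ∈ S, HasDerivAt φ 0 r) :
    ∀ r ∈ S, ∀ s ∈ S, φ r = φ s := by
  have key : ∀ r ∈ S, ∀ s ∈ S, r ≤ s → φ s = φ r := by
    intro r hr s hs hrs
    have hsub : Icc r s ⊆ S := hS.out hr hs
    exact constant_of_has_deriv_right_zero (hc.mono hsub)
      (fun x hx => (hd x (hsub ⟨hx.1, hx.2.le⟩)).hasDerivWithinAt) s ⟨hrs, le_rfl⟩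
  intro r hr s hs
  rcases le_total r s with h | h
  · exact (key r hr s hs h).symm
  · exact key s hs r hr h

lemma myEndpoint {φ : ℝ → ℂ} {S : Set ℝ} {b : ℝ} {V : ℂ}
    (hb : b ∈ closure S) (hc : ContinuousWithinAt φ S b)
    (h : ∀ r ∈ S, φ r = V) : φ b = V := by
  haveI := mem_closure_iff_nhdsWithin_neBot.1 hb
  refine tendsto_nhds_unique hc (Filter.Tendsto.congr' ?_ tendsto_const_nhds)
  exact Filter.eventuallyEq_of_mem self_mem_nhdsWithin (fun r hr => (h r hr).symm)

lemma myRpowTop {p : ℝ} (hp : p ≤ -1) :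
    ∫⁻ r in Ioo (0:ℝ) 1, ENNReal.ofReal (r ^ p) = ⊤ := by
  by_contra h
  have hmeas : AEStronglyMeasurable (fun r : ℝ => r ^ p) (volume.restrict (Ioo 0 1)) := by
    apply ContinuousOn.aestronglyMeasurable _ measurableSet_Ioo
    exact fun x hx => (Real.continuousAt_rpow_const x p (Or.inl hx.1.ne')).continuousWithinAt
  have hpos : 0 ≤ᵐ[volume.restrict (Ioo (0:ℝ) 1)] fun r : ℝ => r ^ p := by
    filter_upwards [ae_restrict_mem measurableSet_Ioo] with x hx
    exact Real.rpow_nonneg hx.1.le p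
  have : IntegrableOn (fun r : ℝ => r ^ p) (Ioo 0 1) :=
    ⟨hmeas, (hasFiniteIntegral_iff_ofReal hpos).2 (lt_top_iff_ne_top.2 h)⟩
  rw [intervalIntegral.integrableOn_Ioo_rpow_iff zero_lt_one] at this
  linarith


set_option maxHeartbeats 2000000 in
/-- Adjoint radial model: a continuous `w : (0,∞) → ℂ²` solving
`w' = -(2/r) w - (1/r) A w` on `(0,1)` and `w' = -(2/r) w - B w` on `(1,∞)`
(where `A` has rows `(-(2+k)/2, i n)`, `(-i n, -(2-k)/2)` and `B = diag(a, -a)`,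
with `k ≥ 1`, `n ≠ 0`, `a > 0`) which is `L²` for the measure `r² dr`
vanishes identically. -/
theorem stmt_8 (k n a : ℝ) (hk : 1 ≤ k) (hn : n ≠ 0) (ha : 0 < a)
    (w : ℝ → ℂ × ℂ) (hcont : ContinuousOn w (Ioi 0))
    (hode1 : ∀ r ∈ Ioo (0:ℝ) 1,
      HasDerivAt w
        ((-(2/(r:ℂ)) * (w r).1 -
            (-(2 + (k:ℂ))/2 * (w r).1 + Complex.I * (n:ℂ) * (w r).2) / (r:ℂ),
          -(2/(r:ℂ)) * (w r).2 -
            (-(Complex.I * (n:ℂ)) * (w r).1 - (2 - (k:ℂ))/2 * (w r).2) / (r:ℂ))) r)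
    (hode2 : ∀ r ∈ Ioi (1:ℝ),
      HasDerivAt w
        ((-(2/(r:ℂ)) * (w r).1 - (a:ℂ) * (w r).1,
          -(2/(r:ℂ)) * (w r).2 + (a:ℂ) * (w r).2)) r)
    (hL2 : ∫⁻ r in Ioi (0:ℝ),
        ENNReal.ofReal (r^2 * (‖(w r).1‖^2 + ‖(w r).2‖^2)) < ⊤) :
    ∀ r ∈ Ioi (0:ℝ), w r = 0 := by
  -- basic constants
  set μ : ℝ := Real.sqrt (k^2/4 + n^2) with hμdef
  have hbase : (0:ℝ) < k^2/4 + n^2 := by positivity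
  have hμsq : μ^2 = k^2/4 + n^2 := Real.sq_sqrt hbase.le
  have hμpos : 0 < μ := Real.sqrt_pos.2 hbase
  have hn2 : 0 < n^2 := by positivity
  have hμhalf : 1/2 < μ := by nlinarith [hμsq, hμpos]
  have hInne : (Complex.I * (n:ℂ)) ≠ 0 :=
    mul_ne_zero Complex.I_ne_zero (Complex.ofReal_ne_zero.2 hn)
  have hμsqC : (μ:ℂ)^2 = (k:ℂ)^2/4 + (n:ℂ)^2 := by exact_mod_cast hμsq
  set cm : ℂ := (-(μ:ℂ) - k/2)/(Complex.I * n) with hcmdef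
  set cp : ℂ := ((μ:ℂ) - k/2)/(Complex.I * n) with hcpdef
  have hcmval : cm * (Complex.I * n) = -(μ:ℂ) - k/2 := div_mul_cancel₀ _ hInne
  have hcpval : cp * (Complex.I * n) = (μ:ℂ) - k/2 := div_mul_cancel₀ _ hInne
  have h1m : (2 + (k:ℂ))/2 + cm * (Complex.I * n) = 1 - (μ:ℂ) := by
    rw [hcmval]; ring
  have h1p : (2 + (k:ℂ))/2 + cp * (Complex.I * n) = 1 + (μ:ℂ) := by
    rw [hcpval]; ring
  have h2m : -(Complex.I * (n:ℂ)) + cm * ((2 - (k:ℂ))/2) = (1 - (μ:ℂ)) * cm := by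
    refine mul_right_cancel₀ hInne ?_
    linear_combination (((2-(k:ℂ))/2) - (1-(μ:ℂ))) * hcmval +
      (-(n:ℂ)^2) * Complex.I_sq + (-1:ℂ) * hμsqC
  have h2p : -(Complex.I * (n:ℂ)) + cp * ((2 - (k:ℂ))/2) = (1 + (μ:ℂ)) * cp := by
    refine mul_right_cancel₀ hInne ?_
    linear_combination (((2-(k:ℂ))/2) - (1+(μ:ℂ))) * hcpval +
      (-(n:ℂ)^2) * Complex.I_sq + (-1:ℂ) * hμsqC
  have hem : (((1+μ : ℝ)):ℂ) = 2 - (1 - (μ:ℂ)) := by push_cast; ring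
  have hep : (((1-μ : ℝ)):ℂ) = 2 - (1 + (μ:ℂ)) := by push_cast; ring
  -- component derivative extraction and key derivative computations
  have keyD : ∀ (c lam : ℂ) (e : ℝ), ((e:ℂ) = 2 - lam) →
      ((2 + (k:ℂ))/2 + c * (Complex.I * n) = lam) →
      (-(Complex.I * (n:ℂ)) + c * ((2 - (k:ℂ))/2) = lam * c) →
      ∀ r ∈ Ioo (0:ℝ) 1,
        HasDerivAt (fun s => ((s ^ e : ℝ) : ℂ) * ((w s).1 + c * (w s).2)) 0 r := by
    intro c lam e he h1 h2 r hr
    have hr0 : (0:ℝ) < r := hr.1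
    have hrC : (r:ℂ) ≠ 0 := by exact_mod_cast hr0.ne'
    have hd := hode1 r hr
    have hdx : HasDerivAt (fun s => (w s).1)
        (-(2/(r:ℂ)) * (w r).1 -
          (-(2 + (k:ℂ))/2 * (w r).1 + Complex.I * (n:ℂ) * (w r).2) / (r:ℂ)) r := by
      simpa using (hd.hasFDerivAt.fst).hasDerivAt
    have hdy : HasDerivAt (fun s => (w s).2)
        (-(2/(r:ℂ)) * (w r).2 -
          (-(Complex.I * (n:ℂ)) * (w r).1 - (2 - (k:ℂ))/2 * (w r).2) / (r:ℂ)) r := by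
      simpa using (hd.hasFDerivAt.snd).hasDerivAt
    have hpow : HasDerivAt (fun s : ℝ => ((s ^ e : ℝ) : ℂ)) ((e * r ^ (e-1) : ℝ) : ℂ) r :=
      (Real.hasDerivAt_rpow_const (Or.inl hr0.ne')).ofReal_comp
    have hlin := hdx.add (hdy.const_mul c)
    have hmul := hpow.mul hlin
    have hre : (r:ℝ) ^ e = r ^ (e-1) * r := by
      rw [← Real.rpow_add_one hr0.ne' (e-1)]; ring_nf
    convert hmul using 1
    · rfl
    · rfl
    push_cast [hre, Pi.add_apply]
    field_simp
    linear_combination (-(2*((r ^ (e-1):ℝ):ℂ)*(w r).1)) * h1 +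
      (-(2*((r ^ (e-1):ℝ):ℂ)*(w r).2)) * h2 +
      (-(2*((r ^ (e-1):ℝ):ℂ)*((w r).1 + c*(w r).2))) * he
  have keyX : ∀ r ∈ Ioi (1:ℝ),
      HasDerivAt (fun s => ((s ^ 2 * Real.exp (a * s) : ℝ) : ℂ) * (w s).1) 0 r := by
    intro r hr
    have hr0 : (0:ℝ) < r := lt_trans zero_lt_one hr
    have hrC : (r:ℂ) ≠ 0 := by exact_mod_cast hr0.ne'
    have hd := hode2 r hr
    have hdx : HasDerivAt (fun s => (w s).1) (-(2/(r:ℂ)) * (w r).1 - (a:ℂ) * (w r).1) r := by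
      simpa using (hd.hasFDerivAt.fst).hasDerivAt
    have hexp : HasDerivAt (fun s : ℝ => s ^ 2 * Real.exp (a * s))
        (2 * r * Real.exp (a * r) + r ^ 2 * (Real.exp (a * r) * a)) r := by
      have h1 : HasDerivAt (fun s : ℝ => s ^ 2) (2 * r) r := by
        simpa using hasDerivAt_pow 2 r
      have h2 : HasDerivAt (fun s : ℝ => Real.exp (a * s)) (Real.exp (a * r) * a) r := by
        simpa using ((hasDerivAt_id r).const_mul a).exp
      exact h1.mul h2
    have hmul := hexp.ofReal_comp.mul hdx
    convert hmul using 1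
    · rfl
    · rfl
    push_cast
    field_simp
    ring
  have keyY : ∀ r ∈ Ioi (1:ℝ),
      HasDerivAt (fun s => ((s ^ 2 * Real.exp (-(a * s)) : ℝ) : ℂ) * (w s).2) 0 r := by
    intro r hr
    have hr0 : (0:ℝ) < r := lt_trans zero_lt_one hr
    have hrC : (r:ℂ) ≠ 0 := by exact_mod_cast hr0.ne'
    have hd := hode2 r hr
    have hdy : HasDerivAt (fun s => (w s).2) (-(2/(r:ℂ)) * (w r).2 + (a:ℂ) * (w r).2) r := by
      simpa using (hd.hasFDerivAt.snd).hasDerivAt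
    have hexp : HasDerivAt (fun s : ℝ => s ^ 2 * Real.exp (-(a * s)))
        (2 * r * Real.exp (-(a * r)) + r ^ 2 * (Real.exp (-(a * r)) * (-a))) r := by
      have h1 : HasDerivAt (fun s : ℝ => s ^ 2) (2 * r) r := by
        simpa using hasDerivAt_pow 2 r
      have h2 : HasDerivAt (fun s : ℝ => Real.exp (-(a * s))) (Real.exp (-(a * r)) * (-a)) r := by
        simpa using ((hasDerivAt_id r).const_mul a).neg.exp
      exact h1.mul h2
    have hmul := hexp.ofReal_comp.mul hdy
    convert hmul using 1
    · rfl
    · rfl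
    push_cast
    field_simp
    ring
  -- the four conserved quantities
  set f : ℝ → ℂ := fun s => ((s ^ 2 * Real.exp (a * s) : ℝ) : ℂ) * (w s).1 with hfdef
  set g : ℝ → ℂ := fun s => ((s ^ 2 * Real.exp (-(a * s)) : ℝ) : ℂ) * (w s).2 with hgdef
  set φm : ℝ → ℂ := fun s => ((s ^ (1+μ) : ℝ) : ℂ) * ((w s).1 + cm * (w s).2) with hφmdef
  set φp : ℝ → ℂ := fun s => ((s ^ (1-μ) : ℝ) : ℂ) * ((w s).1 + cp * (w s).2) with hφpdef
  -- continuity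
  have hXc : ContinuousOn (fun s => (w s).1) (Ioi (0:ℝ)) := hcont.fst
  have hYc : ContinuousOn (fun s => (w s).2) (Ioi (0:ℝ)) := hcont.snd
  have hrpowC : ∀ e : ℝ, ContinuousOn (fun s : ℝ => ((s ^ e : ℝ) : ℂ)) (Ioi 0) := by
    intro e
    apply Complex.continuous_ofReal.comp_continuousOn
    exact fun x hx => (Real.continuousAt_rpow_const x e (Or.inl (ne_of_gt hx))).continuousWithinAt
  have hexpC : ∀ b : ℝ, Continuous (fun s : ℝ => ((s ^ 2 * Real.exp (b * s) : ℝ) : ℂ)) := by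
    intro b
    exact Complex.continuous_ofReal.comp
      ((continuous_pow 2).mul (Real.continuous_exp.comp (continuous_const.mul continuous_id)))
  have hfc : ContinuousOn f (Ioi 0) := ((hexpC a).continuousOn).mul hXc
  have hgc : ContinuousOn g (Ioi 0) := by
    apply ContinuousOn.mul _ hYc
    apply Continuous.continuousOn
    exact Complex.continuous_ofReal.comp
      ((continuous_pow 2).mul (Real.continuous_exp.comp (continuous_const.mul continuous_id).neg))
  have hφmc : ContinuousOn φm (Ioi 0) := (hrpowC (1+μ)).mul (hXc.add (hYc.const_smul cm))
  have hφpc : ContinuousOn φp (Ioi 0) := (hrpowC (1-μ)).mul (hXc.add (hYc.const_smul cp))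
  -- constancy on intervals
  have hIoo : (Ioo (0:ℝ) 1) ⊆ Ioi 0 := Ioo_subset_Ioi_self
  have hIoi : (Ioi (1:ℝ)) ⊆ Ioi 0 := Ioi_subset_Ioi zero_le_one
  have hfconst : ∀ r ∈ Ioi (1:ℝ), f r = f 2 :=
    fun r hr => myConstOn ordConnected_Ioi (hfc.mono hIoi) keyX r hr 2 (by norm_num)
  have hgconst : ∀ r ∈ Ioi (1:ℝ), g r = g 2 :=
    fun r hr => myConstOn ordConnected_Ioi (hgc.mono hIoi) keyY r hr 2 (by norm_num)
  have hmconst : ∀ r ∈ Ioo (0:ℝ) 1, φm r = φm (1/2) :=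
    fun r hr => myConstOn ordConnected_Ioo (hφmc.mono hIoo)
      (keyD cm (1 - (μ:ℂ)) (1+μ) hem h1m h2m) r hr (1/2) (by norm_num)
  have hpconst : ∀ r ∈ Ioo (0:ℝ) 1, φp r = φp (1/2) :=
    fun r hr => myConstOn ordConnected_Ioo (hφpc.mono hIoo)
      (keyD cp (1 + (μ:ℂ)) (1-μ) hep h1p h2p) r hr (1/2) (by norm_num)
  have h1mem : (1:ℝ) ∈ Ioi (0:ℝ) := by norm_num
  have hclosIoi : (1:ℝ) ∈ closure (Ioi (1:ℝ)) := by
    rw [closure_Ioi]; exact self_mem_Ici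
  have hclosIoo : (1:ℝ) ∈ closure (Ioo (0:ℝ) 1) := by
    rw [closure_Ioo (by norm_num : (0:ℝ) ≠ 1)]; exact right_mem_Icc.2 zero_le_one
  have hf1 : f 1 = f 2 :=
    myEndpoint hclosIoi ((hfc 1 h1mem).mono hIoi) hfconst
  have hg1 : g 1 = g 2 :=
    myEndpoint hclosIoi ((hgc 1 h1mem).mono hIoi) hgconst
  have hm1 : φm 1 = φm (1/2) :=
    myEndpoint hclosIoo ((hφmc 1 h1mem).mono hIoo) hmconst
  have hp1 : φp 1 = φp (1/2) :=
    myEndpoint hclosIoo ((hφpc 1 h1mem).mono hIoo) hpconst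
  -- step 1 : g 2 = 0 from L² at infinity
  have hg2 : g 2 = 0 := by
    by_contra hC
    have hCpos : 0 < ‖g 2‖ := norm_pos_iff.2 hC
    set R : ℝ := max 2 (4/(a^2 * ‖g 2‖)) with hRdef
    have hR2 : (2:ℝ) ≤ R := le_max_left _ _
    have hRb : 4/(a^2 * ‖g 2‖) ≤ R := le_max_right _ _
    have key : ∀ x ∈ Ioi R, (1:ENNReal) ≤
        ENNReal.ofReal (x^2 * (‖(w x).1‖^2 + ‖(w x).2‖^2)) := by
      intro x hx
      have hx1 : (1:ℝ) < x := lt_of_lt_of_le (by norm_num) (le_trans hR2 (le_of_lt hx))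
      have hx0 : (0:ℝ) < x := lt_trans zero_lt_one hx1
      have hnorm : x^2 * Real.exp (-(a*x)) * ‖(w x).2‖ = ‖g 2‖ := by
        have h : ‖((x^2 * Real.exp (-(a*x)) : ℝ):ℂ) * (w x).2‖ = ‖g 2‖ := by
          rw [show ((x^2 * Real.exp (-(a*x)) : ℝ):ℂ) * (w x).2 = g x from rfl]
          exact congrArg norm (hgconst x hx1)
        rwa [norm_mul, Complex.norm_real,
          Real.norm_of_nonneg (by positivity : (0:ℝ) ≤ x^2*Real.exp (-(a*x)))] at h
      have hE : Real.exp (-(a*x)) * Real.exp (a*x) = 1 := by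
        rw [← Real.exp_add]; simp
      have hx2y : x^2 * ‖(w x).2‖ = ‖g 2‖ * Real.exp (a*x) := by
        linear_combination Real.exp (a*x) * hnorm - x^2*‖(w x).2‖ * hE
      have ht : 0 ≤ a*x/2 := by positivity
      have he1 : a*x/2 + 1 ≤ Real.exp (a*x/2) := Real.add_one_le_exp _
      have he2 : Real.exp (a*x) = Real.exp (a*x/2) * Real.exp (a*x/2) := by
        rw [← Real.exp_add]; ring_nf
      have he3 : (a*x/2)^2 ≤ Real.exp (a*x) := by nlinarith [he1, he2, ht]
      have hxge : 4/(a^2*‖g 2‖) ≤ x := le_trans hRb hx.le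
      have hxa : 4 ≤ x * (a^2*‖g 2‖) := by
        rw [div_le_iff₀ (by positivity)] at hxge; linarith
      rw [ENNReal.one_le_ofReal]
      have h5 : ‖g 2‖ * (a*x/2)^2 ≤ x^2 * ‖(w x).2‖ := by
        rw [hx2y]; exact mul_le_mul_of_nonneg_left he3 hCpos.le
      have h6 : ‖g 2‖*a^2/4 ≤ ‖(w x).2‖ := by
        have h5' : (‖g 2‖*a^2/4) * x^2 ≤ ‖(w x).2‖ * x^2 := by
          calc (‖g 2‖*a^2/4) * x^2 = ‖g 2‖ * (a*x/2)^2 := by ring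
            _ ≤ x^2 * ‖(w x).2‖ := h5
            _ = ‖(w x).2‖ * x^2 := by ring
        exact le_of_mul_le_mul_right h5' (by positivity)
      have hxv : 1 ≤ x * ‖(w x).2‖ := by
        have h6' := mul_le_mul_of_nonneg_left h6 hx0.le
        calc (1:ℝ) ≤ x*(a^2*‖g 2‖)/4 := by linarith
          _ = x * (‖g 2‖*a^2/4) := by ring
          _ ≤ x * ‖(w x).2‖ := h6'
      have h7 : 1 ≤ x^2 * ‖(w x).2‖^2 := by
        calc (1:ℝ) = 1*1 := by ring
          _ ≤ (x*‖(w x).2‖)*(x*‖(w x).2‖) :=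
              mul_le_mul hxv hxv zero_le_one (le_trans zero_le_one hxv)
          _ = x^2*‖(w x).2‖^2 := by ring
      calc (1:ℝ) ≤ x^2*‖(w x).2‖^2 := h7
        _ ≤ x^2*(‖(w x).1‖^2+‖(w x).2‖^2) :=
            mul_le_mul_of_nonneg_left (le_add_of_nonneg_left (sq_nonneg _)) (sq_nonneg x)
    have hineq : volume (Ioi R) ≤
        ∫⁻ r in Ioi R, ENNReal.ofReal (r^2 * (‖(w r).1‖^2 + ‖(w r).2‖^2)) := by
      rw [← setLIntegral_one]
      refine lintegral_mono_ae ?_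
      filter_upwards [ae_restrict_mem measurableSet_Ioi] with x hx
      exact key x hx
    have hsub : Ioi R ⊆ Ioi (0:ℝ) := Ioi_subset_Ioi (by linarith)
    have : (⊤:ENNReal) ≤ ∫⁻ r in Ioi (0:ℝ),
        ENNReal.ofReal (r^2 * (‖(w r).1‖^2 + ‖(w r).2‖^2)) :=
      le_trans (le_trans (le_of_eq Real.volume_Ioi.symm) hineq) (lintegral_mono_set hsub)
    exact absurd (lt_of_le_of_lt this hL2) (lt_irrefl _)
  -- consequences on [1,∞) for y
  have hYIoi : ∀ r ∈ Ioi (1:ℝ), (w r).2 = 0 := by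
    intro r hr
    have h := (hgconst r hr).trans hg2
    have hr0 : (0:ℝ) < r := lt_trans zero_lt_one hr
    have hne : ((r^2 * Real.exp (-(a*r)) : ℝ):ℂ) ≠ 0 := by
      rw [Complex.ofReal_ne_zero]; positivity
    exact (mul_eq_zero.1 h).resolve_left hne
  have hY1 : (w 1).2 = 0 := by
    have h := hg1.trans hg2
    have hne : (((1:ℝ)^2 * Real.exp (-(a*1)) : ℝ):ℂ) ≠ 0 := by
      rw [Complex.ofReal_ne_zero]; positivity
    simpa [hgdef] using (mul_eq_zero.1 h).resolve_left hne
  -- step 2 : φm (1/2) = 0 from L² at the origin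
  have hKm : φm (1/2) = 0 := by
    by_contra hC
    have hKpos : 0 < ‖φm (1/2)‖ := norm_pos_iff.2 hC
    set c0 : ℝ := ‖φm (1/2)‖^2 / (2 + 2*‖cm‖^2) with hc0def
    have hc0 : 0 < c0 := by positivity
    have hb : ∀ r ∈ Ioo (0:ℝ) 1,
        c0 * r ^ (-(2*μ)) ≤ r^2 * (‖(w r).1‖^2 + ‖(w r).2‖^2) := by
      intro r hr
      have hr0 : (0:ℝ) < r := hr.1
      have hP : (0:ℝ) < r ^ (1+μ) := Real.rpow_pos_of_pos hr0 _
      have hnorm : r ^ (1+μ) * ‖(w r).1 + cm * (w r).2‖ = ‖φm (1/2)‖ := by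
        have h : ‖((r ^ (1+μ) : ℝ):ℂ) * ((w r).1 + cm * (w r).2)‖ = ‖φm (1/2)‖ := by
          rw [show ((r ^ (1+μ) : ℝ):ℂ) * ((w r).1 + cm * (w r).2) = φm r from rfl]
          exact congrArg norm (hmconst r hr)
        rwa [norm_mul, Complex.norm_real,
          Real.norm_of_nonneg (Real.rpow_nonneg hr0.le _)] at h
      have hN2 : ‖(w r).1 + cm * (w r).2‖^2 ≤
          (2 + 2*‖cm‖^2) * (‖(w r).1‖^2 + ‖(w r).2‖^2) := by
        have h2 : ‖(w r).1 + cm * (w r).2‖ ≤ ‖(w r).1‖ + ‖cm‖ * ‖(w r).2‖ := by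
          refine le_trans (norm_add_le _ _) ?_
          rw [norm_mul]
        have h3 : ‖(w r).1 + cm * (w r).2‖^2 ≤ (‖(w r).1‖ + ‖cm‖ * ‖(w r).2‖)^2 := by
          have h4 := mul_le_mul h2 h2 (norm_nonneg _)
            (by positivity : (0:ℝ) ≤ ‖(w r).1‖ + ‖cm‖ * ‖(w r).2‖)
          calc ‖(w r).1 + cm * (w r).2‖^2
              = ‖(w r).1 + cm * (w r).2‖ * ‖(w r).1 + cm * (w r).2‖ := sq _
            _ ≤ (‖(w r).1‖ + ‖cm‖ * ‖(w r).2‖) * (‖(w r).1‖ + ‖cm‖ * ‖(w r).2‖) := h4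
            _ = (‖(w r).1‖ + ‖cm‖ * ‖(w r).2‖)^2 := (sq _).symm
        refine le_trans h3 ?_
        have h5 : (2 + 2*‖cm‖^2) * (‖(w r).1‖^2 + ‖(w r).2‖^2)
            - (‖(w r).1‖ + ‖cm‖ * ‖(w r).2‖)^2
            = (‖(w r).1‖ - ‖cm‖ * ‖(w r).2‖)^2 + 2*‖(w r).2‖^2 + 2*(‖cm‖ * ‖(w r).1‖)^2 := by
          ring
        linarith [sq_nonneg (‖(w r).1‖ - ‖cm‖ * ‖(w r).2‖), sq_nonneg (‖(w r).2‖),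
          sq_nonneg (‖cm‖ * ‖(w r).1‖), h5]
      have hf4 : r ^ (-(2*μ)) * (r ^ (1+μ))^2 = r^2 := by
        rw [← Real.rpow_natCast (r ^ (1+μ)) 2, ← Real.rpow_mul hr0.le,
          ← Real.rpow_add hr0, ← Real.rpow_natCast r 2]
        congr 1
        push_cast
        ring
      have hc1 : c0 ≤ (r ^ (1+μ))^2 * (‖(w r).1‖^2 + ‖(w r).2‖^2) := by
        rw [hc0def, div_le_iff₀ (by positivity)]
        have := mul_le_mul_of_nonneg_left hN2 (sq_nonneg (r ^ (1+μ)))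
        calc ‖φm (1/2)‖^2 = (r ^ (1+μ))^2 * ‖(w r).1 + cm * (w r).2‖^2 := by
              rw [← hnorm]; ring
          _ ≤ (r ^ (1+μ))^2 * ((2 + 2*‖cm‖^2) * (‖(w r).1‖^2 + ‖(w r).2‖^2)) := this
          _ = (r ^ (1+μ))^2 * (‖(w r).1‖^2 + ‖(w r).2‖^2) * (2 + 2*‖cm‖^2) := by ring
      calc c0 * r ^ (-(2*μ))
          ≤ ((r ^ (1+μ))^2 * (‖(w r).1‖^2 + ‖(w r).2‖^2)) * r ^ (-(2*μ)) :=
            mul_le_mul_of_nonneg_right hc1 (Real.rpow_nonneg hr0.le _)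
        _ = (r ^ (-(2*μ)) * (r ^ (1+μ))^2) * (‖(w r).1‖^2 + ‖(w r).2‖^2) := by ring
        _ = r^2 * (‖(w r).1‖^2 + ‖(w r).2‖^2) := by rw [hf4]
    have h1 : ∫⁻ r in Ioo (0:ℝ) 1, ENNReal.ofReal (c0 * r ^ (-(2*μ))) ≤
        ∫⁻ r in Ioo (0:ℝ) 1, ENNReal.ofReal (r^2 * (‖(w r).1‖^2 + ‖(w r).2‖^2)) := by
      refine lintegral_mono_ae ?_
      filter_upwards [ae_restrict_mem measurableSet_Ioo] with x hx
      exact ENNReal.ofReal_le_ofReal (hb x hx)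
    have h2 : ∫⁻ r in Ioo (0:ℝ) 1, ENNReal.ofReal (c0 * r ^ (-(2*μ))) = ⊤ := by
      have heq : ∀ r : ℝ, ENNReal.ofReal (c0 * r ^ (-(2*μ))) =
          ENNReal.ofReal c0 * ENNReal.ofReal (r ^ (-(2*μ))) :=
        fun r => ENNReal.ofReal_mul hc0.le
      simp_rw [heq]
      rw [lintegral_const_mul' _ _ ENNReal.ofReal_ne_top,
        myRpowTop (by linarith : -(2*μ) ≤ -1),
        ENNReal.mul_top (ENNReal.ofReal_pos.2 hc0).ne']
    have h3 : (⊤:ENNReal) ≤ ∫⁻ r in Ioi (0:ℝ),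
        ENNReal.ofReal (r^2 * (‖(w r).1‖^2 + ‖(w r).2‖^2)) :=
      le_trans (le_trans (le_of_eq h2.symm) h1) (lintegral_mono_set hIoo)
    exact absurd (lt_of_le_of_lt h3 hL2) (lt_irrefl _)
  -- x(1) = 0
  have hXY1 : (w 1).1 + cm * (w 1).2 = 0 := by
    have h := hm1.trans hKm
    have hone : (((1:ℝ) ^ (1+μ) : ℝ):ℂ) = 1 := by
      rw [Real.one_rpow]; norm_num
    rw [hφmdef] at h
    simpa [hone] using h
  have hX1 : (w 1).1 = 0 := by
    rw [hY1] at hXY1; simpa using hXY1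
  -- φp (1/2) = 0
  have hKp : φp (1/2) = 0 := by
    rw [← hp1, hφpdef]
    have hone : (((1:ℝ) ^ (1-μ) : ℝ):ℂ) = 1 := by
      rw [Real.one_rpow]; norm_num
    simp [hone, hX1, hY1]
  -- f 2 = 0
  have hf2 : f 2 = 0 := by
    rw [← hf1, hfdef]
    simp [hX1]
  have hXIoi : ∀ r ∈ Ioi (1:ℝ), (w r).1 = 0 := by
    intro r hr
    have h := (hfconst r hr).trans hf2
    have hr0 : (0:ℝ) < r := lt_trans zero_lt_one hr
    have hne : ((r^2 * Real.exp (a*r) : ℝ):ℂ) ≠ 0 := by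
      rw [Complex.ofReal_ne_zero]; positivity
    exact (mul_eq_zero.1 h).resolve_left hne
  -- inside (0,1)
  have hcmcp : cm - cp ≠ 0 := by
    rw [hcmdef, hcpdef, div_sub_div_same]
    apply div_ne_zero _ hInne
    intro h
    have : (μ:ℂ) = 0 := by linear_combination (-1/2 : ℂ) * h
    exact hμpos.ne' (by exact_mod_cast this)
  have hIooZero : ∀ r ∈ Ioo (0:ℝ) 1, (w r).1 = 0 ∧ (w r).2 = 0 := by
    intro r hr
    have hr0 : (0:ℝ) < r := hr.1
    have hnem : ((r ^ (1+μ) : ℝ):ℂ) ≠ 0 := by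
      rw [Complex.ofReal_ne_zero]; exact (Real.rpow_pos_of_pos hr0 _).ne'
    have hnep : ((r ^ (1-μ) : ℝ):ℂ) ≠ 0 := by
      rw [Complex.ofReal_ne_zero]; exact (Real.rpow_pos_of_pos hr0 _).ne'
    have e1 : (w r).1 + cm * (w r).2 = 0 := by
      have h := (hmconst r hr).trans hKm
      rw [hφmdef] at h
      exact (mul_eq_zero.1 h).resolve_left hnem
    have e2 : (w r).1 + cp * (w r).2 = 0 := by
      have h := (hpconst r hr).trans hKp
      rw [hφpdef] at h
      exact (mul_eq_zero.1 h).resolve_left hnep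
    have hy : (w r).2 = 0 := by
      have h : (cm - cp) * (w r).2 = 0 := by linear_combination e1 - e2
      exact (mul_eq_zero.1 h).resolve_left hcmcp
    have hx : (w r).1 = 0 := by rw [hy] at e1; simpa using e1
    exact ⟨hx, hy⟩
  -- conclusion
  intro r hr
  rcases lt_trichotomy r 1 with h | h | h
  · obtain ⟨hx, hy⟩ := hIooZero r ⟨hr, h⟩
    exact Prod.ext hx hy
  · subst h
    exact Prod.ext hX1 hY1
  · exact Prod.ext (hXIoi r h) (hYIoi r h)
end

section
/- Suppose k ≥ 1 and n ≠ 0, and set s = (k²/4 + n²)^{1/2} and λ₊ = −1 + s. Let r₀ > 0 and let v : (0,r₀) → ℂ² be differentiable with v′(r) = (1/r)·A·v(r) for all r ∈ (0,r₀). If ∫₀^{r₀} r²‖v(r)‖² dr < ∞, then there exists a vector w ∈ ℂ² with A·w = λ₊·w such that v(r) = r^{λ₊}·w for all r ∈ (0,r₀). -/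
open MeasureTheory Set

private lemma cs_aux (a b x y : ℝ) :
    (|a| * x + |b| * y)^2 ≤ (a^2 + b^2) * (x^2 + y^2) := by
  nlinarith [sq_nonneg (|a| * y - |b| * x), sq_abs a, sq_abs b]

private lemma hd_fst' {f : ℝ → ℂ × ℂ} {f' : ℂ × ℂ} {x : ℝ} (h : HasDerivAt f f' x) :
    HasDerivAt (fun x => (f x).1) f'.1 x := by
  simpa using h.hasFDerivAt.fst.hasDerivAt

private lemma hd_snd' {f : ℝ → ℂ × ℂ} {f' : ℂ × ℂ} {x : ℝ} (h : HasDerivAt f f' x) :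
    HasDerivAt (fun x => (f x).2) f'.2 x := by
  simpa using h.hasFDerivAt.snd.hasDerivAt

private lemma cpow_hd' {r : ℝ} (hr : 0 < r) (c : ℂ) :
    HasDerivAt (fun x : ℝ => (x:ℂ) ^ c) (c * (r:ℂ) ^ (c - 1)) r := by
  have h0 : ((r:ℂ)) ∈ Complex.slitPlane := by
    simp [Complex.mem_slitPlane_iff, hr]
  simpa using ((hasDerivAt_id ((r:ℂ))).cpow_const h0).comp_ofReal

private lemma euler_scalar' (c : ℂ) {r₀ : ℝ} (f : ℝ → ℂ)
    (hf : ∀ r ∈ Ioo (0:ℝ) r₀, HasDerivAt f (c * f r / r) r) :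
    ∀ r ∈ Ioo (0:ℝ) r₀, ∀ r' ∈ Ioo (0:ℝ) r₀,
      (r:ℂ) ^ (-c) * f r = (r':ℂ) ^ (-c) * f r' := by
  set g : ℝ → ℂ := fun r => (r:ℂ) ^ (-c) * f r with hg
  have hD : ∀ r ∈ Ioo (0:ℝ) r₀, HasDerivAt g 0 r := by
    intro r hr
    have hrpos := hr.1
    have hrne : (r:ℂ) ≠ 0 := by exact_mod_cast hrpos.ne'
    have h1 := (cpow_hd' hrpos (-c)).mul (hf r hr)
    refine h1.congr_deriv (Eq.symm ?_)
    have key : (r:ℂ) ^ (-c) = (r:ℂ) ^ (-c - 1) * (r:ℂ) := by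
      have h := Complex.cpow_add (-c-1) 1 hrne
      rw [Complex.cpow_one] at h
      rw [← h]
      ring_nf
    rw [key]
    generalize (r:ℂ) ^ (-c - 1) = t
    field_simp
    ring
  intro r hr r' hr'
  have hconv : Convex ℝ (Ioo (0:ℝ) r₀) := convex_Ioo _ _
  have hdiff : DifferentiableOn ℝ g (Ioo 0 r₀) := fun x hx =>
    ((hD x hx).differentiableAt).differentiableWithinAt
  have hfd : ∀ x ∈ Ioo (0:ℝ) r₀, fderivWithin ℝ g (Ioo 0 r₀) x = 0 := by
    intro x hx
    have h2 : fderiv ℝ g x = 0 := by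
      have := (hD x hx).hasFDerivAt.fderiv
      ext y
      rw [this]
      simp
    rw [fderivWithin_of_isOpen isOpen_Ioo hx, h2]
  exact hconv.is_const_of_fderivWithin_eq_zero hdiff hfd hr hr'

set_option maxHeartbeats 1600000 in
/-- For `k ≥ 1`, `n ≠ 0`, `s = (k²/4 + n²)^{1/2}` and `λ₊ = -1 + s`: any solution
`v : (0,r₀) → ℂ²` of the Euler system `v' = (1/r) A v` (where `A` has rows
`(-(2+k)/2, i n)`, `(-i n, -(2-k)/2)`) that is `L²` for `r² dr` is of the form
`v(r) = r^{λ₊} w` with `A w = λ₊ w`. -/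
theorem stmt_9 (k n : ℝ) (hk : 1 ≤ k) (hn : n ≠ 0)
    (s lam : ℝ) (hs : s = Real.sqrt (k^2/4 + n^2)) (hlam : lam = -1 + s)
    (r₀ : ℝ) (hr₀ : 0 < r₀) (v : ℝ → ℂ × ℂ)
    (hode : ∀ r ∈ Ioo (0:ℝ) r₀,
      HasDerivAt v
        (((-(2 + (k:ℂ))/2 * (v r).1 + Complex.I * (n:ℂ) * (v r).2) / (r:ℂ),
          (-(Complex.I * (n:ℂ)) * (v r).1 - (2 - (k:ℂ))/2 * (v r).2) / (r:ℂ))) r)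
    (hL2 : ∫⁻ r in Ioo (0:ℝ) r₀,
        ENNReal.ofReal (r^2 * (‖(v r).1‖^2 + ‖(v r).2‖^2)) < ⊤) :
    ∃ w : ℂ × ℂ,
      (-(2 + (k:ℂ))/2 * w.1 + Complex.I * (n:ℂ) * w.2 = (lam:ℂ) * w.1 ∧
        -(Complex.I * (n:ℂ)) * w.1 - (2 - (k:ℂ))/2 * w.2 = (lam:ℂ) * w.2) ∧
      ∀ r ∈ Ioo (0:ℝ) r₀, v r = (r ^ lam) • w := by
  have hn2 : 0 < n^2 := by positivity
  have hsum : 0 < k^2/4 + n^2 := by nlinarith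
  have hs0 : 0 < s := by rw [hs]; exact Real.sqrt_pos.mpr hsum
  have hs2 : s^2 = k^2/4 + n^2 := by rw [hs]; exact Real.sq_sqrt hsum.le
  have hshalf : 1/2 < s := by nlinarith
  have hs2C : (s:ℂ)^2 = (k:ℂ)^2/4 + (n:ℂ)^2 := by exact_mod_cast congrArg (Complex.ofReal) hs2
  have hlamC : (lam:ℂ) = -1 + (s:ℂ) := by rw [hlam]; push_cast; ring
  have hnC : (n:ℂ) ≠ 0 := by exact_mod_cast hn
  have hIn : Complex.I * (n:ℂ) ≠ 0 := mul_ne_zero Complex.I_ne_zero hnC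
  have hsC : (s:ℂ) ≠ 0 := by exact_mod_cast hs0.ne'
  set muC : ℂ := -1 - (s:ℂ) with hmuC
  set cmC : ℂ := (k:ℂ)/2 - (s:ℂ) with hcmC
  set cpC : ℂ := (k:ℂ)/2 + (s:ℂ) with hcpC
  set fP : ℝ → ℂ := fun r => -(Complex.I * (n:ℂ)) * (v r).1 + cpC * (v r).2 with hfPdef
  set fM : ℝ → ℂ := fun r => -(Complex.I * (n:ℂ)) * (v r).1 + cmC * (v r).2 with hfMdef
  clear_value muC cmC cpC fP fM
  -- the two scalar ODEs
  have hodeP : ∀ r ∈ Ioo (0:ℝ) r₀, HasDerivAt fP ((lam:ℂ) * fP r / r) r := by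
    intro r hr
    have hrne : (r:ℂ) ≠ 0 := by exact_mod_cast hr.1.ne'
    have h1 := ((hd_fst' (hode r hr)).const_mul (-(Complex.I * (n:ℂ)))).add
      ((hd_snd' (hode r hr)).const_mul cpC)
    rw [hfPdef]
    refine h1.congr_deriv (Eq.symm ?_)
    simp only [hfPdef, hcpC, hlamC]
    field_simp
    linear_combination (4*(v r).2) * hs2C + (4*(v r).2*(n:ℂ)^2) * Complex.I_sq
  have hodeM : ∀ r ∈ Ioo (0:ℝ) r₀, HasDerivAt fM (muC * fM r / r) r := by
    intro r hr
    have hrne : (r:ℂ) ≠ 0 := by exact_mod_cast hr.1.ne'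
    have h1 := ((hd_fst' (hode r hr)).const_mul (-(Complex.I * (n:ℂ)))).add
      ((hd_snd' (hode r hr)).const_mul cmC)
    rw [hfMdef]
    refine h1.congr_deriv (Eq.symm ?_)
    simp only [hfMdef, hcmC, hmuC]
    field_simp
    linear_combination (4*(v r).2) * hs2C + (4*(v r).2*(n:ℂ)^2) * Complex.I_sq
  -- base point
  set r₁ : ℝ := r₀/2 with hr₁def
  have hr₁ : r₁ ∈ Ioo (0:ℝ) r₀ := ⟨by positivity, by simp [hr₁def]; linarith⟩
  set CM : ℂ := (r₁:ℂ) ^ (-muC) * fM r₁ with hCMdef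
  set CP : ℂ := (r₁:ℂ) ^ (-(lam:ℂ)) * fP r₁ with hCPdef
  clear_value r₁ CM CP
  have hfMr : ∀ r ∈ Ioo (0:ℝ) r₀, fM r = (r:ℂ) ^ muC * CM := by
    intro r hr
    have hrne : (r:ℂ) ≠ 0 := by exact_mod_cast hr.1.ne'
    have h := euler_scalar' muC fM hodeM r hr r₁ hr₁
    have hcan : (r:ℂ) ^ muC * (r:ℂ) ^ (-muC) = 1 := by
      rw [← Complex.cpow_add _ _ hrne]
      simp
    calc fM r = (r:ℂ) ^ muC * ((r:ℂ) ^ (-muC) * fM r) := by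
          rw [← mul_assoc, hcan, one_mul]
      _ = (r:ℂ) ^ muC * CM := by rw [h, hCMdef]
  have hfPr : ∀ r ∈ Ioo (0:ℝ) r₀, fP r = (r:ℂ) ^ (lam:ℂ) * CP := by
    intro r hr
    have hrne : (r:ℂ) ≠ 0 := by exact_mod_cast hr.1.ne'
    have h := euler_scalar' (lam:ℂ) fP hodeP r hr r₁ hr₁
    have hcan : (r:ℂ) ^ (lam:ℂ) * (r:ℂ) ^ (-(lam:ℂ)) = 1 := by
      rw [← Complex.cpow_add _ _ hrne]
      simp
    calc fP r = (r:ℂ) ^ (lam:ℂ) * ((r:ℂ) ^ (-(lam:ℂ)) * fP r) := by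
          rw [← mul_assoc, hcan, one_mul]
      _ = (r:ℂ) ^ (lam:ℂ) * CP := by rw [h, hCPdef]
  -- CM must vanish
  have hCM : CM = 0 := by
    by_contra hCM0
    set K : ℝ := n^2 + (k/2 - s)^2 with hKdef
    have hK : 0 < K := by positivity
    set c0 : ℝ := ‖CM‖^2 / K with hc0def
    have hc0 : 0 < c0 := by
      have h1 : 0 < ‖CM‖ := norm_pos_iff.mpr hCM0
      positivity
    have hbound : ∀ r ∈ Ioo (0:ℝ) r₀,
        c0 * r ^ (2*(-1-s)+2) ≤ r^2 * (‖(v r).1‖^2 + ‖(v r).2‖^2) := by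
      intro r hr
      have hrpos := hr.1
      have hre : muC.re = -1 - s := by simp [hmuC]
      have hnorm : ‖fM r‖ = r ^ (-1-s : ℝ) * ‖CM‖ := by
        rw [hfMr r hr, norm_mul,
          Complex.norm_cpow_eq_rpow_re_of_pos hrpos, hre]
      have htri : ‖fM r‖ ≤ |n| * ‖(v r).1‖ + |k/2 - s| * ‖(v r).2‖ := by
        simp only [hfMdef]
        calc ‖-(Complex.I * (n:ℂ)) * (v r).1 + cmC * (v r).2‖ ≤ ‖-(Complex.I * (n:ℂ)) * (v r).1‖ + ‖cmC * (v r).2‖ :=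
              norm_add_le _ _
          _ = |n| * ‖(v r).1‖ + |k/2 - s| * ‖(v r).2‖ := by
              have e1 : ‖-(Complex.I * (n:ℂ))‖ = |n| := by
                rw [norm_neg, norm_mul, Complex.norm_I, one_mul, Complex.norm_real,
                  Real.norm_eq_abs]
              have e2 : ‖cmC‖ = |k/2 - s| := by
                rw [hcmC, show (k:ℂ)/2 - (s:ℂ) = ((k/2 - s : ℝ) : ℂ) by push_cast; ring,
                  Complex.norm_real, Real.norm_eq_abs]
              rw [norm_mul, norm_mul, e1, e2]
      have hsq : (r ^ (-1-s : ℝ) * ‖CM‖)^2 ≤ K * (‖(v r).1‖^2 + ‖(v r).2‖^2) := by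
        rw [← hnorm]
        have h4 : ‖fM r‖^2 ≤ (|n| * ‖(v r).1‖ + |k/2 - s| * ‖(v r).2‖)^2 :=
          pow_le_pow_left₀ (norm_nonneg _) htri 2
        refine h4.trans ?_
        rw [hKdef]
        exact cs_aux n (k/2 - s) _ _
      have hpow : r ^ (2*(-1-s)+2 : ℝ) = r^2 * (r ^ (-1-s : ℝ))^2 := by
        have e1 : r ^ ((-1-s)*2 + 2 : ℝ) = r ^ ((-1-s)*2 : ℝ) * r ^ (2:ℝ) :=
          Real.rpow_add hrpos _ _
        have e2 : r ^ ((-1-s)*2 : ℝ) = (r ^ (-1-s:ℝ))^2 := by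
          rw [Real.rpow_mul hrpos.le,
            show (2:ℝ) = ((2:ℕ):ℝ) by norm_num, Real.rpow_natCast]
        have e3 : r ^ (2:ℝ) = r^2 := by
          rw [show (2:ℝ) = ((2:ℕ):ℝ) by norm_num, Real.rpow_natCast]
        rw [show (2*(-1-s)+2 : ℝ) = (-1-s)*2 + 2 by ring, e1, e2, e3]
        ring
      rw [hpow, hc0def, div_mul_eq_mul_div, div_le_iff₀ hK]
      calc ‖CM‖^2 * (r^2 * (r ^ (-1-s:ℝ))^2)
          = r^2 * ((r ^ (-1-s:ℝ)) * ‖CM‖)^2 := by ring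
        _ ≤ r^2 * (K * (‖(v r).1‖^2 + ‖(v r).2‖^2)) :=
            mul_le_mul_of_nonneg_left hsq (sq_nonneg r)
        _ = r^2 * (‖(v r).1‖^2 + ‖(v r).2‖^2) * K := by ring
    have hmono : ∫⁻ r in Ioo (0:ℝ) r₀, ENNReal.ofReal (c0 * r ^ (2*(-1-s)+2)) ≤
        ∫⁻ r in Ioo (0:ℝ) r₀, ENNReal.ofReal (r^2 * (‖(v r).1‖^2 + ‖(v r).2‖^2)) := by
      rw [← lintegral_indicator measurableSet_Ioo, ← lintegral_indicator measurableSet_Ioo]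
      refine lintegral_mono fun x => ?_
      classical
      by_cases hx : x ∈ Ioo (0:ℝ) r₀
      · simpa [indicator_of_mem hx] using ENNReal.ofReal_le_ofReal (hbound x hx)
      · simp [indicator_of_notMem hx]
    have hfin := lt_of_le_of_lt hmono hL2
    have hcont : ContinuousOn (fun r:ℝ => c0 * r ^ (2*(-1-s)+2)) (Ioo 0 r₀) :=
      continuousOn_const.mul (continuousOn_id.rpow_const fun x hx => Or.inl hx.1.ne')
    have hint : IntegrableOn (fun r:ℝ => c0 * r ^ (2*(-1-s)+2)) (Ioo 0 r₀) := by
      refine ⟨hcont.aestronglyMeasurable measurableSet_Ioo, ?_⟩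
      rw [hasFiniteIntegral_iff_ofReal]
      · exact hfin
      · exact (ae_restrict_iff' measurableSet_Ioo).2 (ae_of_all _ fun x hx =>
          mul_nonneg hc0.le (Real.rpow_nonneg hx.1.le _))
    have hint2 : IntegrableOn (fun r:ℝ => r ^ (2*(-1-s)+2)) (Ioo 0 r₀) := by
      have heq : (fun r:ℝ => r ^ (2*(-1-s)+2)) = (fun x => c0⁻¹ * (c0 * x ^ (2*(-1-s)+2))) := by
        funext x
        field_simp
      rw [IntegrableOn, heq]
      exact hint.const_mul c0⁻¹
    rw [intervalIntegral.integrableOn_Ioo_rpow_iff hr₀] at hint2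
    linarith
  have hfM0 : ∀ r ∈ Ioo (0:ℝ) r₀, fM r = 0 := by
    intro r hr
    rw [hfMr r hr, hCM, mul_zero]
  refine ⟨((cmC * CP) / ((Complex.I * (n:ℂ)) * (2 * (s:ℂ))), CP / (2 * (s:ℂ))), ⟨?_, ?_⟩, ?_⟩
  · rw [hlamC]
    simp only [hcmC]
    have hD : (Complex.I*(n:ℂ))*(2*(s:ℂ)) ≠ 0 :=
      mul_ne_zero hIn (by simpa using hsC)
    apply mul_right_cancel₀ hD
    field_simp
    linear_combination (4*CP) * hs2C +
      (4*CP*(n:ℂ)^2) * Complex.I_sq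
  · rw [hlamC]
    simp only [hcmC]
    have hD : (Complex.I*(n:ℂ))*(2*(s:ℂ)) ≠ 0 :=
      mul_ne_zero hIn (by simpa using hsC)
    apply mul_right_cancel₀ hD
    field_simp
    ring
  · intro r hr
    have hrpos := hr.1
    have h0 := hfM0 r hr
    have hP := hfPr r hr
    simp only [hfMdef] at h0
    simp only [hfPdef] at hP
    have h2s : (2 * (s:ℂ)) ≠ 0 := by simp [hsC]
    have hv2 : (v r).2 = (r:ℂ) ^ (lam:ℂ) * CP / (2 * (s:ℂ)) := by
      rw [eq_div_iff h2s]
      have hd : (-(Complex.I * (n:ℂ)) * (v r).1 + cpC * (v r).2)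
          - (-(Complex.I * (n:ℂ)) * (v r).1 + cmC * (v r).2) = 2 * (s:ℂ) * (v r).2 := by
        simp only [hcpC, hcmC]; ring
      rw [h0, sub_zero, hP] at hd
      linear_combination (-1 : ℂ) * hd
    have hv1 : (v r).1 = cmC * (v r).2 / (Complex.I * (n:ℂ)) := by
      rw [eq_div_iff hIn]
      linear_combination -h0
    have hofc : ((r ^ lam : ℝ) : ℂ) = (r:ℂ) ^ (lam:ℂ) := Complex.ofReal_cpow hrpos.le lam
    refine Prod.ext ?_ ?_
    · show (v r).1 = (r ^ lam : ℝ) • (cmC * CP / ((Complex.I * (n:ℂ)) * (2 * (s:ℂ))))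
      rw [Complex.real_smul, hofc, hv1, hv2]
      ring
    · show (v r).2 = (r ^ lam : ℝ) • (CP / (2 * (s:ℂ)))
      rw [Complex.real_smul, hofc, hv2]
      ring
end

section
/- Let a > 0 and k ≥ 1 be real numbers. (i) If s : (0,∞) → ℂ is differentiable with s′(r) = −((1+k)/r + a)·s(r) for all r ∈ (0,∞) and ∫₀^∞ r²|s(r)|² dr < ∞, then s is identically zero. (ii) If s : (0,∞) → ℂ is differentiable with s′(r) = ((k−1)/r + a)·s(r) for all r ∈ (0,∞) and ∫₀^∞ r²|s(r)|² dr < ∞, then s is identically zero. -/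
open MeasureTheory Set


/-- First integral of the ODE `s' = (c/r + a) s` on `(0,∞)`. -/
lemma ode_aux (a c : ℝ) (s : ℝ → ℂ)
    (hs : ∀ r ∈ Ioi (0:ℝ), HasDerivAt s (((c/r + a : ℝ) : ℂ) * s r) r) :
    ∀ r ∈ Ioi (0:ℝ),
      s r * (((r ^ (-c) * Real.exp (-(a*r))) : ℝ) : ℂ) = s 1 * ((Real.exp (-a) : ℝ) : ℂ) := by
  set φ : ℝ → ℝ := fun r => r ^ (-c) * Real.exp (-(a*r)) with hφdef
  have hφ : ∀ r ∈ Ioi (0:ℝ), HasDerivAt φ (-(c/r + a) * φ r) r := by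
    intro r hr
    have hr' : (0:ℝ) < r := hr
    have h1 : HasDerivAt (fun x : ℝ => x ^ (-c)) (-c * r ^ (-c - 1)) r :=
      Real.hasDerivAt_rpow_const (Or.inl hr'.ne')
    have h2 : HasDerivAt (fun x : ℝ => Real.exp (-(a*x))) (Real.exp (-(a*r)) * (-a)) r := by
      have hin : HasDerivAt (fun x : ℝ => -(a*x)) (-a) r := by
        simpa using ((hasDerivAt_id r).const_mul (-a))
      exact (Real.hasDerivAt_exp (-(a*r))).comp r hin
    have := h1.mul h2
    refine this.congr_deriv ?_
    have hpow : r ^ (-c - 1) = r ^ (-c) * r⁻¹ := by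
      rw [Real.rpow_sub hr', Real.rpow_one, div_eq_mul_inv]
    simp only [hφdef, hpow]
    field_simp
    ring
  set f : ℝ → ℂ := fun r => s r * ((φ r : ℝ) : ℂ) with hfdef
  have hf : ∀ r ∈ Ioi (0:ℝ), HasDerivAt f 0 r := by
    intro r hr
    have hr' : (0:ℝ) < r := hr
    have h := (hs r hr).mul ((hφ r hr).ofReal_comp)
    refine h.congr_deriv ?_
    push_cast
    ring
  have hconv : Convex ℝ (Ioi (0:ℝ)) := convex_Ioi 0
  have hdiff : DifferentiableOn ℝ f (Ioi (0:ℝ)) :=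
    fun r hr => ((hf r hr).differentiableAt).differentiableWithinAt
  have hfw : ∀ r ∈ Ioi (0:ℝ), fderivWithin ℝ f (Ioi (0:ℝ)) r = 0 := by
    intro r hr
    have h1 : fderivWithin ℝ f (Ioi (0:ℝ)) r = fderiv ℝ f r :=
      fderivWithin_of_isOpen isOpen_Ioi hr
    have h2 : deriv f r = 0 := (hf r hr).deriv
    rw [h1]
    ext x
    simp [← toSpanSingleton_deriv, h2]
  intro r hr
  have := hconv.is_const_of_fderivWithin_eq_zero hdiff hfw hr (mem_Ioi.mpr one_pos)
  simpa [hfdef, hφdef, Real.one_rpow] using this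


/-- A function on `(0,∞)` that dominates `c/r²` near `0` has infinite integral. -/
lemma notL2_low (g : ℝ → ℝ) (hgm : AEStronglyMeasurable g (volume.restrict (Ioi (0:ℝ))))
    (hg0 : ∀ r ∈ Ioi (0:ℝ), 0 ≤ g r) (c : ℝ) (hc : 0 < c)
    (hlb : ∀ r ∈ Ioo (0:ℝ) 1, c * r ^ (-2:ℝ) ≤ g r)
    (hfin : ∫⁻ r in Ioi (0:ℝ), ENNReal.ofReal (g r) < ⊤) : False := by
  have hsub : Ioo (0:ℝ) 1 ⊆ Ioi 0 := Ioo_subset_Ioi_self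
  have hfin' : ∫⁻ r in Ioo (0:ℝ) 1, ENNReal.ofReal (g r) < ⊤ :=
    lt_of_le_of_lt (lintegral_mono_set hsub) hfin
  have hgm' : AEStronglyMeasurable g (volume.restrict (Ioo (0:ℝ) 1)) :=
    hgm.mono_measure (Measure.restrict_mono hsub le_rfl)
  have hg0' : 0 ≤ᵐ[volume.restrict (Ioo (0:ℝ) 1)] g :=
    (ae_restrict_iff' measurableSet_Ioo).2 (.of_forall fun r hr => hg0 r (hsub hr))
  have hint : IntegrableOn g (Ioo (0:ℝ) 1) :=
    ⟨hgm', (hasFiniteIntegral_iff_ofReal hg0').2 hfin'⟩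
  have hint2 : IntegrableOn (fun r : ℝ => r ^ (-2:ℝ)) (Ioo (0:ℝ) 1) := by
    refine Integrable.mono (hint.const_mul c⁻¹) ?_ ?_
    · exact (Measurable.aestronglyMeasurable (by measurability))
    · refine (ae_restrict_iff' measurableSet_Ioo).2 (.of_forall fun r hr => ?_)
      have h1 : (0:ℝ) ≤ r ^ (-2:ℝ) := Real.rpow_nonneg (le_of_lt hr.1) _
      have h2 := hlb r hr
      have h3 : 0 ≤ g r := hg0 r (hsub hr)
      rw [Real.norm_of_nonneg h1, Real.norm_of_nonneg (by positivity)]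
      rw [mul_comm c] at h2
      calc r ^ (-2:ℝ) = c⁻¹ * (r ^ (-2:ℝ) * c) := by field_simp
        _ ≤ c⁻¹ * g r := by gcongr
  rw [intervalIntegral.integrableOn_Ioo_rpow_iff one_pos] at hint2
  linarith

/-- A function on `(0,∞)` bounded below by `c > 0` on `(1,∞)` has infinite integral. -/
lemma notL2_high (g : ℝ → ℝ) (c : ℝ) (hc : 0 < c)
    (hlb : ∀ r ∈ Ioi (1:ℝ), c ≤ g r)
    (hfin : ∫⁻ r in Ioi (0:ℝ), ENNReal.ofReal (g r) < ⊤) : False := by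
  have hsub : Ioi (1:ℝ) ⊆ Ioi 0 := Ioi_subset_Ioi zero_le_one
  have hfin' : ∫⁻ r in Ioi (1:ℝ), ENNReal.ofReal (g r) < ⊤ :=
    lt_of_le_of_lt (lintegral_mono_set hsub) hfin
  have hge : ∫⁻ r in Ioi (1:ℝ), ENNReal.ofReal c ≤ ∫⁻ r in Ioi (1:ℝ), ENNReal.ofReal (g r) := by
    refine lintegral_mono_ae ((ae_restrict_iff' measurableSet_Ioi).2
      (.of_forall fun r hr => ENNReal.ofReal_le_ofReal (hlb r hr)))
  rw [setLIntegral_const, Real.volume_Ioi, ENNReal.mul_top (by simpa using hc)] at hge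
  exact absurd (lt_of_le_of_lt hge hfin') (by simp)

/-- Kernel equations of the Dirac operator of the flat Dirac monopole of weight
`k ≥ 1` with constant imaginary mass `a > 0` in the harmonic sector: any
differentiable `s : (0,∞) → ℂ` with `s'(r) = -((1+k)/r + a) s(r)` (resp.
`s'(r) = ((k-1)/r + a) s(r)`) that is `L²` for `r² dr` vanishes identically. -/
theorem stmt_11 (a k : ℝ) (ha : 0 < a) (hk : 1 ≤ k) :
    (∀ s : ℝ → ℂ,
      (∀ r ∈ Ioi (0:ℝ), HasDerivAt s (-((((1 + k)/r + a : ℝ) : ℂ)) * s r) r) →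
      (∫⁻ r in Ioi (0:ℝ), ENNReal.ofReal (r^2 * ‖s r‖^2) < ⊤) →
      ∀ r ∈ Ioi (0:ℝ), s r = 0) ∧
    (∀ s : ℝ → ℂ,
      (∀ r ∈ Ioi (0:ℝ), HasDerivAt s (((((k - 1)/r + a : ℝ) : ℂ)) * s r) r) →
      (∫⁻ r in Ioi (0:ℝ), ENNReal.ofReal (r^2 * ‖s r‖^2) < ⊤) →
      ∀ r ∈ Ioi (0:ℝ), s r = 0) := by
  constructor
  · -- part (i)
    intro s hs hfin
    have hs' : ∀ r ∈ Ioi (0:ℝ),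
        HasDerivAt s ((((-(1+k))/r + (-a) : ℝ) : ℂ) * s r) r := by
      intro r hr
      convert hs r hr using 2
      push_cast
      ring
    have key := ode_aux (-a) (-(1+k)) s hs'
    -- key : ∀ r > 0, s r * (r ^ (1+k) * exp (a r)) = s 1 * exp a  (after simp)
    have key' : ∀ r ∈ Ioi (0:ℝ),
        s r * (((r ^ (1+k) * Real.exp (a*r)) : ℝ) : ℂ)
          = s 1 * ((Real.exp a : ℝ) : ℂ) := by
      intro r hr
      have := key r hr
      simpa [neg_neg, neg_mul] using this
    -- norms
    have keyn : ∀ r ∈ Ioi (0:ℝ),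
        ‖s r‖ * (r ^ (1+k) * Real.exp (a*r)) = ‖s 1‖ * Real.exp a := by
      intro r hr
      have hr' : (0:ℝ) < r := hr
      have := congrArg norm (key' r hr)
      rwa [norm_mul, norm_mul, Complex.norm_real, Complex.norm_real,
        Real.norm_of_nonneg (by positivity), Real.norm_of_nonneg (by positivity)] at this
    have hs1 : s 1 = 0 := by
      by_contra h1
      set D : ℝ := ‖s 1‖ * Real.exp a with hD
      have hD0 : 0 < D := by
        have : 0 < ‖s 1‖ := norm_pos_iff.mpr h1
        positivity
      refine notL2_low (fun r => r^2 * ‖s r‖^2) ?_ (fun r _ => by positivity)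
        (D^2 * (Real.exp a * Real.exp a)⁻¹) (by positivity) ?_ hfin
      · have hcont : ContinuousOn s (Ioi (0:ℝ)) := fun r hr =>
          ((hs r hr).differentiableAt.continuousAt).continuousWithinAt
        exact (((continuous_pow 2).continuousOn).mul ((hcont.norm).pow 2)).aestronglyMeasurable
          measurableSet_Ioi
      · intro r hr
        obtain ⟨hr0, hr1⟩ := hr
        set p : ℝ := r ^ (1+k) with hp
        set q : ℝ := Real.exp (a*r) with hq
        have hp0 : 0 < p := Real.rpow_pos_of_pos hr0 _
        have hq0 : 0 < q := Real.exp_pos _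
        have hE : ‖s r‖ * (p * q) = D := keyn r (mem_Ioi.mpr hr0)
        have hpr : p ≤ r^2 := by
          have h2 : r ^ ((2:ℕ):ℝ) = r^2 := Real.rpow_natCast r 2
          have := Real.rpow_le_rpow_of_exponent_ge hr0 hr1.le
            (by push_cast; linarith : ((2:ℕ):ℝ) ≤ 1 + k)
          rw [h2] at this
          exact this
        have hqe : q ≤ Real.exp a := Real.exp_le_exp.mpr (by nlinarith)
        have hu : ‖s r‖ = D / (p * q) := by
          field_simp at hE ⊢
          linarith [hE]
        have hrpow : r ^ (-2:ℝ) = (r^2)⁻¹ := by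
          rw [show ((-2:ℝ)) = -((2:ℕ):ℝ) by norm_num, Real.rpow_neg hr0.le,
            Real.rpow_natCast]
        show D^2 * (Real.exp a * Real.exp a)⁻¹ * r ^ (-2:ℝ) ≤ r^2 * ‖s r‖^2
        rw [hrpow, hu]
        rw [show r ^ 2 * (D / (p * q)) ^ 2 = (r^2 * D^2)/((p*q)^2) by ring,
          show D ^ 2 * (Real.exp a * Real.exp a)⁻¹ * (r ^ 2)⁻¹
            = (D^2 * (Real.exp a * Real.exp a)⁻¹) / (r^2) by ring,
          div_le_div_iff₀ (by positivity) (by positivity)]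
        calc D^2 * (Real.exp a * Real.exp a)⁻¹ * (p*q)^2
            ≤ D^2 * (Real.exp a * Real.exp a)⁻¹ * (r^2 * Real.exp a)^2 := by
              gcongr
          _ = r^2 * D^2 * r^2 := by
              have := (Real.exp_pos a).ne'
              field_simp
    intro r hr
    have := key' r hr
    rw [hs1, zero_mul] at this
    have hX : (((r ^ (1+k) * Real.exp (a*r)) : ℝ) : ℂ) ≠ 0 := by
      have hr' : (0:ℝ) < r := hr
      have : (0:ℝ) < r ^ (1+k) * Real.exp (a*r) := by positivity
      exact_mod_cast this.ne'
    exact (mul_eq_zero.mp this).resolve_right hX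
  · -- part (ii)
    intro s hs hfin
    have hs' : ∀ r ∈ Ioi (0:ℝ),
        HasDerivAt s ((((k-1)/r + a : ℝ) : ℂ) * s r) r := hs
    have key := ode_aux a (k-1) s hs'
    have keyn : ∀ r ∈ Ioi (0:ℝ),
        ‖s r‖ * (r ^ (-(k-1)) * Real.exp (-(a*r))) = ‖s 1‖ * Real.exp (-a) := by
      intro r hr
      have hr' : (0:ℝ) < r := hr
      have := congrArg norm (key r hr)
      rwa [norm_mul, norm_mul, Complex.norm_real, Complex.norm_real,
        Real.norm_of_nonneg (by positivity), Real.norm_of_nonneg (by positivity)] at this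
    have hs1 : s 1 = 0 := by
      by_contra h1
      set D : ℝ := ‖s 1‖ * Real.exp (-a) with hD
      have hD0 : 0 < D := by
        have : 0 < ‖s 1‖ := norm_pos_iff.mpr h1
        positivity
      refine notL2_high (fun r => r^2 * ‖s r‖^2) (D^2) (by positivity) ?_ hfin
      intro r hr
      have hr1 : (1:ℝ) < r := hr
      have hr0 : (0:ℝ) < r := lt_trans one_pos hr1
      set p : ℝ := r ^ (-(k-1)) with hp
      set q : ℝ := Real.exp (-(a*r)) with hq
      have hp0 : 0 < p := Real.rpow_pos_of_pos hr0 _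
      have hq0 : 0 < q := Real.exp_pos _
      have hE : ‖s r‖ * (p * q) = D := keyn r (mem_Ioi.mpr hr0)
      have hp1 : p ≤ 1 := Real.rpow_le_one_of_one_le_of_nonpos hr1.le (by linarith)
      have hq1 : q ≤ 1 := Real.exp_le_one_iff.mpr (by nlinarith)
      have hpq1 : p * q ≤ 1 := by nlinarith
      have huD : D ≤ ‖s r‖ := by
        rw [← hE]
        exact mul_le_of_le_one_right (norm_nonneg _) hpq1
      show D^2 ≤ r^2 * ‖s r‖^2
      have hu2 : D^2 ≤ ‖s r‖^2 := by nlinarith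
      have hr2 : (1:ℝ) ≤ r^2 := by nlinarith
      calc D^2 = 1 * D^2 := (one_mul _).symm
        _ ≤ r^2 * ‖s r‖^2 := mul_le_mul hr2 hu2 (by positivity) (by positivity)
    intro r hr
    have := key r hr
    rw [hs1, zero_mul] at this
    have hX : (((r ^ (-(k-1)) * Real.exp (-(a*r))) : ℝ) : ℂ) ≠ 0 := by
      have hr' : (0:ℝ) < r := hr
      have : (0:ℝ) < r ^ (-(k-1)) * Real.exp (-(a*r)) := by positivity
      exact_mod_cast this.ne'
    exact (mul_eq_zero.mp this).resolve_right hX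
end
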